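/- arXiv:2104.08242 — 10 statements merged into one kernel-verified Lean document; each statement's English description precedes it below -/
import Mathlib

section
/- For every t ≥ 0, θ_t satisfies the integral equation θ_t = μ_R/μ + ((μ − μ_R)/μ) F(t) + (β α_S/μ) Σ_{k≥1} k p_k ∫_0^t θ_s^{k−1} e^{−(β+ρ)(t−s)} ds, where the series of integrals Σ_{k≥1} k p_k ∫_0^t θ_s^{k−1} e^{−(β+ρ)(t−s)} ds converges. -/
open scoped BigOperators
open Real

noncomputable def vS (αS : ℝ) (p : ℕ → ℝ) (θ : ℝ) : ℝ := αS * ∑' k : ℕ, p k * θ ^ k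

noncomputable def hS (αS : ℝ) (p : ℕ → ℝ) (θ : ℝ) : ℝ := αS * ∑' k : ℕ, (k : ℝ) * p k * θ ^ k

noncomputable def hX (μ : ℝ) (θ : ℝ) : ℝ := μ * θ ^ 2

noncomputable def hR (μ μR β ρ : ℝ) (θ : ℝ) : ℝ := μR * θ + μ * ρ / β * (θ * (1 - θ))

noncomputable def hI (αS μ μR β ρ : ℝ) (p : ℕ → ℝ) (θ : ℝ) : ℝ :=
  hX μ θ - hS αS p θ - hR μ μR β ρ θ

noncomputable def F (β ρ t : ℝ) : ℝ := ρ / (β + ρ) + β / (β + ρ) * Real.exp (-(β + ρ) * t)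

lemma tsum_shift' (p : ℕ → ℝ) (x : ℝ) :
    ∑' k : ℕ, (k:ℝ) * p k * x ^ k = x * ∑' k : ℕ, (k:ℝ) * p k * x ^ (k-1) := by
  rw [← tsum_mul_left]
  refine tsum_congr fun k => ?_
  cases k with
  | zero => simp
  | succ n => simp only [Nat.add_sub_cancel, pow_succ]; push_cast; ring

lemma summable_shift' (p : ℕ → ℝ) (hp : ∀ k, 0 ≤ p k)
    (h : Summable fun k : ℕ => (k:ℝ) * p k) (x : ℝ) (hx0 : 0 < x) (hx1 : x ≤ 1) :
    Summable fun k : ℕ => (k:ℝ) * p k * x ^ (k-1) := by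
  refine h.of_nonneg_of_le
    (fun k => mul_nonneg (mul_nonneg (Nat.cast_nonneg k) (hp k)) (pow_nonneg hx0.le _))
    fun k => ?_
  have : x ^ (k-1) ≤ 1 := pow_le_one₀ hx0.le hx1
  nlinarith [mul_nonneg (Nat.cast_nonneg (α := ℝ) k) (hp k), pow_nonneg hx0.le (k-1)]

set_option maxHeartbeats 1000000 in
theorem stmt1
    (β ρ μ μS μI μR αS : ℝ) (p : ℕ → ℝ) (θ : ℝ → ℝ)
    (hβ : 0 < β) (hρ : 0 ≤ ρ) (hμ : 0 < μ)
    (hμS : 0 ≤ μS) (hμI : 0 ≤ μI) (hμR : 0 ≤ μR)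
    (hμsum : μS + μI + μR = μ)
    (hαS : αS ∈ Set.Ioc (0 : ℝ) 1)
    (hp : ∀ k, 0 ≤ p k)
    (hpsummable : Summable p)
    (hpsum : ∑' k : ℕ, p k = 1)
    (hmeanSummable : Summable (fun k : ℕ => (k : ℝ) * p k))
    (hmeanPos : 0 < ∑' k : ℕ, (k : ℝ) * p k)
    (hμSdef : μS = αS * ∑' k : ℕ, (k : ℝ) * p k)
    (hθ0 : θ 0 = 1)
    (hθmem : ∀ t, 0 ≤ t → θ t ∈ Set.Ioc (0 : ℝ) 1)
    (hθderiv : ∀ t, 0 ≤ t →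
      HasDerivAt θ (-β * θ t * hI αS μ μR β ρ p (θ t) / hX μ (θ t)) t)
    (t : ℝ) (ht : 0 ≤ t) :
    Summable (fun k : ℕ => (k : ℝ) * p k *
      ∫ s in (0 : ℝ)..t, θ s ^ (k - 1) * Real.exp (-(β + ρ) * (t - s))) ∧
    θ t = μR / μ + (μ - μR) / μ * F β ρ t +
      β * αS / μ * ∑' k : ℕ, (k : ℝ) * p k *
        ∫ s in (0 : ℝ)..t, θ s ^ (k - 1) * Real.exp (-(β + ρ) * (t - s)) := by
  obtain ⟨hαS0, hαS1⟩ := hαS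
  have hb0 : (0:ℝ) < β + ρ := by linarith
  set c : ℝ := β * μR / μ + ρ with hc
  set a : ℝ := β * αS / μ with ha
  set f : ℝ → ℝ := fun s => ∑' k : ℕ, (k:ℝ) * p k * θ s ^ (k-1) with hfdef
  have hθcont : ContinuousOn θ (Set.Ici 0) :=
    fun s hs => ((hθderiv s hs).continuousAt).continuousWithinAt
  have hθcontI : ContinuousOn θ (Set.Icc 0 t) := hθcont.mono (Set.Icc_subset_Ici_self)
  -- continuity of f on [0,t]
  have hfcont : ContinuousOn f (Set.Icc 0 t) := by
    refine continuousOn_tsum (u := fun k : ℕ => (k:ℝ) * p k) (fun k => ?_) hmeanSummable ?_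
    · exact continuousOn_const.mul (hθcontI.pow _)
    · intro k s hs
      have hθs := hθmem s hs.1
      have h1 : (0:ℝ) < θ s ^ (k-1) := pow_pos hθs.1 _
      have h2 : θ s ^ (k-1) ≤ 1 := pow_le_one₀ hθs.1.le hθs.2
      rw [Real.norm_eq_abs, abs_of_nonneg
        (mul_nonneg (mul_nonneg (Nat.cast_nonneg k) (hp k)) h1.le)]
      show (k:ℝ) * p k * θ s ^ (k-1) ≤ (k:ℝ) * p k
      nlinarith [mul_nonneg (mul_nonneg (Nat.cast_nonneg (α := ℝ) k) (hp k)) (sub_nonneg.2 h2)]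
  -- rewrite the ODE
  have hθd : ∀ s, 0 ≤ s → HasDerivAt θ (-(β+ρ) * θ s + c + a * f s) s := by
    intro s hs
    have h := hθderiv s hs
    have hθs := hθmem s hs
    have hne : θ s ≠ 0 := ne_of_gt hθs.1
    have key : ∑' k : ℕ, (k:ℝ) * p k * θ s ^ k = θ s * f s := tsum_shift' p (θ s)
    convert h using 1
    simp only [hI, hS, hX, hR, hc, ha]
    rw [key]
    field_simp
    ring
  -- FTC for ψ s = θ s * exp((β+ρ) s)
  have hψ : ∀ s ∈ Set.uIcc (0:ℝ) t,
      HasDerivAt (fun u => θ u * Real.exp ((β+ρ)*u))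
        (Real.exp ((β+ρ)*s) * (c + a * f s)) s := by
    intro s hs
    rw [Set.uIcc_of_le ht] at hs
    have he : HasDerivAt (fun u => Real.exp ((β+ρ)*u)) (Real.exp ((β+ρ)*s) * (β+ρ)) s := by
      simpa using ((hasDerivAt_id s).const_mul (β+ρ)).exp
    have := (hθd s hs.1).fun_mul he
    refine this.congr_deriv ?_
    ring
  have hcontInt : ContinuousOn (fun s => Real.exp ((β+ρ)*s) * (c + a * f s)) (Set.Icc 0 t) :=
    ((Real.continuous_exp.comp (continuous_const.mul continuous_id)).continuousOn).mul
      (continuousOn_const.add (continuousOn_const.mul hfcont))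
  have hInt : IntervalIntegrable (fun s => Real.exp ((β+ρ)*s) * (c + a * f s))
      MeasureTheory.volume 0 t := by
    apply ContinuousOn.intervalIntegrable
    rwa [Set.uIcc_of_le ht]
  have hFTC := intervalIntegral.integral_eq_sub_of_hasDerivAt hψ hInt
  rw [hθ0, mul_zero, Real.exp_zero, mul_one] at hFTC
  -- split the integral
  have hIntf : IntervalIntegrable (fun s => Real.exp ((β+ρ)*s) * f s)
      MeasureTheory.volume 0 t := by
    apply ContinuousOn.intervalIntegrable
    rw [Set.uIcc_of_le ht]
    exact ((Real.continuous_exp.comp (continuous_const.mul continuous_id)).continuousOn).mul hfcont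
  have hIntexp : IntervalIntegrable (fun s => Real.exp ((β+ρ)*s)) MeasureTheory.volume 0 t :=
    (Real.continuous_exp.comp (continuous_const.mul continuous_id)).intervalIntegrable 0 t
  have hexpint : ∫ s in (0:ℝ)..t, Real.exp ((β+ρ)*s) = (Real.exp ((β+ρ)*t) - 1) / (β+ρ) := by
    have : ∀ s ∈ Set.uIcc (0:ℝ) t, HasDerivAt (fun u => Real.exp ((β+ρ)*u) / (β+ρ))
        (Real.exp ((β+ρ)*s)) s := by
      intro s _
      have he : HasDerivAt (fun u => Real.exp ((β+ρ)*u)) (Real.exp ((β+ρ)*s) * (β+ρ)) s := by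
        simpa using ((hasDerivAt_id s).const_mul (β+ρ)).exp
      have := he.div_const (β+ρ)
      refine this.congr_deriv ?_
      field_simp [hb0.ne']
    rw [intervalIntegral.integral_eq_sub_of_hasDerivAt this hIntexp]
    rw [mul_zero, Real.exp_zero]
    ring
  have hsplit : ∫ s in (0:ℝ)..t, Real.exp ((β+ρ)*s) * (c + a * f s)
      = c * ((Real.exp ((β+ρ)*t) - 1) / (β+ρ)) + a * ∫ s in (0:ℝ)..t, Real.exp ((β+ρ)*s) * f s := by
    have : (fun s => Real.exp ((β+ρ)*s) * (c + a * f s))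
        = fun s => c * Real.exp ((β+ρ)*s) + a * (Real.exp ((β+ρ)*s) * f s) := by
      funext s; ring
    rw [this, intervalIntegral.integral_add (hIntexp.const_mul c) (hIntf.const_mul a),
      intervalIntegral.integral_const_mul, intervalIntegral.integral_const_mul, hexpint]
  rw [hsplit] at hFTC
  -- the sum/integral interchange
  set I : ℝ := ∫ s in (0:ℝ)..t, Real.exp ((β+ρ)*s) * f s with hI'
  have hHasSum : HasSum (fun k : ℕ => (k : ℝ) * p k *
      ∫ s in (0 : ℝ)..t, θ s ^ (k - 1) * Real.exp (-(β + ρ) * (t - s)))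
      (Real.exp (-(β+ρ)*t) * I) := by
    have hmeas : ∀ k : ℕ, MeasureTheory.IntegrableOn
        (fun s => (k:ℝ) * p k * (θ s ^ (k-1) * Real.exp (-(β+ρ)*(t-s))))
        (Set.Ioc 0 t) MeasureTheory.volume := by
      intro k
      refine (ContinuousOn.integrableOn_Icc ?_).mono_set Set.Ioc_subset_Icc_self
      exact continuousOn_const.mul ((hθcontI.pow _).mul
        ((Real.continuous_exp.comp (continuous_const.mul (continuous_const.sub continuous_id))).continuousOn))
    have hbound : ∀ k : ℕ, ∀ s ∈ Set.Ioc (0:ℝ) t,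
        ‖(k:ℝ) * p k * (θ s ^ (k-1) * Real.exp (-(β+ρ)*(t-s)))‖ ≤ (k:ℝ) * p k := by
      intro k s hs
      have hθs := hθmem s hs.1.le
      have h1 : (0:ℝ) < θ s ^ (k-1) := pow_pos hθs.1 _
      have h2 : θ s ^ (k-1) ≤ 1 := pow_le_one₀ hθs.1.le hθs.2
      have h3 : Real.exp (-(β+ρ)*(t-s)) ≤ 1 := by
        rw [Real.exp_le_one_iff]
        nlinarith [hs.2]
      have h4 : (0:ℝ) < Real.exp (-(β+ρ)*(t-s)) := Real.exp_pos _
      rw [Real.norm_eq_abs, abs_of_nonneg (mul_nonneg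
        (mul_nonneg (Nat.cast_nonneg k) (hp k)) (mul_nonneg h1.le h4.le))]
      have h5 : θ s ^ (k-1) * Real.exp (-(β+ρ)*(t-s)) ≤ 1 := by nlinarith
      nlinarith [mul_nonneg (mul_nonneg (Nat.cast_nonneg (α := ℝ) k) (hp k))
        (sub_nonneg.2 h5)]
    have hsumnorm : Summable (fun k : ℕ =>
        ∫ s in Set.Ioc (0:ℝ) t, ‖(k:ℝ) * p k * (θ s ^ (k-1) * Real.exp (-(β+ρ)*(t-s)))‖) := by
      refine (hmeanSummable.mul_right t).of_nonneg_of_le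
        (fun k => MeasureTheory.integral_nonneg fun s => norm_nonneg _) fun k => ?_
      have := MeasureTheory.norm_setIntegral_le_of_norm_le_const (C := (k:ℝ) * p k)
        (μ := MeasureTheory.volume) (s := Set.Ioc (0:ℝ) t)
        (by simp [Real.volume_Ioc])
        (f := fun s => ‖(k:ℝ) * p k * (θ s ^ (k-1) * Real.exp (-(β+ρ)*(t-s)))‖)
        (fun s hs => by rw [norm_norm]; exact hbound k s hs)
      calc ∫ s in Set.Ioc (0:ℝ) t, ‖(k:ℝ) * p k * (θ s ^ (k-1) * Real.exp (-(β+ρ)*(t-s)))‖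
          ≤ (k:ℝ) * p k * (MeasureTheory.volume (Set.Ioc (0:ℝ) t)).toReal := by
            refine le_trans (le_abs_self _) ?_
            rw [← Real.norm_eq_abs]
            exact this
        _ = (k:ℝ) * p k * t := by rw [Real.volume_Ioc, ENNReal.toReal_ofReal (by linarith)]; ring
    have hswap := MeasureTheory.hasSum_integral_of_summable_integral_norm
      (μ := MeasureTheory.volume.restrict (Set.Ioc (0:ℝ) t))
      (F := fun (k : ℕ) (s : ℝ) => (k:ℝ) * p k * (θ s ^ (k-1) * Real.exp (-(β+ρ)*(t-s))))
      hmeas hsumnorm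
    have htsum_eq : ∀ s : ℝ,
        (∑' k : ℕ, (k:ℝ) * p k * (θ s ^ (k-1) * Real.exp (-(β+ρ)*(t-s))))
          = f s * Real.exp (-(β+ρ)*(t-s)) := by
      intro s
      rw [hfdef, ← tsum_mul_right]
      exact tsum_congr fun k => by ring
    have hint_eq : (∫ s in Set.Ioc (0:ℝ) t,
        ∑' k : ℕ, (k:ℝ) * p k * (θ s ^ (k-1) * Real.exp (-(β+ρ)*(t-s))))
        = Real.exp (-(β+ρ)*t) * I := by
      simp only [htsum_eq]
      rw [hI', ← intervalIntegral.integral_of_le ht, ← intervalIntegral.integral_const_mul]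
      refine intervalIntegral.integral_congr fun s _ => ?_
      rw [show -(β+ρ)*(t-s) = -(β+ρ)*t + (β+ρ)*s by ring, Real.exp_add]
      ring
    rw [hint_eq] at hswap
    have e : ∀ k : ℕ, (k:ℝ) * p k * ∫ s in (0:ℝ)..t, θ s ^ (k-1) * Real.exp (-(β+ρ)*(t-s))
        = ∫ s in Set.Ioc (0:ℝ) t, (k:ℝ) * p k * (θ s ^ (k-1) * Real.exp (-(β+ρ)*(t-s))) := by
      intro k
      rw [intervalIntegral.integral_of_le ht, ← MeasureTheory.integral_const_mul]
    simp only [e]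
    exact hswap
  refine ⟨hHasSum.summable, ?_⟩
  rw [hHasSum.tsum_eq]
  -- final algebra
  have hexp : Real.exp ((β+ρ)*t) * Real.exp (-(β+ρ)*t) = 1 := by
    rw [← Real.exp_add, show (β+ρ)*t + -(β+ρ)*t = 0 by ring, Real.exp_zero]
  simp only [F, hc, ha]
  have hμ' : μ ≠ 0 := ne_of_gt hμ
  have hb' : β + ρ ≠ 0 := ne_of_gt hb0
  have key : θ t = (c * ((Real.exp ((β+ρ)*t) - 1) / (β+ρ)) + a * I + 1) * Real.exp (-(β+ρ)*t) := by
    have : θ t * (Real.exp ((β+ρ)*t) * Real.exp (-(β+ρ)*t))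
        = (c * ((Real.exp ((β+ρ)*t) - 1) / (β+ρ)) + a * I + 1) * Real.exp (-(β+ρ)*t) := by
      rw [← mul_assoc]
      rw [show θ t * Real.exp ((β+ρ)*t) = c * ((Real.exp ((β+ρ)*t) - 1) / (β+ρ)) + a * I + 1 by
        linarith [hFTC]]
    rwa [hexp, mul_one] at this
  rw [key, hc, ha]
  have hexp' : Real.exp ((β+ρ)*t) * Real.exp ((-ρ + -β)*t) = 1 := by
    rw [show (-ρ + -β)*t = -(β+ρ)*t by ring]; exact hexp
  have hexp'' : Real.exp ((β+ρ)*t) * Real.exp ((-ρ - β)*t) = 1 := by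
    rw [show (-ρ - β)*t = -(β+ρ)*t by ring]; exact hexp
  have hexp3 : Real.exp ((β+ρ)*t) * Real.exp (-((β+ρ)*t)) = 1 := by
    rw [show -((β+ρ)*t) = -(β+ρ)*t by ring]; exact hexp
  field_simp
  linear_combination (β * μR + μ * ρ) * hexp3
end

section
/- For every integer k ≥ 1 and every t ≥ 0, one has β ∫_0^t θ_s^{k−1} e^{−(β+ρ)(t−s)} ds = θ_t^{k−1} − F(t) + β (k−1) ∫_0^t θ_s^{k−1} (h_I(θ_s)/h_X(θ_s)) F(t−s) ds. -/
open scoped BigOperators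
open Real

lemma hS_contOn (αS : ℝ) (p : ℕ → ℝ) (hp : ∀ k, 0 ≤ p k)
    (hmeanSummable : Summable (fun k : ℕ => (k : ℝ) * p k)) :
    ContinuousOn (fun x => hS αS p x) (Set.Icc (-1 : ℝ) 1) := by
  unfold hS
  apply ContinuousOn.mul continuousOn_const
  apply continuousOn_tsum (u := fun k : ℕ => (k : ℝ) * p k)
  · intro i
    exact (continuous_const.mul (continuous_pow i)).continuousOn
  · exact hmeanSummable
  · intro n x hx
    rw [Real.norm_eq_abs, abs_mul]
    have h1 : |(n : ℝ) * p n| = (n : ℝ) * p n :=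
      abs_of_nonneg (mul_nonneg (Nat.cast_nonneg n) (hp n))
    have h2 : |x ^ n| ≤ 1 := by
      rw [abs_pow]
      exact pow_le_one₀ (abs_nonneg x) (abs_le.2 ⟨hx.1, hx.2⟩)
    nlinarith [abs_nonneg ((n:ℝ) * p n), mul_le_mul_of_nonneg_left h2 (abs_nonneg ((n:ℝ)*p n))]

lemma hI_contOn (αS μ μR β ρ : ℝ) (p : ℕ → ℝ) (hp : ∀ k, 0 ≤ p k)
    (hmeanSummable : Summable (fun k : ℕ => (k : ℝ) * p k)) :
    ContinuousOn (fun x => hI αS μ μR β ρ p x) (Set.Icc (-1 : ℝ) 1) := by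
  unfold hI hX hR
  refine ContinuousOn.sub (ContinuousOn.sub ?_ (hS_contOn αS p hp hmeanSummable)) ?_
  · exact (continuous_const.mul (continuous_pow 2)).continuousOn
  · fun_prop

theorem stmt2
    (β ρ μ μS μI μR αS : ℝ) (p : ℕ → ℝ) (θ : ℝ → ℝ)
    (hβ : 0 < β) (hρ : 0 ≤ ρ) (hμ : 0 < μ)
    (hμS : 0 ≤ μS) (hμI : 0 ≤ μI) (hμR : 0 ≤ μR)
    (hμsum : μS + μI + μR = μ)
    (hαS : αS ∈ Set.Ioc (0 : ℝ) 1)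
    (hp : ∀ k, 0 ≤ p k)
    (hpsummable : Summable p)
    (hpsum : ∑' k : ℕ, p k = 1)
    (hmeanSummable : Summable (fun k : ℕ => (k : ℝ) * p k))
    (hmeanPos : 0 < ∑' k : ℕ, (k : ℝ) * p k)
    (hμSdef : μS = αS * ∑' k : ℕ, (k : ℝ) * p k)
    (hθ0 : θ 0 = 1)
    (hθmem : ∀ t, 0 ≤ t → θ t ∈ Set.Ioc (0 : ℝ) 1)
    (hθderiv : ∀ t, 0 ≤ t →
      HasDerivAt θ (-β * θ t * hI αS μ μR β ρ p (θ t) / hX μ (θ t)) t)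
    (k : ℕ) (hk : 1 ≤ k) (t : ℝ) (ht : 0 ≤ t) :
    β * ∫ s in (0 : ℝ)..t, θ s ^ (k - 1) * Real.exp (-(β + ρ) * (t - s)) =
      θ t ^ (k - 1) - F β ρ t +
        β * ((k : ℝ) - 1) *
          ∫ s in (0 : ℝ)..t,
            θ s ^ (k - 1) * (hI αS μ μR β ρ p (θ s) / hX μ (θ s)) * F β ρ (t - s) := by
  set m := k - 1 with hm
  have hcast : ((k : ℝ) - 1) = (m : ℝ) := by
    rw [hm, Nat.cast_sub hk]; norm_num
  have hβρ : (0:ℝ) < β + ρ := by linarith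
  have hβρ' : β + ρ ≠ 0 := ne_of_gt hβρ
  -- continuity of θ on [0,t]
  have hθcont : ContinuousOn θ (Set.Icc 0 t) := fun s hs =>
    (hθderiv s hs.1).continuousAt.continuousWithinAt
  have hθmaps : Set.MapsTo θ (Set.Icc 0 t) (Set.Icc (-1:ℝ) 1) := by
    intro s hs
    have := hθmem s hs.1
    exact ⟨by linarith [this.1], this.2⟩
  -- continuity of q s = hI(θ s)/hX(θ s)
  have hq : ContinuousOn (fun s => hI αS μ μR β ρ p (θ s) / hX μ (θ s)) (Set.Icc 0 t) := by
    apply ContinuousOn.div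
    · exact (hI_contOn αS μ μR β ρ p hp hmeanSummable).comp hθcont hθmaps
    · unfold hX
      exact (continuous_const.mul (continuous_pow 2)).continuousOn.comp hθcont
        (Set.mapsTo_univ _ _)
    · intro s hs
      have h1 := (hθmem s hs.1).1
      unfold hX; positivity
  -- continuity of auxiliary pieces
  have hE : Continuous (fun s : ℝ => Real.exp (-(β + ρ) * (t - s))) := by fun_prop
  have hFc : Continuous (fun s : ℝ => F β ρ (t - s)) := by unfold F; fun_prop
  have hθm : ContinuousOn (fun s => θ s ^ m) (Set.Icc 0 t) := hθcont.pow m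
  -- derivative of g s = θ s ^ m * F β ρ (t - s)
  set A : ℝ → ℝ := fun s => θ s ^ m * (hI αS μ μR β ρ p (θ s) / hX μ (θ s)) * F β ρ (t - s)
    with hA
  set B : ℝ → ℝ := fun s => θ s ^ m * Real.exp (-(β + ρ) * (t - s)) with hB
  have hgderiv : ∀ s ∈ Set.uIcc (0:ℝ) t,
      HasDerivAt (fun s => θ s ^ m * F β ρ (t - s))
        (-(β * m) * A s + β * B s) s := by
    intro s hs
    rw [Set.uIcc_of_le ht] at hs
    have hθs := hθderiv s hs.1
    have hθpos := (hθmem s hs.1).1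
    have d1 : HasDerivAt (fun s => θ s ^ m)
        ((m : ℝ) * θ s ^ (m - 1) * (-β * θ s * hI αS μ μR β ρ p (θ s) / hX μ (θ s))) s :=
      hθs.pow m
    have d2 : HasDerivAt (fun s => F β ρ (t - s)) (β * Real.exp (-(β + ρ) * (t - s))) s := by
      have e1 : HasDerivAt (fun s : ℝ => -(β + ρ) * (t - s)) (β + ρ) s := by
        have h := ((hasDerivAt_const s t).sub (hasDerivAt_id s)).const_mul (-(β + ρ))
        simpa using h
      have e2 : HasDerivAt (fun s : ℝ => Real.exp (-(β + ρ) * (t - s)))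
          (Real.exp (-(β + ρ) * (t - s)) * (β + ρ)) s := e1.exp
      have e3 := (e2.const_mul (β / (β + ρ))).const_add (ρ / (β + ρ))
      have : β / (β + ρ) * (Real.exp (-(β + ρ) * (t - s)) * (β + ρ))
          = β * Real.exp (-(β + ρ) * (t - s)) := by
        field_simp
      rw [this] at e3
      exact e3
    have := d1.mul d2
    refine this.congr_deriv ?_
    have key : (m : ℝ) * θ s ^ (m - 1) * (-β * θ s * hI αS μ μR β ρ p (θ s) / hX μ (θ s))
        = -(β * m) * (θ s ^ m * (hI αS μ μR β ρ p (θ s) / hX μ (θ s))) := by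
      rcases Nat.eq_zero_or_pos m with h0 | h1
      · simp [h0]
      · have hpow : θ s ^ (m - 1) * θ s = θ s ^ m := by
          rw [← pow_succ, Nat.sub_add_cancel h1]
        rw [mul_div_assoc, ← hpow]
        ring
    simp only [hA, hB]
    rw [key]
    ring
  -- integrability
  have hintA : IntervalIntegrable A MeasureTheory.volume 0 t := by
    apply ContinuousOn.intervalIntegrable
    rw [Set.uIcc_of_le ht]
    exact (hθm.mul hq).mul hFc.continuousOn
  have hintB : IntervalIntegrable B MeasureTheory.volume 0 t := by
    apply ContinuousOn.intervalIntegrable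
    rw [Set.uIcc_of_le ht]
    exact hθm.mul hE.continuousOn
  have hintD : IntervalIntegrable (fun s => -(β * m) * A s + β * B s)
      MeasureTheory.volume 0 t := (hintA.const_mul _).add (hintB.const_mul _)
  have hFTC := intervalIntegral.integral_eq_sub_of_hasDerivAt hgderiv hintD
  have hsplit : ∫ s in (0:ℝ)..t, (-(β * m) * A s + β * B s)
      = (-(β * m) * ∫ s in (0:ℝ)..t, A s) + β * ∫ s in (0:ℝ)..t, B s := by
    rw [intervalIntegral.integral_add (hintA.const_mul _) (hintB.const_mul _),
      intervalIntegral.integral_const_mul, intervalIntegral.integral_const_mul]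
  have hF0 : F β ρ (t - t) = 1 := by
    simp only [F, sub_self, mul_zero, Real.exp_zero, mul_one]
    field_simp
    ring
  have hg0 : θ 0 ^ m * F β ρ (t - 0) = F β ρ t := by
    rw [hθ0, one_pow, one_mul, sub_zero]
  rw [hsplit] at hFTC
  rw [hF0, hg0, mul_one] at hFTC
  rw [hcast]
  have hL : ∫ s in (0:ℝ)..t, θ s ^ (k-1) * Real.exp (-(β + ρ) * (t - s))
      = ∫ s in (0:ℝ)..t, B s := rfl
  have hR' : ∫ s in (0:ℝ)..t, θ s ^ (k-1) * (hI αS μ μR β ρ p (θ s) / hX μ (θ s)) * F β ρ (t - s)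
      = ∫ s in (0:ℝ)..t, A s := rfl
  rw [hL, hR']
  linear_combination hFTC
end

section
/- Assume additionally that h_I(θ_s) ≥ 0 for all s ≥ 0. Then for every t ≥ 0 the family (k(k−1) p_k ∫_0^t θ_s^{k−1} (h_I(θ_s)/h_X(θ_s)) F(t−s) ds)_{k≥2} is summable and θ_t = μ_R/μ + (μ_I/μ) F(t) + (α_S/μ) Σ_{k≥1} k p_k θ_t^{k−1} + (β α_S/μ) Σ_{k≥2} k(k−1) p_k ∫_0^t θ_s^{k−1} (h_I(θ_s)/h_X(θ_s)) F(t−s) ds. -/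
open scoped BigOperators
open Real

noncomputable def Hc (p : ℕ → ℝ) (x : ℝ) : ℝ :=
  ∑' k : ℕ, (k : ℝ) * p k * (max (min x 1) 0) ^ k

lemma Hc_continuous {p : ℕ → ℝ} (hp : ∀ k, 0 ≤ p k)
    (hs : Summable fun k : ℕ => (k : ℝ) * p k) : Continuous (Hc p) := by
  apply continuous_tsum (u := fun k : ℕ => (k : ℝ) * p k)
  · intro k; fun_prop
  · exact hs
  · intro k x
    have h0 : (0:ℝ) ≤ max (min x 1) 0 := le_max_right _ _
    have h1 : max (min x 1) 0 ≤ 1 := max_le (min_le_right _ _) zero_le_one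
    have hk : (0:ℝ) ≤ (k:ℝ) := Nat.cast_nonneg k
    have hpk := hp k
    rw [Real.norm_eq_abs, abs_of_nonneg (by positivity)]
    have := pow_le_one₀ h0 h1 (n := k)
    have h2 := mul_le_mul_of_nonneg_left this (mul_nonneg hk hpk)
    simpa [mul_assoc] using h2

lemma Hc_eq {p : ℕ → ℝ} {x : ℝ} (h0 : 0 ≤ x) (h1 : x ≤ 1) :
    Hc p x = ∑' k : ℕ, (k : ℝ) * p k * x ^ k := by
  unfold Hc; rw [min_eq_left h1, max_eq_left h0]

lemma Hc_eq_div {p : ℕ → ℝ} {x : ℝ} (h0 : 0 < x) (h1 : x ≤ 1) :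
    (∑' k : ℕ, (k : ℝ) * p k * x ^ (k - 1)) * x = Hc p x := by
  rw [Hc_eq h0.le h1, ← tsum_mul_right]
  congr 1; funext k
  cases k with
  | zero => simp
  | succ n => simp [pow_succ]; ring

lemma prim_hasDerivAt {f : ℝ → ℝ} (hf : Continuous f) (x : ℝ) :
    HasDerivAt (fun u => ∫ s in (0:ℝ)..u, f s) (f x) x :=
  intervalIntegral.integral_hasDerivAt_right (hf.intervalIntegrable _ _)
    (hf.stronglyMeasurableAtFilter _ _) hf.continuousAt
set_option maxHeartbeats 2000000 in
theorem stmt3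
    (β ρ μ μS μI μR αS : ℝ) (p : ℕ → ℝ) (θ : ℝ → ℝ)
    (hβ : 0 < β) (hρ : 0 ≤ ρ) (hμ : 0 < μ)
    (hμS : 0 ≤ μS) (hμI : 0 ≤ μI) (hμR : 0 ≤ μR)
    (hμsum : μS + μI + μR = μ)
    (hαS : αS ∈ Set.Ioc (0 : ℝ) 1)
    (hp : ∀ k, 0 ≤ p k)
    (hpsummable : Summable p)
    (hpsum : ∑' k : ℕ, p k = 1)
    (hmeanSummable : Summable (fun k : ℕ => (k : ℝ) * p k))
    (hmeanPos : 0 < ∑' k : ℕ, (k : ℝ) * p k)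
    (hμSdef : μS = αS * ∑' k : ℕ, (k : ℝ) * p k)
    (hθ0 : θ 0 = 1)
    (hθmem : ∀ t, 0 ≤ t → θ t ∈ Set.Ioc (0 : ℝ) 1)
    (hθderiv : ∀ t, 0 ≤ t →
      HasDerivAt θ (-β * θ t * hI αS μ μR β ρ p (θ t) / hX μ (θ t)) t)
    (hIpos : ∀ s, 0 ≤ s → 0 ≤ hI αS μ μR β ρ p (θ s))
    (t : ℝ) (ht : 0 ≤ t) :
    Summable (fun k : ℕ => (k : ℝ) * ((k : ℝ) - 1) * p k *
      ∫ s in (0 : ℝ)..t,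
        θ s ^ (k - 1) * (hI αS μ μR β ρ p (θ s) / hX μ (θ s)) * F β ρ (t - s)) ∧
    θ t = μR / μ + μI / μ * F β ρ t +
      αS / μ * (∑' k : ℕ, (k : ℝ) * p k * θ t ^ (k - 1)) +
      β * αS / μ *
        ∑' k : ℕ, (k : ℝ) * ((k : ℝ) - 1) * p k *
          ∫ s in (0 : ℝ)..t,
            θ s ^ (k - 1) * (hI αS μ μR β ρ p (θ s) / hX μ (θ s)) * F β ρ (t - s) := by
  obtain ⟨hαS0, hαS1⟩ := hαS
  set c : ℝ := β + ρ with hcdef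
  have hc : 0 < c := by positivity
  -- the continuous extension of θ
  set θc : ℝ → ℝ := fun s => θ (max s 0) with hθcdef
  have θc_cont : Continuous θc := by
    rw [continuous_iff_continuousAt]
    intro s
    exact ContinuousAt.comp (g := θ) (f := fun x : ℝ => x ⊔ 0)
      ((hθderiv _ (le_max_right s 0)).continuousAt)
      ((continuous_id.max continuous_const).continuousAt)
  have θc_mem : ∀ s, θc s ∈ Set.Ioc (0:ℝ) 1 := fun s => hθmem _ (le_max_right _ _)
  have θc_pos : ∀ s, 0 < θc s := fun s => (θc_mem s).1
  have θc_le : ∀ s, θc s ≤ 1 := fun s => (θc_mem s).2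
  have θc_eq : ∀ s, 0 ≤ s → θc s = θ s := fun s hs => by
    simp only [hθcdef, max_eq_left hs]
  have θt_pos : 0 < θ t := (hθmem t ht).1
  have θt_le : θ t ≤ 1 := (hθmem t ht).2
  -- continuous versions of hI and q = hI/hX
  set hIc : ℝ → ℝ := fun s =>
    μ * θc s ^ 2 - αS * Hc p (θc s) -
      (μR * θc s + μ * ρ / β * (θc s * (1 - θc s))) with hIcdef
  have hIc_eq : ∀ s, hIc s = hI αS μ μR β ρ p (θc s) := by
    intro s
    simp only [hIcdef, hI, hS, hX, hR, Hc_eq (θc_pos s).le (θc_le s)]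
  have hIc_cont : Continuous hIc := by
    have h1 : Continuous fun s => Hc p (θc s) :=
      (Hc_continuous hp hmeanSummable).comp θc_cont
    fun_prop
  set qc : ℝ → ℝ := fun s => hIc s / (μ * θc s ^ 2) with hqcdef
  have qc_cont : Continuous qc := by
    apply hIc_cont.div (by fun_prop)
    intro s
    have := θc_pos s
    positivity
  have qc_nonneg : ∀ s, 0 ≤ qc s := by
    intro s
    apply div_nonneg _ (by have := θc_pos s; positivity)
    rw [hIc_eq]
    exact hIpos _ (le_max_right _ _)
  have qc_eq : ∀ s, 0 ≤ s →
      hI αS μ μR β ρ p (θ s) / hX μ (θ s) = qc s := by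
    intro s hs
    simp only [hqcdef, hIc_eq, θc_eq s hs, hX]
  -- derivative of θ and θc
  have θderiv' : ∀ x, 0 ≤ x → HasDerivAt θ (-(β * θ x * qc x)) x := by
    intro x hx
    convert hθderiv x hx using 1
    simp only [hqcdef, hIc_eq, θc_eq x hx, hX]
    ring
  have θcderiv : ∀ x, 0 ≤ x →
      HasDerivWithinAt θc (-(β * θ x * qc x)) (Set.Ici x) x := by
    intro x hx
    refine ((θderiv' x hx).hasDerivWithinAt).congr ?_ (θc_eq x hx)
    intro y hy
    exact θc_eq y (le_trans hx hy)
  -- the kernel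
  set K : ℝ → ℝ := fun s => Real.exp (c * s - c * t) with hKdef
  have K_cont : Continuous K := by fun_prop
  have K_deriv : ∀ x, HasDerivAt K (c * K x) x := by
    intro x
    have h := (((hasDerivAt_id x).const_mul c).sub_const (c * t)).exp
    simpa [hKdef, mul_comm] using h
  have K_pos : ∀ s, 0 < K s := fun s => Real.exp_pos _
  have K_le_one : ∀ s, s ≤ t → K s ≤ 1 := by
    intro s hs
    rw [hKdef]
    apply Real.exp_le_one_iff.mpr
    nlinarith
  have Fk : ∀ s : ℝ, F β ρ (t - s) = ρ / c + β / c * K s := by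
    intro s
    simp only [F, hKdef, hcdef]
    congr 2
    ring
  have Kt : K t = 1 := by simp [hKdef]
  -- the sum function W s = (∑ k p_k θc s ^ (k-1))
  set W : ℝ → ℝ := fun s => Hc p (θc s) / θc s with hWdef
  have W_cont : Continuous W := by
    apply ((Hc_continuous hp hmeanSummable).comp θc_cont).div θc_cont
    exact fun s => (θc_pos s).ne'
  -- Step A : the ODE identity
  have starA : μ * θ t = μR + (μ - μR) * F β ρ t +
      β * αS * ∫ s in (0:ℝ)..t, W s * K s := by
    set c₁ : ℝ := (μR * β + μ * ρ) / c with hc1def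
    set g : ℝ → ℝ := fun x =>
      μ * θc x * K x - c₁ * K x - β * αS * ∫ s in (0:ℝ)..x, W s * K s with hgdef
    have prim : ∀ x : ℝ,
        HasDerivAt (fun u => ∫ s in (0:ℝ)..u, W s * K s) (W x * K x) x :=
      prim_hasDerivAt (W_cont.mul K_cont)
    have prim_cont : Continuous (fun u => ∫ s in (0:ℝ)..u, W s * K s) :=
      continuous_iff_continuousAt.mpr fun x => (prim x).continuousAt
    have gderiv : ∀ x ∈ Set.Ico 0 t, HasDerivWithinAt g 0 (Set.Ici x) x := by
      intro x hx
      have h1 : HasDerivWithinAt (fun x => μ * θc x * K x)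
          ((μ * -(β * θ x * qc x)) * K x + (μ * θc x) * (c * K x)) (Set.Ici x) x := by
        exact (((θcderiv x hx.1).const_mul μ).mul ((K_deriv x).hasDerivWithinAt))
      have h2 := ((K_deriv x).hasDerivWithinAt.const_mul c₁ :
        HasDerivWithinAt (fun x => c₁ * K x) (c₁ * (c * K x)) (Set.Ici x) x)
      have h3 := ((prim x).hasDerivWithinAt.const_mul (β * αS) :
        HasDerivWithinAt (fun x => β * αS * ∫ s in (0:ℝ)..x, W s * K s)
          (β * αS * (W x * K x)) (Set.Ici x) x)
      have h4 := (h1.sub h2).sub h3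
      refine h4.congr_deriv ?_
      have hθx := θc_eq x hx.1
      rw [← hθx]
      have h5 : θc x ≠ 0 := (θc_pos x).ne'
      have h6 : β + ρ ≠ 0 := by positivity
      simp only [hqcdef, hIcdef, hWdef, hc1def, hcdef]
      field_simp
      ring
    have gcont : ContinuousOn g (Set.Icc 0 t) := by
      apply Continuous.continuousOn
      fun_prop
    have hconst := constant_of_has_deriv_right_zero gcont gderiv t
      ⟨ht, le_refl t⟩
    simp only [hgdef, intervalIntegral.integral_same, Kt, θc_eq t ht] at hconst
    have hθc0 : θc 0 = 1 := by rw [θc_eq 0 le_rfl, hθ0]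
    rw [hθc0] at hconst
    have hK0 : K 0 = Real.exp (-(β + ρ) * t) := by
      simp only [hKdef]
      congr 1
      rw [hcdef]
      ring
    set E := Real.exp (-(β + ρ) * t) with hEdef
    have h6 : β + ρ ≠ 0 := by positivity
    have hkey : μR + (μ - μR) * (ρ / c + β / c * E) = c₁ + (μ - c₁) * E := by
      rw [hc1def, hcdef]
      field_simp
      ring
    rw [hK0] at hconst
    have hF : F β ρ t = ρ / c + β / c * E := by
      simp only [F, hcdef, hEdef]
    rw [hF]
    linear_combination hconst - hkey
  -- Step B : integration by parts, for each power m
  have Fc : Continuous fun s => F β ρ (t - s) := by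
    simp only [F]
    fun_prop
  have stepB : ∀ m : ℕ,
      β * m * (∫ s in (0:ℝ)..t, θc s ^ m * qc s * F β ρ (t - s)) =
        F β ρ t - θ t ^ m + β * ∫ s in (0:ℝ)..t, θc s ^ m * K s := by
    intro m
    have cont1 : Continuous fun s => θc s ^ m * qc s * F β ρ (t - s) := by fun_prop
    have cont2 : Continuous fun s => θc s ^ m * K s := by fun_prop
    have prim1 := prim_hasDerivAt cont1
    have prim2 := prim_hasDerivAt cont2
    set Φ : ℝ → ℝ := fun x =>
      β * m * (∫ s in (0:ℝ)..x, θc s ^ m * qc s * F β ρ (t - s))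
        + ρ / c * θc x ^ m + β / c * (θc x ^ m * K x)
        - β * ∫ s in (0:ℝ)..x, θc s ^ m * K s with hΦdef
    have Φderiv : ∀ x ∈ Set.Ico 0 t, HasDerivWithinAt Φ 0 (Set.Ici x) x := by
      intro x hx
      have hpow : HasDerivWithinAt (fun x => θc x ^ m)
          ((m : ℝ) * θc x ^ (m - 1) * -(β * θ x * qc x)) (Set.Ici x) x :=
        (θcderiv x hx.1).pow m
      have hpw : (m : ℝ) * θc x ^ (m - 1) * -(β * θ x * qc x)
          = -(β * m * (θc x ^ m * qc x)) := by
        have hθx := θc_eq x hx.1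
        cases m with
        | zero => simp
        | succ n =>
          rw [← hθx]
          simp only [Nat.succ_sub_one]
          push_cast
          ring
      rw [hpw] at hpow
      have h1 := ((prim1 x).hasDerivWithinAt (s := Set.Ici x)).const_mul (β * (m : ℝ))
      have h2 := hpow.const_mul (ρ / c)
      have h3 := (hpow.mul ((K_deriv x).hasDerivWithinAt)).const_mul (β / c)
      have h4 := ((prim2 x).hasDerivWithinAt (s := Set.Ici x)).const_mul β
      have h5 := ((h1.add h2).add h3).sub h4
      refine h5.congr_deriv ?_
      rw [Fk x]
      have hcne : c ≠ 0 := hc.ne'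
      field_simp
      ring
    have Φcont : ContinuousOn Φ (Set.Icc 0 t) := by
      apply Continuous.continuousOn
      have pc1 : Continuous fun u => ∫ s in (0:ℝ)..u, θc s ^ m * qc s * F β ρ (t - s) :=
        continuous_iff_continuousAt.mpr fun x => (prim1 x).continuousAt
      have pc2 : Continuous fun u => ∫ s in (0:ℝ)..u, θc s ^ m * K s :=
        continuous_iff_continuousAt.mpr fun x => (prim2 x).continuousAt
      fun_prop
    have hconst := constant_of_has_deriv_right_zero Φcont Φderiv t ⟨ht, le_refl t⟩
    have hθc0 : θc 0 = 1 := by rw [θc_eq 0 le_rfl, hθ0]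
    simp only [hΦdef, intervalIntegral.integral_same, Kt, θc_eq t ht, hθc0] at hconst
    have hF0 : F β ρ t = ρ / c + β / c * K 0 := by
      simpa using Fk 0
    rw [hF0]
    have hcne : c ≠ 0 := hc.ne'
    have h7 : ρ / c * θ t ^ m + β / c * θ t ^ m = θ t ^ m := by
      rw [hcdef]
      field_simp
      ring
    linear_combination hconst - h7
  -- rewriting goal integrals
  have intEq : ∀ k : ℕ,
      (∫ s in (0:ℝ)..t,
        θ s ^ (k - 1) * (hI αS μ μR β ρ p (θ s) / hX μ (θ s)) * F β ρ (t - s)) =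
      ∫ s in (0:ℝ)..t, θc s ^ (k - 1) * qc s * F β ρ (t - s) := by
    intro k
    apply intervalIntegral.integral_congr
    intro s hs
    rw [Set.uIcc_of_le ht] at hs
    dsimp only
    rw [θc_eq s hs.1, qc_eq s hs.1]
  set L : ℝ := ∑' k : ℕ, (k : ℝ) * p k with hLdef
  have int_nonneg : ∀ m : ℕ, 0 ≤ ∫ s in (0:ℝ)..t, θc s ^ m * K s := by
    intro m
    apply intervalIntegral.integral_nonneg ht
    intro s _
    exact mul_nonneg (pow_nonneg (θc_pos s).le m) (K_pos s).le
  have int_le : ∀ m : ℕ, (∫ s in (0:ℝ)..t, θc s ^ m * K s) ≤ t := by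
    intro m
    have h1 : (∫ s in (0:ℝ)..t, θc s ^ m * K s) ≤ ∫ _ in (0:ℝ)..t, (1:ℝ) := by
      apply intervalIntegral.integral_mono_on ht
      · exact ((θc_cont.pow m).mul K_cont).intervalIntegrable _ _
      · exact intervalIntegrable_const
      · intro s hs
        have h2 : θc s ^ m ≤ 1 := pow_le_one₀ (θc_pos s).le (θc_le s)
        have h3 : K s ≤ 1 := K_le_one s hs.2
        nlinarith [pow_nonneg (θc_pos s).le m, (K_pos s).le]
    simpa using h1
  have sum1 : Summable fun k : ℕ => (k : ℝ) * p k * F β ρ t := hmeanSummable.mul_right _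
  have sum2 : Summable fun k : ℕ => (k : ℝ) * p k * θ t ^ (k - 1) := by
    apply Summable.of_nonneg_of_le _ _ hmeanSummable
    · intro k
      have := hp k
      have h0 : (0:ℝ) ≤ (k:ℝ) := Nat.cast_nonneg k
      positivity
    · intro k
      have h2 : θ t ^ (k - 1) ≤ 1 := pow_le_one₀ θt_pos.le θt_le
      have h0 : (0:ℝ) ≤ (k:ℝ) * p k := mul_nonneg (Nat.cast_nonneg k) (hp k)
      nlinarith
  have sum3 : Summable fun k : ℕ =>
      (k : ℝ) * p k * (β * ∫ s in (0:ℝ)..t, θc s ^ (k - 1) * K s) := by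
    apply Summable.of_nonneg_of_le _ _ (hmeanSummable.mul_right (β * t))
    · intro k
      exact mul_nonneg (mul_nonneg (Nat.cast_nonneg k) (hp k))
        (mul_nonneg hβ.le (int_nonneg _))
    · intro k
      have h0 : (0:ℝ) ≤ (k:ℝ) * p k := mul_nonneg (Nat.cast_nonneg k) (hp k)
      exact mul_le_mul_of_nonneg_left
        (mul_le_mul_of_nonneg_left (int_le _) hβ.le) h0
  set b : ℕ → ℝ := fun k => (k:ℝ) * p k * F β ρ t - (k:ℝ) * p k * θ t ^ (k - 1)
      + (k:ℝ) * p k * (β * ∫ s in (0:ℝ)..t, θc s ^ (k - 1) * K s) with hbdef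
  have hbsum : Summable b := (sum1.sub sum2).add sum3
  have hba : ∀ k : ℕ, β * ((k : ℝ) * ((k : ℝ) - 1) * p k *
      ∫ s in (0:ℝ)..t,
        θ s ^ (k - 1) * (hI αS μ μR β ρ p (θ s) / hX μ (θ s)) * F β ρ (t - s)) = b k := by
    intro k
    rw [intEq k]
    cases k with
    | zero => simp [hbdef]
    | succ n =>
      have hsb := stepB n
      simp only [hbdef, Nat.succ_sub_one]
      push_cast
      linear_combination ((n : ℝ) + 1) * p (n + 1) * hsb
  have hasummable : Summable (fun k : ℕ => (k : ℝ) * ((k : ℝ) - 1) * p k *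
      ∫ s in (0:ℝ)..t,
        θ s ^ (k - 1) * (hI αS μ μR β ρ p (θ s) / hX μ (θ s)) * F β ρ (t - s)) := by
    have he : (fun k : ℕ => (k : ℝ) * ((k : ℝ) - 1) * p k *
        ∫ s in (0:ℝ)..t,
          θ s ^ (k - 1) * (hI αS μ μR β ρ p (θ s) / hX μ (θ s)) * F β ρ (t - s))
        = fun k => b k / β := by
      funext k
      rw [eq_div_iff hβ.ne', mul_comm]
      exact hba k
    rw [he]
    exact hbsum.div_const β
  -- interchanging sum and integral
  have hptw : ∀ s : ℝ, (∑' k : ℕ, (k:ℝ) * p k * (θc s ^ (k - 1) * K s)) = W s * K s := by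
    intro s
    have h1 : (fun k : ℕ => (k:ℝ) * p k * (θc s ^ (k - 1) * K s))
        = fun k : ℕ => ((k:ℝ) * p k * θc s ^ (k - 1)) * K s := by
      funext k; ring
    rw [h1, tsum_mul_right]
    have h2 : (∑' k : ℕ, (k:ℝ) * p k * θc s ^ (k - 1)) = W s := by
      rw [hWdef, eq_div_iff (θc_pos s).ne']
      exact Hc_eq_div (θc_pos s) (θc_le s)
    rw [h2]
  have interchange : (∑' k : ℕ, ((k:ℝ) * p k * ∫ s in (0:ℝ)..t, θc s ^ (k - 1) * K s))
      = ∫ s in (0:ℝ)..t, W s * K s := by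
    have h0 : ∀ k : ℕ, (k:ℝ) * p k * (∫ s in (0:ℝ)..t, θc s ^ (k - 1) * K s)
        = ∫ s in Set.Ioc (0:ℝ) t, (k:ℝ) * p k * (θc s ^ (k - 1) * K s) := by
      intro k
      rw [← intervalIntegral.integral_of_le ht, ← intervalIntegral.integral_const_mul]
    have hint : ∀ k : ℕ, MeasureTheory.IntegrableOn
        (fun s => (k:ℝ) * p k * (θc s ^ (k - 1) * K s)) (Set.Ioc (0:ℝ) t) := by
      intro k
      exact Continuous.integrableOn_Ioc (by fun_prop)
    have hnorm : Summable fun k : ℕ =>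
        ∫ s in Set.Ioc (0:ℝ) t, ‖(k:ℝ) * p k * (θc s ^ (k - 1) * K s)‖ := by
      apply Summable.of_nonneg_of_le _ _ (hmeanSummable.mul_right t)
      · intro k
        exact MeasureTheory.integral_nonneg fun s => norm_nonneg _
      · intro k
        have hb1 : ∀ s ∈ Set.Ioc (0:ℝ) t,
            ‖(k:ℝ) * p k * (θc s ^ (k - 1) * K s)‖ ≤ (k:ℝ) * p k := by
          intro s hs
          have h2 : θc s ^ (k - 1) ≤ 1 := pow_le_one₀ (θc_pos s).le (θc_le s)
          have h3 : K s ≤ 1 := K_le_one s hs.2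
          have h4 : (0:ℝ) ≤ (k:ℝ) * p k := mul_nonneg (Nat.cast_nonneg k) (hp k)
          have h5 : (0:ℝ) < θc s := θc_pos s
          have h6 : (0:ℝ) < K s := K_pos s
          rw [Real.norm_eq_abs, abs_of_nonneg (by positivity)]
          have h7 : θc s ^ (k - 1) * K s ≤ 1 := by
            nlinarith [mul_le_mul_of_nonneg_left h3 (pow_nonneg h5.le (k - 1))]
          nlinarith
        calc (∫ s in Set.Ioc (0:ℝ) t, ‖(k:ℝ) * p k * (θc s ^ (k - 1) * K s)‖)
            ≤ ∫ _ in Set.Ioc (0:ℝ) t, (k:ℝ) * p k := by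
              apply MeasureTheory.setIntegral_mono_on (hint k).norm
                (MeasureTheory.integrableOn_const (by
                  rw [Real.volume_Ioc]; exact ENNReal.ofReal_ne_top))
                measurableSet_Ioc hb1
          _ = (k:ℝ) * p k * t := by
              rw [MeasureTheory.setIntegral_const, Real.volume_real_Ioc_of_le ht, smul_eq_mul]
              ring
    calc (∑' k : ℕ, ((k:ℝ) * p k * ∫ s in (0:ℝ)..t, θc s ^ (k - 1) * K s))
        = ∑' k : ℕ, ∫ s in Set.Ioc (0:ℝ) t, (k:ℝ) * p k * (θc s ^ (k - 1) * K s) := by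
          exact tsum_congr h0
      _ = ∫ s in Set.Ioc (0:ℝ) t, ∑' k : ℕ, (k:ℝ) * p k * (θc s ^ (k - 1) * K s) :=
          MeasureTheory.integral_tsum_of_summable_integral_norm hint hnorm
      _ = ∫ s in Set.Ioc (0:ℝ) t, W s * K s := by
          congr 1
          funext s
          exact hptw s
      _ = ∫ s in (0:ℝ)..t, W s * K s := (intervalIntegral.integral_of_le ht).symm
  have hbt : ∑' k, b k = L * F β ρ t - (∑' k : ℕ, (k:ℝ) * p k * θ t ^ (k - 1))
      + β * ∫ s in (0:ℝ)..t, W s * K s := by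
    rw [hbdef]
    rw [Summable.tsum_add (sum1.sub sum2) sum3, Summable.tsum_sub sum1 sum2, tsum_mul_right]
    congr 1
    calc (∑' k : ℕ, (k:ℝ) * p k * (β * ∫ s in (0:ℝ)..t, θc s ^ (k - 1) * K s))
        = ∑' k : ℕ, β * ((k:ℝ) * p k * ∫ s in (0:ℝ)..t, θc s ^ (k - 1) * K s) := by
          apply tsum_congr; intro k; ring
      _ = β * ∑' k : ℕ, ((k:ℝ) * p k * ∫ s in (0:ℝ)..t, θc s ^ (k - 1) * K s) :=
          tsum_mul_left
      _ = β * ∫ s in (0:ℝ)..t, W s * K s := by rw [interchange]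
  have hT : β * (∑' k : ℕ, (k : ℝ) * ((k : ℝ) - 1) * p k *
      ∫ s in (0:ℝ)..t,
        θ s ^ (k - 1) * (hI αS μ μR β ρ p (θ s) / hX μ (θ s)) * F β ρ (t - s))
      = L * F β ρ t - (∑' k : ℕ, (k:ℝ) * p k * θ t ^ (k - 1))
        + β * ∫ s in (0:ℝ)..t, W s * K s := by
    have h1 : (∑' k : ℕ, β * ((k : ℝ) * ((k : ℝ) - 1) * p k *
        ∫ s in (0:ℝ)..t,
          θ s ^ (k - 1) * (hI αS μ μR β ρ p (θ s) / hX μ (θ s)) * F β ρ (t - s)))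
        = ∑' k, b k := tsum_congr hba
    rw [tsum_mul_left] at h1
    rw [h1]
    exact hbt
  refine ⟨hasummable, ?_⟩
  have key : αS * L + μI + μR = μ := by
    linarith [hμSdef, hμsum]
  set T : ℝ := ∑' (k : ℕ), (k:ℝ) * ((k:ℝ) - 1) * p k *
      ∫ (s : ℝ) in (0:ℝ)..t,
        θ s ^ (k - 1) * (hI αS μ μR β ρ p (θ s) / hX μ (θ s)) * F β ρ (t - s) with hTdef
  set S1 : ℝ := ∑' (k : ℕ), (k:ℝ) * p k * θ t ^ (k - 1) with hS1def
  field_simp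
  linear_combination starA - αS * hT - F β ρ t * key
end

section
/- Assume additionally that h_I(θ_s) ≥ 0 for all s ≥ 0. Then for every t ≥ 0 the half-edge balance identity holds: μ θ_t² = μ_R θ_t + μ_I θ_t F(t) + h_S(θ_t) + β α_S θ_t Σ_{k≥2} k(k−1) p_k ∫_0^t θ_s^{k−1} (h_I(θ_s)/h_X(θ_s)) F(t−s) ds, where the series on the right converges. -/
open scoped BigOperators
open Real

open MeasureTheory in
private lemma ftc_cont {f : ℝ → ℝ} (hf : Continuous f) (x : ℝ) :
    HasDerivAt (fun y => ∫ s in (0:ℝ)..y, f s) (f x) x :=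
  intervalIntegral.integral_hasDerivAt_right (hf.intervalIntegrable _ _)
    (hf.stronglyMeasurableAtFilter _ _) hf.continuousAt

set_option maxHeartbeats 1000000 in
theorem stmt4
    (β ρ μ μS μI μR αS : ℝ) (p : ℕ → ℝ) (θ : ℝ → ℝ)
    (hβ : 0 < β) (hρ : 0 ≤ ρ) (hμ : 0 < μ)
    (hμS : 0 ≤ μS) (hμI : 0 ≤ μI) (hμR : 0 ≤ μR)
    (hμsum : μS + μI + μR = μ)
    (hαS : αS ∈ Set.Ioc (0 : ℝ) 1)
    (hp : ∀ k, 0 ≤ p k)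
    (hpsummable : Summable p)
    (hpsum : ∑' k : ℕ, p k = 1)
    (hmeanSummable : Summable (fun k : ℕ => (k : ℝ) * p k))
    (hmeanPos : 0 < ∑' k : ℕ, (k : ℝ) * p k)
    (hμSdef : μS = αS * ∑' k : ℕ, (k : ℝ) * p k)
    (hθ0 : θ 0 = 1)
    (hθmem : ∀ t, 0 ≤ t → θ t ∈ Set.Ioc (0 : ℝ) 1)
    (hθderiv : ∀ t, 0 ≤ t →
      HasDerivAt θ (-β * θ t * hI αS μ μR β ρ p (θ t) / hX μ (θ t)) t)
    (hIpos : ∀ s, 0 ≤ s → 0 ≤ hI αS μ μR β ρ p (θ s))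
    (t : ℝ) (ht : 0 ≤ t) :
    Summable (fun k : ℕ => (k : ℝ) * ((k : ℝ) - 1) * p k *
      ∫ s in (0 : ℝ)..t,
        θ s ^ (k - 1) * (hI αS μ μR β ρ p (θ s) / hX μ (θ s)) * F β ρ (t - s)) ∧
    μ * θ t ^ 2 = μR * θ t + μI * θ t * F β ρ t + hS αS p (θ t) +
      β * αS * θ t *
        ∑' k : ℕ, (k : ℝ) * ((k : ℝ) - 1) * p k *
          ∫ s in (0 : ℝ)..t,
            θ s ^ (k - 1) * (hI αS μ μR β ρ p (θ s) / hX μ (θ s)) * F β ρ (t - s) := by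
  obtain ⟨hαS0, hαS1⟩ := hαS
  set σ : ℝ := β + ρ with hσdef
  have hσ : 0 < σ := by positivity
  -- extended θ
  set θt : ℝ → ℝ := fun s => θ (max s 0) with hθtdef
  have hθtmem : ∀ s, θt s ∈ Set.Ioc (0:ℝ) 1 := fun s => hθmem _ (le_max_right _ _)
  have hθt0 : ∀ s, 0 < θt s := fun s => (hθtmem s).1
  have hθt1 : ∀ s, θt s ≤ 1 := fun s => (hθtmem s).2
  have hθteq : ∀ s, 0 ≤ s → θt s = θ s := fun s hs => by
    simp only [hθtdef, max_eq_left hs]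
  have hθtcont : Continuous θt := by
    rw [continuous_iff_continuousAt]
    intro s
    have hg : ContinuousAt (fun s : ℝ => max s 0) s := by fun_prop
    exact ContinuousAt.comp (hθderiv _ (le_max_right s 0)).continuousAt hg
  -- the series S2
  set S2 : ℝ → ℝ := fun s => ∑' k : ℕ, (k:ℝ) * p k * θt s ^ (k-1) with hS2def
  have hkpnn : ∀ k : ℕ, 0 ≤ (k:ℝ) * p k := fun k => mul_nonneg (Nat.cast_nonneg k) (hp k)
  have hbound : ∀ (n : ℕ) (x : ℝ) (m : ℕ), ‖(n:ℝ) * p n * θt x ^ m‖ ≤ (n:ℝ) * p n := by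
    intro n x m
    rw [Real.norm_eq_abs, abs_of_nonneg (mul_nonneg (hkpnn n) (pow_nonneg (hθt0 x).le m))]
    calc (n:ℝ) * p n * θt x ^ m ≤ (n:ℝ) * p n * 1 :=
          mul_le_mul_of_nonneg_left (pow_le_one₀ (hθt0 x).le (hθt1 x)) (hkpnn n)
      _ = (n:ℝ) * p n := mul_one _
  have hsum2 : ∀ s, Summable (fun k : ℕ => (k:ℝ) * p k * θt s ^ (k-1)) := fun s =>
    Summable.of_norm_bounded hmeanSummable (fun k => hbound k s (k-1))
  have hS2cont : Continuous S2 :=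
    continuous_tsum (fun k => by fun_prop) hmeanSummable (fun n x => hbound n x (n-1))
  -- hS in terms of S2
  have hS1eq : ∀ s, hS αS p (θt s) = αS * (S2 s * θt s) := by
    intro s
    rw [hS, hS2def]
    congr 1
    rw [← tsum_mul_right]
    apply tsum_congr
    intro k
    match k with
    | 0 => simp
    | (n+1) => rw [Nat.add_sub_cancel, pow_succ]; ring
  have hIeq : ∀ s, hI αS μ μR β ρ p (θt s) =
      μ * θt s^2 - αS * (S2 s * θt s) - (μR * θt s + μ*ρ/β*(θt s*(1-θt s))) := by
    intro s
    rw [hI, hX, hR, hS1eq]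
  -- u
  set u : ℝ → ℝ := fun s => hI αS μ μR β ρ p (θt s) / hX μ (θt s) with hudef
  have hXpos : ∀ s, 0 < hX μ (θt s) := fun s => by
    rw [hX]; exact mul_pos hμ (pow_pos (hθt0 s) 2)
  have hIcont : Continuous fun s => hI αS μ μR β ρ p (θt s) := by
    have : (fun s => hI αS μ μR β ρ p (θt s)) =
        fun s => μ * θt s^2 - αS * (S2 s * θt s) - (μR * θt s + μ*ρ/β*(θt s*(1-θt s))) :=
      funext hIeq
    rw [this]; fun_prop
  have hXcont : Continuous fun s => hX μ (θt s) := by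
    simp only [hX]; fun_prop
  have hucont : Continuous u := hIcont.div hXcont (fun s => (hXpos s).ne')
  -- derivative of θt
  have hθtderiv : ∀ x, 0 ≤ x → HasDerivWithinAt θt (-β * θt x * u x) (Set.Ici x) x := by
    intro x hx
    have h0 := (hθderiv x hx).hasDerivWithinAt (s := Set.Ici x)
    have h1 : HasDerivWithinAt θ (-β * θt x * u x) (Set.Ici x) x := by
      refine h0.congr_deriv (Eq.symm ?_)
      simp only [hudef]
      rw [hθteq x hx, mul_div_assoc]
    exact h1.congr (fun y hy => hθteq y (le_trans hx hy)) (hθteq x hx)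
  -- derivative of powers of θt
  have hpowd : ∀ (m : ℕ) (x : ℝ), 0 ≤ x →
      HasDerivWithinAt (fun y => θt y ^ m) (-β * m * θt x ^ m * u x) (Set.Ici x) x := by
    intro m x hx
    have h := (hθtderiv x hx).fun_pow m
    refine h.congr_deriv (Eq.symm ?_)
    match m with
    | 0 => simp
    | (n+1) => rw [Nat.add_sub_cancel]; push_cast; rw [pow_succ]; ring
  -- R
  set R : ℝ → ℝ := fun x => ∫ s in (0:ℝ)..x, (αS * S2 s) * Real.exp (σ * s) with hRdef
  have hqcont : Continuous fun s => (αS * S2 s) * Real.exp (σ*s) := by fun_prop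
  have hRderiv : ∀ x, HasDerivAt R ((αS * S2 x) * Real.exp (σ*x)) x := fun x =>
    ftc_cont hqcont x
  have hRcont : Continuous R := by
    rw [continuous_iff_continuousAt]; exact fun x => (hRderiv x).continuousAt
  have hexd : ∀ x : ℝ, HasDerivAt (fun y => Real.exp (σ*y)) (Real.exp (σ*x) * (σ*1)) x :=
    fun x => ((hasDerivAt_id x).const_mul σ).exp
  -- key1 : the main ODE identity
  have key1 : μ * θt t = μR + (μ - μR) * F β ρ t + β * Real.exp (-(σ * t)) * R t := by
    set Ψ : ℝ → ℝ := fun x => Real.exp (σ*x) * (μ * θt x - μR)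
      - (μ - μR) * (ρ/σ * Real.exp (σ*x) + β/σ) - β * R x with hΨdef
    have hΨcont : ContinuousOn Ψ (Set.Icc 0 t) := by
      apply Continuous.continuousOn; fun_prop
    have hΨ0 : Ψ 0 = 0 := by
      have : R 0 = 0 := intervalIntegral.integral_same
      simp only [hΨdef, this, mul_zero, Real.exp_zero, hθteq 0 le_rfl, hθ0]
      field_simp
      ring
    have hΨd : ∀ x ∈ Set.Ico 0 t, HasDerivWithinAt Ψ 0 (Set.Ici x) x := by
      intro x hx
      have hA : HasDerivWithinAt (fun y => Real.exp (σ*y) * (μ * θt y - μR))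
          (Real.exp (σ*x) * (σ*1) * (μ * θt x - μR)
            + Real.exp (σ*x) * (μ * (-β * θt x * u x))) (Set.Ici x) x := by
        exact (hexd x).hasDerivWithinAt.fun_mul
          (((hθtderiv x hx.1).const_mul μ).sub_const μR)
      have hB : HasDerivWithinAt (fun y => (μ - μR) * (ρ/σ * Real.exp (σ*y) + β/σ))
          ((μ - μR) * (ρ/σ * (Real.exp (σ*x) * (σ*1)))) (Set.Ici x) x := by
        exact (((hexd x).const_mul (ρ/σ)).add_const (β/σ)).const_mul (μ - μR)
          |>.hasDerivWithinAt
      have hC : HasDerivWithinAt (fun y => β * R y)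
          (β * ((αS * S2 x) * Real.exp (σ*x))) (Set.Ici x) x :=
        ((hRderiv x).const_mul β).hasDerivWithinAt
      have htot := (hA.fun_sub hB).fun_sub hC
      refine htot.congr_deriv (Eq.symm ?_)
      -- show 0 = the derivative expression
      simp only [hudef]
      rw [hIeq x, hX]
      have hT := (hθt0 x).ne'
      have hμne := hμ.ne'
      have hβne := hβ.ne'
      field_simp
      rw [hσdef]
      ring
    have hΨt : Ψ t = 0 := by
      rw [← hΨ0]
      exact constant_of_has_deriv_right_zero hΨcont hΨd t ⟨ht, le_refl t⟩
    have hFt : F β ρ t = ρ/σ + β/σ * Real.exp (-(σ*t)) := by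
      rw [F, hσdef, neg_mul]
    have hEX : Real.exp (-(σ*t)) * Real.exp (σ*t) = 1 := by
      rw [← Real.exp_add]; simp
    simp only [hΨdef] at hΨt
    rw [hFt]
    have hσne : σ ≠ 0 := hσ.ne'
    field_simp at hΨt ⊢
    linear_combination Real.exp (-(σ*t)) * hΨt + ((μ - μR) * ρ - (μ * θt t - μR) * (β + ρ)) * hEX
  -- continuity packages
  have hcontθmu : ∀ m : ℕ, Continuous fun s => θt s ^ m * u s := fun m => by fun_prop
  have hcontθmue : ∀ m : ℕ, Continuous fun s => θt s ^ m * u s * Real.exp (σ*s) :=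
    fun m => by fun_prop
  have hcontθme : ∀ m : ℕ, Continuous fun s => θt s ^ m * Real.exp (σ*s) := fun m => by fun_prop
  have keyA : ∀ m : ℕ, β * m * ∫ s in (0:ℝ)..t, θt s ^ m * u s = 1 - θt t ^ m := by
    intro m
    set Λ : ℝ → ℝ := fun x =>
      β * m * (∫ s in (0:ℝ)..x, θt s ^ m * u s) - 1 + θt x ^ m with hΛdef
    have hcontI : Continuous fun x => ∫ s in (0:ℝ)..x, θt s ^ m * u s := by
      rw [continuous_iff_continuousAt]; exact fun x => (ftc_cont (hcontθmu m) x).continuousAt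
    have hΛcont : ContinuousOn Λ (Set.Icc 0 t) := by
      apply Continuous.continuousOn; fun_prop
    have hΛ0 : Λ 0 = 0 := by
      simp [hΛdef, intervalIntegral.integral_same, hθteq 0 le_rfl, hθ0]
    have hΛd : ∀ x ∈ Set.Ico 0 t, HasDerivWithinAt Λ 0 (Set.Ici x) x := by
      intro x hx
      have h1 := ((ftc_cont (hcontθmu m) x).const_mul
        (β * (m:ℝ))).hasDerivWithinAt (s := Set.Ici x)
      have h2 := hpowd m x hx.1
      have htot := (h1.sub_const 1).fun_add h2
      refine htot.congr_deriv (Eq.symm ?_)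
      ring
    have hfin := constant_of_has_deriv_right_zero hΛcont hΛd t ⟨ht, le_refl t⟩
    rw [hΛ0] at hfin
    simp only [hΛdef] at hfin
    linarith [hfin]
  -- C
  set C : ℕ → ℝ := fun m => ∫ s in (0:ℝ)..t, θt s ^ m * Real.exp (σ*s) with hCdef
  have keyB : ∀ m : ℕ, β * m * ∫ s in (0:ℝ)..t, θt s ^ m * u s * Real.exp (σ*s)
      = 1 - θt t ^ m * Real.exp (σ*t) + σ * C m := by
    intro m
    set Λ : ℝ → ℝ := fun x =>
      β * m * (∫ s in (0:ℝ)..x, θt s ^ m * u s * Real.exp (σ*s))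
      - 1 + θt x ^ m * Real.exp (σ*x)
      - σ * (∫ s in (0:ℝ)..x, θt s ^ m * Real.exp (σ*s)) with hΛdef
    have hcI1 : Continuous fun x => ∫ s in (0:ℝ)..x, θt s ^ m * u s * Real.exp (σ*s) := by
      rw [continuous_iff_continuousAt]; exact fun x => (ftc_cont (hcontθmue m) x).continuousAt
    have hcI2 : Continuous fun x => ∫ s in (0:ℝ)..x, θt s ^ m * Real.exp (σ*s) := by
      rw [continuous_iff_continuousAt]; exact fun x => (ftc_cont (hcontθme m) x).continuousAt
    have hΛcont : ContinuousOn Λ (Set.Icc 0 t) := by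
      apply Continuous.continuousOn; fun_prop
    have hΛ0 : Λ 0 = 0 := by
      simp [hΛdef, intervalIntegral.integral_same, hθteq 0 le_rfl, hθ0]
    have hΛd : ∀ x ∈ Set.Ico 0 t, HasDerivWithinAt Λ 0 (Set.Ici x) x := by
      intro x hx
      have h1 := ((ftc_cont (hcontθmue m) x).const_mul
        (β * (m:ℝ))).hasDerivWithinAt (s := Set.Ici x)
      have h2 := (hpowd m x hx.1).fun_mul (hexd x).hasDerivWithinAt
      have h3 := ((ftc_cont (hcontθme m) x).const_mul σ).hasDerivWithinAt (s := Set.Ici x)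
      have htot := ((h1.sub_const 1).fun_add h2).fun_sub h3
      refine htot.congr_deriv (Eq.symm ?_)
      ring
    have hfin := constant_of_has_deriv_right_zero hΛcont hΛd t ⟨ht, le_refl t⟩
    rw [hΛ0] at hfin
    simp only [hΛdef, hCdef] at hfin ⊢
    linarith [hfin]
  have hEX : Real.exp (-(σ*t)) * Real.exp (σ*t) = 1 := by rw [← Real.exp_add]; simp
  have hE1 : Real.exp (-(σ*t)) ≤ 1 := by
    rw [Real.exp_le_one_iff]
    nlinarith [hσ]
  have hFt : F β ρ t = ρ/σ + β/σ * Real.exp (-(σ*t)) := by rw [F, hσdef, neg_mul]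
  -- key2 : the per-term identity
  have key2 : ∀ k : ℕ, (k:ℝ) * ((k:ℝ)-1) * p k *
      (∫ s in (0:ℝ)..t, θt s ^ (k-1) * u s * F β ρ (t-s))
      = (k:ℝ) * p k / β *
        (F β ρ t - θt t ^ (k-1) + β * Real.exp (-(σ*t)) * C (k-1)) := by
    intro k
    match k with
    | 0 => norm_num
    | (n+1) =>
      have hconv : (∫ s in (0:ℝ)..t, θt s ^ n * u s * F β ρ (t-s))
          = ρ/σ * (∫ s in (0:ℝ)..t, θt s ^ n * u s)
            + β/σ * Real.exp (-(σ*t)) *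
              (∫ s in (0:ℝ)..t, θt s ^ n * u s * Real.exp (σ*s)) := by
        rw [← intervalIntegral.integral_const_mul, ← intervalIntegral.integral_const_mul,
          ← intervalIntegral.integral_add
            (((hcontθmu n).intervalIntegrable _ _).const_mul _)
            (((hcontθmue n).intervalIntegrable _ _).const_mul _)]
        apply intervalIntegral.integral_congr
        intro s hs
        simp only
        rw [F, show -(β+ρ)*(t-s) = -(σ*t) + σ*s by rw [hσdef]; ring, Real.exp_add, ← hσdef]
        ring
      have hA := keyA n
      have hB := keyB n
      simp only [Nat.add_sub_cancel]
      rw [hconv, hFt]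
      push_cast
      have hβne := hβ.ne'
      have hσne := hσ.ne'
      field_simp
      linear_combination (p (n+1) * ρ) * hA
        + (p (n+1) * β * Real.exp (-(σ*t))) * hB
        - (p (n+1) * β * θt t ^ n) * hEX + (p (n+1) * θt t ^ n) * hσdef
  -- bounds on C
  have hCnn : ∀ m : ℕ, 0 ≤ C m := by
    intro m
    apply intervalIntegral.integral_nonneg ht
    intro s hs
    exact mul_nonneg (pow_nonneg (hθt0 s).le m) (Real.exp_pos _).le
  have hC0 : σ * C 0 = Real.exp (σ*t) - 1 := by
    have h := keyB 0
    simp only [Nat.cast_zero, mul_zero, zero_mul, pow_zero, one_mul] at h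
    linarith [h]
  have hCle : ∀ m : ℕ, C m ≤ C 0 := by
    intro m
    simp only [hCdef]
    apply intervalIntegral.integral_mono_on ht ((hcontθme m).intervalIntegrable _ _)
      ((hcontθme 0).intervalIntegrable _ _)
    intro s hs
    simp only [pow_zero, one_mul]
    calc θt s ^ m * Real.exp (σ*s) ≤ 1 * Real.exp (σ*s) :=
          mul_le_mul_of_nonneg_right (pow_le_one₀ (hθt0 s).le (hθt1 s)) (Real.exp_pos _).le
      _ = Real.exp (σ*s) := one_mul _
  have hF0 : 0 ≤ F β ρ t := by
    rw [hFt]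
    have := (Real.exp_pos (-(σ*t))).le
    positivity
  have hF1 : F β ρ t ≤ 1 := by
    rw [hFt]
    have h1 : β/σ * Real.exp (-(σ*t)) ≤ β/σ := by
      nlinarith [div_nonneg hβ.le hσ.le, hE1]
    have h2 : ρ/σ + β/σ = 1 := by
      rw [hσdef]; field_simp; ring
    linarith
  -- bound on g
  have hg3 : ∀ m : ℕ, |F β ρ t - θt t ^ m + β * Real.exp (-(σ*t)) * C m| ≤ 3 := by
    intro m
    have h1 : 0 < θt t ^ m := pow_pos (hθt0 t) m
    have h2 : θt t ^ m ≤ 1 := pow_le_one₀ (hθt0 t).le (hθt1 t)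
    have h3 : 0 ≤ β * Real.exp (-(σ*t)) * C m :=
      mul_nonneg (mul_nonneg hβ.le (Real.exp_pos _).le) (hCnn m)
    have h6 : σ * (β * Real.exp (-(σ*t)) * C 0) = β * (1 - Real.exp (-(σ*t))) := by
      linear_combination β * Real.exp (-(σ*t)) * hC0 + β * hEX
    have h8 : β * (1 - Real.exp (-(σ*t))) ≤ σ := by
      have h9 : β * (1 - Real.exp (-(σ*t))) ≤ β * 1 := by
        apply mul_le_mul_of_nonneg_left _ hβ.le
        have := (Real.exp_pos (-(σ*t))).le
        linarith
      rw [hσdef]; linarith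
    have h5 : β * Real.exp (-(σ*t)) * C 0 ≤ 1 := by
      have h9 : σ * (β * Real.exp (-(σ*t)) * C 0) ≤ σ * 1 := by rw [h6, mul_one]; exact h8
      exact le_of_mul_le_mul_left h9 hσ
    have h4 : β * Real.exp (-(σ*t)) * C m ≤ 1 := by
      have h7 : β * Real.exp (-(σ*t)) * C m ≤ β * Real.exp (-(σ*t)) * C 0 :=
        mul_le_mul_of_nonneg_left (hCle m) (mul_nonneg hβ.le (Real.exp_pos _).le)
      linarith
    rw [abs_le]
    constructor <;> nlinarith [hF0, hF1]
  set g : ℕ → ℝ := fun k =>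
    F β ρ t - θt t ^ (k-1) + β * Real.exp (-(σ*t)) * C (k-1) with hgdef
  -- converting the statement's integrals
  have hinteq : ∀ k : ℕ, (∫ s in (0:ℝ)..t,
        θ s ^ (k-1) * (hI αS μ μR β ρ p (θ s) / hX μ (θ s)) * F β ρ (t-s))
      = ∫ s in (0:ℝ)..t, θt s ^ (k-1) * u s * F β ρ (t-s) := by
    intro k
    apply intervalIntegral.integral_congr
    intro s hs
    rw [Set.uIcc_of_le ht] at hs
    simp only [hudef]
    rw [hθteq s hs.1]
  have hterm : ∀ k : ℕ, (k:ℝ) * ((k:ℝ)-1) * p k *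
      (∫ s in (0:ℝ)..t,
        θ s ^ (k-1) * (hI αS μ μR β ρ p (θ s) / hX μ (θ s)) * F β ρ (t-s))
      = (k:ℝ) * p k / β * g k := by
    intro k
    rw [hinteq k]
    exact key2 k
  -- summability
  have hsummable : Summable (fun k : ℕ => (k : ℝ) * ((k : ℝ) - 1) * p k *
      ∫ s in (0:ℝ)..t,
        θ s ^ (k-1) * (hI αS μ μR β ρ p (θ s) / hX μ (θ s)) * F β ρ (t-s)) := by
    have hfeq : (fun k : ℕ => (k : ℝ) * ((k : ℝ) - 1) * p k *
        ∫ s in (0:ℝ)..t,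
          θ s ^ (k-1) * (hI αS μ μR β ρ p (θ s) / hX μ (θ s)) * F β ρ (t-s))
        = fun k : ℕ => (k:ℝ) * p k / β * g k := funext hterm
    rw [hfeq]
    apply Summable.of_norm_bounded (g := fun k : ℕ => (k:ℝ) * p k * (3/β)) (hmeanSummable.mul_right _)
    intro k
    rw [norm_mul, Real.norm_eq_abs, Real.norm_eq_abs,
      abs_of_nonneg (div_nonneg (hkpnn k) hβ.le)]
    calc (k:ℝ) * p k / β * |g k| ≤ (k:ℝ) * p k / β * 3 := by
          apply mul_le_mul_of_nonneg_left _ (div_nonneg (hkpnn k) hβ.le)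
          simp only [hgdef]
          exact hg3 (k-1)
      _ = (k:ℝ) * p k * (3/β) := by ring
  -- the sum-integral interchange
  set W : ℝ := ∫ s in (0:ℝ)..t, S2 s * Real.exp (σ*s) with hWdef
  have hW : ∑' k : ℕ, (k:ℝ) * p k * C (k-1) = W := by
    have h1 : ∀ k : ℕ, (k:ℝ) * p k * C (k-1)
        = ∫ s in Set.Ioc (0:ℝ) t, (k:ℝ) * p k * θt s ^ (k-1) * Real.exp (σ*s) := by
      intro k
      simp only [hCdef]
      rw [intervalIntegral.integral_of_le ht, ← MeasureTheory.integral_const_mul]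
      apply MeasureTheory.integral_congr_ae
      filter_upwards with s
      ring
    rw [tsum_congr h1]
    have hfint : ∀ k : ℕ, MeasureTheory.Integrable
        (fun s => (k:ℝ) * p k * θt s ^ (k-1) * Real.exp (σ*s))
        (MeasureTheory.volume.restrict (Set.Ioc 0 t)) := by
      intro k
      have : Continuous fun s => (k:ℝ) * p k * θt s ^ (k-1) * Real.exp (σ*s) := by fun_prop
      exact this.integrableOn_Ioc
    have hKnn : (0:ℝ) ≤ ∫ s in Set.Ioc (0:ℝ) t, Real.exp (σ*s) :=
      MeasureTheory.integral_nonneg (fun s => (Real.exp_pos _).le)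
    have hnorm : Summable fun k : ℕ =>
        ∫ s in Set.Ioc (0:ℝ) t, ‖(k:ℝ) * p k * θt s ^ (k-1) * Real.exp (σ*s)‖ := by
      apply Summable.of_nonneg_of_le
        (fun k => MeasureTheory.integral_nonneg (fun s => norm_nonneg _))
        (fun k => ?_)
        (hmeanSummable.mul_right (∫ s in Set.Ioc (0:ℝ) t, Real.exp (σ*s)))
      calc (∫ s in Set.Ioc (0:ℝ) t, ‖(k:ℝ) * p k * θt s ^ (k-1) * Real.exp (σ*s)‖)
          ≤ ∫ s in Set.Ioc (0:ℝ) t, (k:ℝ) * p k * Real.exp (σ*s) := by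
            apply MeasureTheory.setIntegral_mono_on ((hfint k).norm)
              ((continuous_const.mul
                (Real.continuous_exp.comp (continuous_const.mul continuous_id))).integrableOn_Ioc)
              measurableSet_Ioc
            intro s hs
            rw [Real.norm_eq_abs, abs_of_nonneg (by
              exact mul_nonneg (mul_nonneg (hkpnn k) (pow_nonneg (hθt0 s).le _))
                (Real.exp_pos _).le)]
            calc (k:ℝ) * p k * θt s ^ (k-1) * Real.exp (σ*s)
                ≤ (k:ℝ) * p k * 1 * Real.exp (σ*s) := by
                  apply mul_le_mul_of_nonneg_right _ (Real.exp_pos _).le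
                  exact mul_le_mul_of_nonneg_left (pow_le_one₀ (hθt0 s).le (hθt1 s)) (hkpnn k)
              _ = (k:ℝ) * p k * Real.exp (σ*s) := by ring
        _ = (k:ℝ) * p k * ∫ s in Set.Ioc (0:ℝ) t, Real.exp (σ*s) := by
            rw [MeasureTheory.integral_const_mul]
    rw [MeasureTheory.integral_tsum_of_summable_integral_norm hfint hnorm]
    rw [hWdef, intervalIntegral.integral_of_le ht]
    apply MeasureTheory.integral_congr_ae
    filter_upwards with s
    rw [hS2def, ← tsum_mul_right]
  -- evaluating the tsum
  set L : ℝ := ∑' k : ℕ, (k:ℝ) * p k with hLdef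
  have hsumb : Summable fun k : ℕ => (k:ℝ) * p k * θt t ^ (k-1) := hsum2 t
  have hsumc : Summable fun k : ℕ => (k:ℝ) * p k * C (k-1) := by
    apply Summable.of_nonneg_of_le (fun k => mul_nonneg (hkpnn k) (hCnn _))
      (fun k => mul_le_mul_of_nonneg_left (hCle _) (hkpnn k))
      (hmeanSummable.mul_right (C 0))
  have hTS : ∑' k : ℕ, (k:ℝ) * p k / β * g k
      = F β ρ t / β * L - 1/β * S2 t + Real.exp (-(σ*t)) * W := by
    have hsplit : ∀ k : ℕ, (k:ℝ) * p k / β * g k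
        = F β ρ t / β * ((k:ℝ) * p k) - 1/β * ((k:ℝ) * p k * θt t ^ (k-1))
          + Real.exp (-(σ*t)) * ((k:ℝ) * p k * C (k-1)) := by
      intro k
      simp only [hgdef]
      field_simp
    rw [tsum_congr hsplit]
    rw [Summable.tsum_add (((hmeanSummable.mul_left _).sub (hsumb.mul_left _)))
      (hsumc.mul_left _)]
    rw [Summable.tsum_sub (hmeanSummable.mul_left _) (hsumb.mul_left _)]
    rw [tsum_mul_left, tsum_mul_left, tsum_mul_left, hW, hLdef, hS2def]
  -- final assembly
  refine ⟨hsummable, ?_⟩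
  rw [← hθteq t ht]
  rw [tsum_congr hterm, hTS, hS1eq t]
  have hRW : R t = αS * W := by
    simp only [hRdef, hWdef]
    rw [← intervalIntegral.integral_const_mul]
    apply intervalIntegral.integral_congr
    intro s hs
    ring
  have hL : αS * L = μ - μI - μR := by
    rw [hLdef] at hμSdef ⊢
    linarith [hμsum, hμSdef]
  have hβne := hβ.ne'
  field_simp
  linear_combination (θt t) * key1 + (β * Real.exp (-(σ*t)) * θt t) * hRW
    - (θt t * F β ρ t) * hL
end

section
/- For every t ≥ 0, one has −ρ α_S Σ_{k≥1} k p_k ∫_0^t θ_s^{k−1} e^{−(β+ρ)(t−s)} ds = −(μρ/β) θ_t + (ρ(μ − μ_R)/(β+ρ)) e^{−(β+ρ)t} + (ρ/β)(ρμ/(β+ρ)) + ρ μ_R/(β+ρ), where the series on the left converges. -/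
open scoped BigOperators
open Real

theorem stmt6
    (β ρ μ μS μI μR αS : ℝ) (p : ℕ → ℝ) (θ : ℝ → ℝ)
    (hβ : 0 < β) (hρ : 0 ≤ ρ) (hμ : 0 < μ)
    (hμS : 0 ≤ μS) (hμI : 0 ≤ μI) (hμR : 0 ≤ μR)
    (hμsum : μS + μI + μR = μ)
    (hαS : αS ∈ Set.Ioc (0 : ℝ) 1)
    (hp : ∀ k, 0 ≤ p k)
    (hpsummable : Summable p)
    (hpsum : ∑' k : ℕ, p k = 1)
    (hmeanSummable : Summable (fun k : ℕ => (k : ℝ) * p k))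
    (hmeanPos : 0 < ∑' k : ℕ, (k : ℝ) * p k)
    (hμSdef : μS = αS * ∑' k : ℕ, (k : ℝ) * p k)
    (hθ0 : θ 0 = 1)
    (hθmem : ∀ t, 0 ≤ t → θ t ∈ Set.Ioc (0 : ℝ) 1)
    (hθderiv : ∀ t, 0 ≤ t →
      HasDerivAt θ (-β * θ t * hI αS μ μR β ρ p (θ t) / hX μ (θ t)) t)
    (t : ℝ) (ht : 0 ≤ t) :
    Summable (fun k : ℕ => (k : ℝ) * p k *
      ∫ s in (0 : ℝ)..t, θ s ^ (k - 1) * Real.exp (-(β + ρ) * (t - s))) ∧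
    -(ρ * αS) * ∑' k : ℕ, (k : ℝ) * p k *
        ∫ s in (0 : ℝ)..t, θ s ^ (k - 1) * Real.exp (-(β + ρ) * (t - s)) =
      -(μ * ρ / β) * θ t + ρ * (μ - μR) / (β + ρ) * Real.exp (-(β + ρ) * t) +
        ρ / β * (ρ * μ / (β + ρ)) + ρ * μR / (β + ρ) := by
  obtain ⟨hαS0, hαS1⟩ := hαS
  set c : ℝ := β + ρ with hc_def
  have hc : 0 < c := by positivity
  -- continuity of θ on [0,∞)
  have hθcont : ContinuousOn θ (Set.Ici 0) := fun x hx =>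
    ((hθderiv x hx).continuousAt).continuousWithinAt
  -- truncated θ
  set θt : ℝ → ℝ := fun s => θ (max s 0) with hθt_def
  have hθtcont : Continuous θt :=
    hθcont.comp_continuous (continuous_id.max continuous_const) fun x => Set.mem_Ici.2 (le_max_right _ _)
  have hθtmem : ∀ s, θt s ∈ Set.Ioc (0 : ℝ) 1 := fun s => hθmem _ (le_max_right _ _)
  have hθteq : ∀ s, 0 ≤ s → θt s = θ s := fun s hs => by
    simp only [hθt_def, max_eq_left hs]
  -- the function G
  set G : ℝ → ℝ := fun x => ∑' k : ℕ, (k : ℝ) * p k * x ^ (k - 1) with hG_def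
  have hbound : ∀ (k : ℕ) (x : ℝ), x ∈ Set.Icc (-1 : ℝ) 1 →
      ‖(k : ℝ) * p k * x ^ (k - 1)‖ ≤ (k : ℝ) * p k := by
    intro k x hx
    have h1 : |x| ≤ 1 := abs_le.2 ⟨hx.1, hx.2⟩
    have : ‖(k : ℝ) * p k * x ^ (k - 1)‖ = (k : ℝ) * p k * |x| ^ (k - 1) := by
      rw [Real.norm_eq_abs, abs_mul, abs_pow, abs_of_nonneg (mul_nonneg (Nat.cast_nonneg k) (hp k))]
    rw [this]
    have : |x| ^ (k - 1) ≤ 1 := pow_le_one₀ (abs_nonneg x) h1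
    nlinarith [mul_nonneg (Nat.cast_nonneg k : (0:ℝ) ≤ k) (hp k)]
  have hGcont : ContinuousOn G (Set.Icc (-1 : ℝ) 1) :=
    continuousOn_tsum (fun k => (continuousOn_const.mul (continuousOn_pow _)))
      hmeanSummable hbound
  have hmemIcc : ∀ s, θt s ∈ Set.Icc (-1 : ℝ) 1 := fun s =>
    ⟨le_trans (by norm_num) (hθtmem s).1.le, (hθtmem s).2⟩
  have hGsum : ∀ x : ℝ, x ∈ Set.Icc (-1 : ℝ) 1 →
      Summable (fun k : ℕ => (k : ℝ) * p k * x ^ (k - 1)) := fun x hx =>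
    Summable.of_norm_bounded hmeanSummable fun k => hbound k x hx
  -- hS in terms of G
  have hSG : ∀ x : ℝ, hS αS p x = αS * (x * G x) := by
    intro x
    rw [hS, hG_def, ← tsum_mul_left (a := x)]
    congr 1
    refine tsum_congr fun k => ?_
    cases k with
    | zero => simp
    | succ n => simp [pow_succ]; ring
  -- ψ
  set ψ : ℝ → ℝ := fun s => G (θt s) * Real.exp (c * s) with hψ_def
  have hψcont : Continuous ψ :=
    (hGcont.comp_continuous hθtcont hmemIcc).mul
      (Real.continuous_exp.comp (continuous_const.mul continuous_id))
  -- Part 1 : summability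
  have hint : ∀ k : ℕ, IntervalIntegrable (fun s => θ s ^ (k - 1) * Real.exp (-c * (t - s)))
      MeasureTheory.volume 0 t := by
    intro k
    apply ContinuousOn.intervalIntegrable
    rw [Set.uIcc_of_le ht]
    exact ((hθcont.mono (fun x hx => hx.1)).pow _).mul
      (Real.continuous_exp.comp (continuous_const.mul (continuous_const.sub continuous_id))).continuousOn
  have hInonneg : ∀ k : ℕ, 0 ≤ ∫ s in (0:ℝ)..t, θ s ^ (k - 1) * Real.exp (-c * (t - s)) := by
    intro k
    apply intervalIntegral.integral_nonneg ht
    intro s hs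
    exact mul_nonneg (pow_nonneg (hθmem s hs.1).1.le _) (Real.exp_pos _).le
  have hIle : ∀ k : ℕ, (∫ s in (0:ℝ)..t, θ s ^ (k - 1) * Real.exp (-c * (t - s))) ≤ t := by
    intro k
    have : (∫ s in (0:ℝ)..t, θ s ^ (k - 1) * Real.exp (-c * (t - s))) ≤
        ∫ s in (0:ℝ)..t, (1:ℝ) := by
      apply intervalIntegral.integral_mono_on ht (hint k) intervalIntegrable_const
      intro s hs
      have h1 : θ s ^ (k - 1) ≤ 1 := pow_le_one₀ (hθmem s hs.1).1.le (hθmem s hs.1).2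
      have h2 : Real.exp (-c * (t - s)) ≤ 1 := by
        rw [Real.exp_le_one_iff]
        nlinarith [hs.2]
      nlinarith [pow_nonneg (hθmem s hs.1).1.le (k-1), (Real.exp_pos (-c * (t - s))).le]
    simpa using this
  have hsummable : Summable (fun k : ℕ => (k : ℝ) * p k *
      ∫ s in (0:ℝ)..t, θ s ^ (k - 1) * Real.exp (-c * (t - s))) := by
    apply Summable.of_nonneg_of_le
      (fun k => mul_nonneg (mul_nonneg (Nat.cast_nonneg k) (hp k)) (hInonneg k))
      (fun k => mul_le_mul_of_nonneg_left (hIle k)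
        (mul_nonneg (Nat.cast_nonneg k) (hp k)))
    exact hmeanSummable.mul_right t
  refine ⟨hsummable, ?_⟩
  -- Part 2 : swap sum and integral
  set Fc : ℕ → C(ℝ, ℝ) := fun k =>
    ⟨fun s => (k : ℝ) * p k * θt s ^ (k - 1) * Real.exp (-c * (t - s)), by
      exact ((continuous_const.mul (hθtcont.pow _)).mul
        (Real.continuous_exp.comp (continuous_const.mul (continuous_const.sub continuous_id))))⟩
    with hFc_def
  have hFcnorm : Summable fun k : ℕ =>
      ‖(Fc k).restrict (⟨Set.uIcc (0:ℝ) t, isCompact_uIcc⟩ : TopologicalSpace.Compacts ℝ)‖ := by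
    apply Summable.of_nonneg_of_le (fun k => norm_nonneg _) _ hmeanSummable
    intro k
    rw [ContinuousMap.norm_le _ (mul_nonneg (Nat.cast_nonneg k) (hp k))]
    rintro ⟨x, hx⟩
    have hx2 : x ∈ Set.Icc (0:ℝ) t := by rw [← Set.uIcc_of_le ht]; exact hx
    simp only [ContinuousMap.restrict_apply, hFc_def, ContinuousMap.coe_mk]
    have hm := hθtmem x
    have h1 : θt x ^ (k - 1) ≤ 1 := pow_le_one₀ hm.1.le hm.2
    have h2 : Real.exp (-c * (t - x)) ≤ 1 := by
      rw [Real.exp_le_one_iff]; nlinarith [hx2.2]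
    have h3 : (0:ℝ) ≤ θt x ^ (k - 1) := pow_nonneg hm.1.le _
    have h4 := (Real.exp_pos (-c * (t - x))).le
    have hkp : (0:ℝ) ≤ (k:ℝ) * p k := mul_nonneg (Nat.cast_nonneg k) (hp k)
    rw [Real.norm_eq_abs, abs_of_nonneg (mul_nonneg (mul_nonneg hkp h3) h4)]
    nlinarith [mul_le_mul_of_nonneg_left h1 hkp,
      mul_le_mul_of_nonneg_left h2 (mul_nonneg hkp h3)]
  have hswap : ∑' k : ℕ, ∫ s in (0:ℝ)..t, Fc k s = ∫ s in (0:ℝ)..t, ∑' k : ℕ, Fc k s :=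
    intervalIntegral.tsum_intervalIntegral_eq_of_summable_norm hFcnorm
  -- identify the inner sum
  have hinner : ∀ s : ℝ, (∑' k : ℕ, Fc k s) = G (θt s) * Real.exp (-c * (t - s)) := by
    intro s
    simp only [hFc_def, ContinuousMap.coe_mk, hG_def]
    exact tsum_mul_right
  have hterm : ∀ k : ℕ, ((k : ℝ) * p k *
      ∫ s in (0:ℝ)..t, θ s ^ (k - 1) * Real.exp (-c * (t - s))) = ∫ s in (0:ℝ)..t, Fc k s := by
    intro k
    rw [← intervalIntegral.integral_const_mul]
    apply intervalIntegral.integral_congr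
    intro s hs
    rw [Set.uIcc_of_le ht] at hs
    simp only [hFc_def, ContinuousMap.coe_mk, hθteq s hs.1]
    ring
  -- primitive J
  set J : ℝ → ℝ := fun u => ∫ s in (0:ℝ)..u, ψ s with hJ_def
  have hJderiv : ∀ x : ℝ, HasDerivAt J (ψ x) x := by
    intro x
    exact intervalIntegral.integral_hasDerivAt_right
      (hψcont.intervalIntegrable _ _)
      (hψcont.stronglyMeasurable.stronglyMeasurableAtFilter)
      hψcont.continuousAt
  have hsum_to_J : (∑' k : ℕ, (k : ℝ) * p k *
      ∫ s in (0:ℝ)..t, θ s ^ (k - 1) * Real.exp (-c * (t - s))) = Real.exp (-c * t) * J t := by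
    rw [tsum_congr hterm, hswap]
    rw [intervalIntegral.integral_congr (g := fun s => Real.exp (-c*t) * ψ s)]
    · rw [intervalIntegral.integral_const_mul]
    · intro s hs
      show (∑' k : ℕ, Fc k s) = Real.exp (-c * t) * ψ s
      have he : Real.exp (-c * (t - s)) = Real.exp (-c * t) * Real.exp (c * s) := by
        rw [← Real.exp_add]; ring_nf
      rw [hinner s, he]
      simp only [hψ_def]
      ring
  -- the two functions
  set B : ℝ → ℝ := fun u => -(μ * ρ / β) * θt u + ρ * (μ - μR) / c * Real.exp (-c * u) +
      ρ / β * (ρ * μ / c) + ρ * μR / c with hB_def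
  set f₁ : ℝ → ℝ := fun u => -(ρ * αS) * J u with hf₁_def
  set f₂ : ℝ → ℝ := fun u => Real.exp (c * u) * B u with hf₂_def
  have hf₁cont : ContinuousOn f₁ (Set.Icc 0 t) := by
    apply Continuous.continuousOn
    apply continuous_const.mul
    rw [continuous_iff_continuousAt]
    exact fun x => (hJderiv x).continuousAt
  have hf₂cont : ContinuousOn f₂ (Set.Icc 0 t) := by
    apply Continuous.continuousOn
    apply (Real.continuous_exp.comp (continuous_const.mul continuous_id)).mul
    apply Continuous.add
    apply Continuous.add
    apply Continuous.add
    · exact continuous_const.mul hθtcont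
    · exact continuous_const.mul (Real.continuous_exp.comp (continuous_const.mul continuous_id))
    · exact continuous_const
    · exact continuous_const
  have hf₁0 : f₁ 0 = f₂ 0 := by
    simp only [hf₁_def, hf₂_def, hJ_def, hB_def, intervalIntegral.integral_same]
    rw [hθteq 0 le_rfl, hθ0]
    simp only [mul_zero, neg_zero, Real.exp_zero]
    field_simp
    ring
  -- the key derivative identity
  have hkey : ∀ x ∈ Set.Ico (0:ℝ) t,
      HasDerivWithinAt f₂ (-(ρ * αS) * ψ x) (Set.Ici x) x := by
    intro x hx
    have hx0 : (0:ℝ) ≤ x := hx.1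
    have hθx := hθmem x hx0
    have hθxne : θ x ≠ 0 := ne_of_gt hθx.1
    -- derivative of θt within Ici x
    have hDθ : HasDerivWithinAt θt (-β * θ x * hI αS μ μR β ρ p (θ x) / hX μ (θ x))
        (Set.Ici x) x := by
      apply ((hθderiv x hx0).hasDerivWithinAt).congr
      · intro y hy
        exact hθteq y (le_trans hx0 hy)
      · exact hθteq x hx0
    have hexp : HasDerivWithinAt (fun u => Real.exp (c * u)) (Real.exp (c * x) * c)
        (Set.Ici x) x := by
      have : HasDerivAt (fun u => Real.exp (c * u)) (Real.exp (c * x) * c) x := by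
        simpa using (HasDerivAt.exp ((hasDerivAt_id x).const_mul c))
      exact this.hasDerivWithinAt
    have hexpneg : HasDerivWithinAt (fun u => Real.exp (-c * u)) (Real.exp (-c * x) * (-c))
        (Set.Ici x) x := by
      have : HasDerivAt (fun u => Real.exp (-c * u)) (Real.exp (-c * x) * (-c)) x := by
        simpa using (HasDerivAt.exp ((hasDerivAt_id x).const_mul (-c)))
      exact this.hasDerivWithinAt
    have hB' : HasDerivWithinAt B
        (-(μ * ρ / β) * (-β * θ x * hI αS μ μR β ρ p (θ x) / hX μ (θ x)) +
          ρ * (μ - μR) / c * (Real.exp (-c * x) * (-c))) (Set.Ici x) x := by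
      simp only [hB_def]
      exact (((hDθ.const_mul _).add (hexpneg.const_mul _)).add_const _).add_const _
    have hmul := hexp.mul hB'
    apply hmul.congr_deriv
    -- now the algebra
    have hBx : B x = -(μ * ρ / β) * θ x + ρ * (μ - μR) / c * Real.exp (-c * x) +
        ρ / β * (ρ * μ / c) + ρ * μR / c := by
      simp only [hB_def, hθteq x hx0]
    have hθtx : θt x = θ x := hθteq x hx0
    rw [hBx]
    simp only [hψ_def, hθtx]
    have hee : Real.exp (c * x) * Real.exp (-c * x) = 1 := by
      rw [← Real.exp_add]; ring_nf; exact Real.exp_zero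
    have hIval : hI αS μ μR β ρ p (θ x) =
        μ * θ x ^ 2 - αS * (θ x * G (θ x)) - (μR * θ x + μ * ρ / β * (θ x * (1 - θ x))) := by
      rw [hI, hX, hR, hSG]
    rw [hIval, hX]
    have hcne : c ≠ 0 := ne_of_gt hc
    have hβne : β ≠ 0 := ne_of_gt hβ
    have hμne : μ ≠ 0 := ne_of_gt hμ
    rw [hc_def]
    field_simp
    ring
  have hkey₁ : ∀ x ∈ Set.Ico (0:ℝ) t,
      HasDerivWithinAt f₁ (-(ρ * αS) * ψ x) (Set.Ici x) x := by
    intro x hx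
    exact ((hJderiv x).const_mul _).hasDerivWithinAt
  have heq := eq_of_has_deriv_right_eq hkey₁ hkey hf₁cont hf₂cont hf₁0 t
    (Set.right_mem_Icc.2 ht)
  -- conclude
  rw [hsum_to_J]
  have : -(ρ * αS) * (Real.exp (-c * t) * J t) = Real.exp (-c * t) * f₁ t := by
    simp only [hf₁_def]; ring
  rw [this, heq]
  simp only [hf₂_def]
  have hee : Real.exp (-c * t) * Real.exp (c * t) = 1 := by
    rw [← Real.exp_add]; ring_nf; exact Real.exp_zero
  have hθtt : θt t = θ t := hθteq t ht
  simp only [hB_def, hθtt]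
  rw [← mul_assoc, hee, one_mul]
end

section
/- For every t ≥ 0, the following identity holds: (μρ/β)(1 − θ_t) = μ_I (ρ/(β+ρ))(1 − e^{−(β+ρ)t}) + μ_S (ρ/(β+ρ))(1 − e^{−(β+ρ)t}) − ρ α_S Σ_{k≥1} k p_k ∫_0^t θ_s^{k−1} e^{−(β+ρ)(t−s)} ds, where the series on the right converges. -/
open scoped BigOperators
open Real

theorem stmt7
    (β ρ μ μS μI μR αS : ℝ) (p : ℕ → ℝ) (θ : ℝ → ℝ)
    (hβ : 0 < β) (hρ : 0 ≤ ρ) (hμ : 0 < μ)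
    (hμS : 0 ≤ μS) (hμI : 0 ≤ μI) (hμR : 0 ≤ μR)
    (hμsum : μS + μI + μR = μ)
    (hαS : αS ∈ Set.Ioc (0 : ℝ) 1)
    (hp : ∀ k, 0 ≤ p k)
    (hpsummable : Summable p)
    (hpsum : ∑' k : ℕ, p k = 1)
    (hmeanSummable : Summable (fun k : ℕ => (k : ℝ) * p k))
    (hmeanPos : 0 < ∑' k : ℕ, (k : ℝ) * p k)
    (hμSdef : μS = αS * ∑' k : ℕ, (k : ℝ) * p k)
    (hθ0 : θ 0 = 1)
    (hθmem : ∀ t, 0 ≤ t → θ t ∈ Set.Ioc (0 : ℝ) 1)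
    (hθderiv : ∀ t, 0 ≤ t →
      HasDerivAt θ (-β * θ t * hI αS μ μR β ρ p (θ t) / hX μ (θ t)) t)
    (t : ℝ) (ht : 0 ≤ t) :
    Summable (fun k : ℕ => (k : ℝ) * p k *
      ∫ s in (0 : ℝ)..t, θ s ^ (k - 1) * Real.exp (-(β + ρ) * (t - s))) ∧
    μ * ρ / β * (1 - θ t) =
      μI * (ρ / (β + ρ)) * (1 - Real.exp (-(β + ρ) * t)) +
        μS * (ρ / (β + ρ)) * (1 - Real.exp (-(β + ρ) * t)) -
        ρ * αS * ∑' k : ℕ, (k : ℝ) * p k *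
          ∫ s in (0 : ℝ)..t, θ s ^ (k - 1) * Real.exp (-(β + ρ) * (t - s)) := by
  obtain ⟨hαS0, hαS1⟩ := hαS
  have hB : (0:ℝ) < β + ρ := by linarith
  -- continuity of θ on [0,t]
  have hθc : ContinuousOn θ (Set.Icc 0 t) := fun s hs =>
    ((hθderiv s hs.1).continuousAt).continuousWithinAt
  have hθmem' : ∀ s ∈ Set.Icc (0:ℝ) t, θ s ∈ Set.Ioc (0:ℝ) 1 := fun s hs => hθmem s hs.1
  set M : ℝ → ℝ := fun s => ∑' k : ℕ, (k:ℝ) * p k * θ s ^ (k - 1) with hM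
  have hsumM : ∀ s ∈ Set.Icc (0:ℝ) t,
      Summable (fun k : ℕ => (k:ℝ) * p k * θ s ^ (k - 1)) := by
    intro s hs
    refine Summable.of_nonneg_of_le (fun k => ?_) (fun k => ?_) hmeanSummable
    · have h0 := (hθmem' s hs).1.le
      have hpk := hp k
      positivity
    · have h1 : θ s ^ (k - 1) ≤ 1 := pow_le_one₀ (hθmem' s hs).1.le (hθmem' s hs).2
      have hk : (0:ℝ) ≤ (k:ℝ) * p k := by have := hp k; positivity
      calc (k:ℝ) * p k * θ s ^ (k - 1) ≤ (k:ℝ) * p k * 1 :=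
            mul_le_mul_of_nonneg_left h1 hk
        _ = (k:ℝ) * p k := mul_one _
  have hbnd : ∀ (k : ℕ), ∀ s ∈ Set.Icc (0:ℝ) t,
      ‖(k:ℝ) * p k * θ s ^ (k - 1)‖ ≤ (k:ℝ) * p k := by
    intro k s hs
    have h0 := (hθmem' s hs).1.le
    have h1 : θ s ^ (k - 1) ≤ 1 := pow_le_one₀ h0 (hθmem' s hs).2
    have hpk := hp k
    rw [Real.norm_eq_abs, abs_of_nonneg (by positivity)]
    calc (k:ℝ) * p k * θ s ^ (k - 1) ≤ (k:ℝ) * p k * 1 :=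
          mul_le_mul_of_nonneg_left h1 (by positivity)
      _ = (k:ℝ) * p k := mul_one _
  have hMc : ContinuousOn M (Set.Icc 0 t) := by
    refine continuousOn_tsum (fun k => ?_) hmeanSummable hbnd
    exact continuousOn_const.mul (hθc.pow _)
  -- key tsum identity
  have hTsum : ∀ s ∈ Set.Icc (0:ℝ) t,
      (∑' k : ℕ, (k:ℝ) * p k * θ s ^ k) = θ s * M s := by
    intro s hs
    rw [hM, ← tsum_mul_left]
    refine tsum_congr fun k => ?_
    cases k with
    | zero => simp
    | succ n => simp only [Nat.succ_sub_one, pow_succ, Nat.cast_succ]; ring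
  -- FTC part
  have hμIS : μI + μS = μ - μR := by linarith
  set g : ℝ → ℝ := fun s => ρ * (μI + μS) - ρ * αS * M s with hg
  have hEc : Continuous (fun s : ℝ => Real.exp ((β+ρ)*s)) :=
    Real.continuous_exp.comp (continuous_const.mul continuous_id)
  have hgc : ContinuousOn (fun s => Real.exp ((β+ρ)*s) * g s) (Set.Icc 0 t) :=
    hEc.continuousOn.mul (continuousOn_const.sub (continuousOn_const.mul hMc))
  have hederiv : ∀ s : ℝ, HasDerivAt (fun u => Real.exp ((β+ρ)*u))
      ((β+ρ) * Real.exp ((β+ρ)*s)) s := by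
    intro s
    have h1 : HasDerivAt (fun u : ℝ => (β+ρ)*u) (β+ρ) s := by
      simpa using (hasDerivAt_id s).const_mul (β+ρ)
    simpa [mul_comm] using h1.exp
  have hderiv : ∀ s ∈ Set.uIcc (0:ℝ) t,
      HasDerivAt (fun u => Real.exp ((β+ρ)*u) * (μ*ρ/β*(1 - θ u)))
        (Real.exp ((β+ρ)*s) * g s) s := by
    intro s hs
    rw [Set.uIcc_of_le ht] at hs
    have hx := hθmem' s hs
    have hx0 : (0:ℝ) < θ s := hx.1
    have hθ' := hθderiv s hs.1
    have hφ : HasDerivAt (fun u => μ*ρ/β*(1 - θ u))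
        (μ*ρ/β * (0 - (-β * θ s * hI αS μ μR β ρ p (θ s) / hX μ (θ s)))) s :=
      ((hasDerivAt_const s (1:ℝ)).sub hθ').const_mul _
    have := (hederiv s).mul hφ
    refine this.congr_deriv ?_
    have hT := hTsum s hs
    simp only [hg, hI, hX, hS, hR]
    rw [hT, show μI + μS = μ - μR by linarith]
    field_simp
    ring
  have hgInt : IntervalIntegrable (fun s => Real.exp ((β+ρ)*s) * g s) MeasureTheory.volume 0 t := by
    apply ContinuousOn.intervalIntegrable
    rwa [Set.uIcc_of_le ht]
  have hFTC : ∫ s in (0:ℝ)..t, Real.exp ((β+ρ)*s) * g s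
      = Real.exp ((β+ρ)*t) * (μ*ρ/β*(1 - θ t)) := by
    have := intervalIntegral.integral_eq_sub_of_hasDerivAt hderiv hgInt
    simpa [hθ0] using this
  -- exchange of sum and integral
  have hmeasI : MeasurableSet (Set.Ioc (0:ℝ) t) := measurableSet_Ioc
  have hFc : ∀ k : ℕ, ContinuousOn
      (fun s => (k:ℝ) * p k * (θ s ^ (k - 1) * Real.exp (-(β+ρ)*(t-s)))) (Set.Icc 0 t) := by
    intro k
    exact continuousOn_const.mul ((hθc.pow _).mul
      ((Real.continuous_exp.comp (continuous_const.mul (continuous_const.sub continuous_id))).continuousOn))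
  have hsum : HasSum (fun k : ℕ => (k:ℝ) * p k *
      ∫ s in (0:ℝ)..t, θ s ^ (k - 1) * Real.exp (-(β+ρ)*(t-s)))
      (∫ s in (0:ℝ)..t, M s * Real.exp (-(β+ρ)*(t-s))) := by
    have key := MeasureTheory.hasSum_integral_of_dominated_convergence
      (μ := MeasureTheory.volume.restrict (Set.Ioc (0:ℝ) t))
      (F := fun (k:ℕ) (s:ℝ) => (k:ℝ) * p k * (θ s ^ (k - 1) * Real.exp (-(β+ρ)*(t-s))))
      (f := fun s => M s * Real.exp (-(β+ρ)*(t-s)))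
      (bound := fun k _ => (k:ℝ) * p k)
      (fun k => ((hFc k).mono Set.Ioc_subset_Icc_self).aestronglyMeasurable hmeasI)
      (fun k => by
        filter_upwards [MeasureTheory.ae_restrict_mem hmeasI] with s hs
        have hs' : s ∈ Set.Icc (0:ℝ) t := Set.Ioc_subset_Icc_self hs
        have he1 : Real.exp (-(β+ρ)*(t-s)) ≤ 1 := by
          apply Real.exp_le_one_iff.mpr
          nlinarith [hs'.2]
        have he0 : (0:ℝ) < Real.exp (-(β+ρ)*(t-s)) := Real.exp_pos _
        have h2 := hbnd k s hs'
        rw [Real.norm_eq_abs] at h2 ⊢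
        rw [← mul_assoc, abs_mul]
        calc |(k:ℝ) * p k * θ s ^ (k-1)| * |Real.exp (-(β+ρ)*(t-s))|
            ≤ ((k:ℝ) * p k) * 1 := by
              apply mul_le_mul h2 (by rw [abs_of_pos he0]; exact he1) (abs_nonneg _)
              have := hp k; positivity
          _ = (k:ℝ) * p k := mul_one _)
      (Filter.Eventually.of_forall (fun _ => hmeanSummable))
      (MeasureTheory.integrableOn_const measure_Ioc_lt_top.ne)
      (by
        filter_upwards [MeasureTheory.ae_restrict_mem hmeasI] with s hs
        have hs' : s ∈ Set.Icc (0:ℝ) t := Set.Ioc_subset_Icc_self hs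
        have := ((hsumM s hs').hasSum.mul_right (Real.exp (-(β+ρ)*(t-s))))
        simpa [hM, mul_assoc] using this)
    have hconv : ∀ k : ℕ,
        (∫ s in Set.Ioc (0:ℝ) t, (k:ℝ) * p k * (θ s ^ (k - 1) * Real.exp (-(β+ρ)*(t-s))))
        = (k:ℝ) * p k * ∫ s in (0:ℝ)..t, θ s ^ (k - 1) * Real.exp (-(β+ρ)*(t-s)) := by
      intro k
      rw [intervalIntegral.integral_of_le ht, MeasureTheory.integral_const_mul]
    rw [intervalIntegral.integral_of_le ht]
    simp only [hconv] at key
    exact key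
  refine ⟨hsum.summable, ?_⟩
  rw [hsum.tsum_eq]
  -- rewrite the integral
  have hrw : (fun s => M s * Real.exp (-(β+ρ)*(t-s)))
      = fun s => Real.exp (-((β+ρ)*t)) * (Real.exp ((β+ρ)*s) * M s) := by
    funext s
    rw [show -(β+ρ)*(t-s) = -((β+ρ)*t) + (β+ρ)*s by ring, Real.exp_add]
    ring
  have hMint : IntervalIntegrable (fun s => Real.exp ((β+ρ)*s) * M s) MeasureTheory.volume 0 t := by
    apply ContinuousOn.intervalIntegrable
    rw [Set.uIcc_of_le ht]
    exact hEc.continuousOn.mul hMc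
  have hEint : IntervalIntegrable (fun s => Real.exp ((β+ρ)*s)) MeasureTheory.volume 0 t :=
    hEc.intervalIntegrable 0 t
  set J : ℝ := ∫ s in (0:ℝ)..t, Real.exp ((β+ρ)*s) * M s with hJ
  have hIntrw : (∫ s in (0:ℝ)..t, M s * Real.exp (-(β+ρ)*(t-s)))
      = Real.exp (-((β+ρ)*t)) * J := by
    rw [hrw, intervalIntegral.integral_const_mul]
  have hexpint : ∫ s in (0:ℝ)..t, Real.exp ((β+ρ)*s)
      = (Real.exp ((β+ρ)*t) - 1) / (β+ρ) := by
    have hd : ∀ s ∈ Set.uIcc (0:ℝ) t,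
        HasDerivAt (fun u => Real.exp ((β+ρ)*u) / (β+ρ)) (Real.exp ((β+ρ)*s)) s := by
      intro s _
      have := (hederiv s).div_const (β+ρ)
      refine this.congr_deriv ?_
      field_simp
    have := intervalIntegral.integral_eq_sub_of_hasDerivAt hd hEint
    rw [this]
    rw [mul_zero, Real.exp_zero]
    ring
  have hsplit : ∫ s in (0:ℝ)..t, Real.exp ((β+ρ)*s) * g s
      = ρ*(μI+μS) * ((Real.exp ((β+ρ)*t) - 1) / (β+ρ)) - ρ*αS*J := by
    have heq : (fun s => Real.exp ((β+ρ)*s) * g s)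
        = fun s => ρ*(μI+μS) * Real.exp ((β+ρ)*s) - ρ*αS * (Real.exp ((β+ρ)*s) * M s) := by
      funext s; simp only [hg]; ring
    rw [heq, intervalIntegral.integral_sub (hEint.const_mul _) (hMint.const_mul _),
      intervalIntegral.integral_const_mul, intervalIntegral.integral_const_mul, hexpint, hJ]
  have hcomb : Real.exp ((β+ρ)*t) * (μ*ρ/β*(1 - θ t))
      = ρ*(μI+μS) * ((Real.exp ((β+ρ)*t) - 1) / (β+ρ)) - ρ*αS*J := by
    rw [← hFTC, hsplit]
  have hE1 : Real.exp (-((β+ρ)*t)) * Real.exp ((β+ρ)*t) = 1 := by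
    rw [← Real.exp_add]; simp
  rw [hIntrw]
  rw [show (-(β+ρ)*t) = (-((β+ρ)*t)) by ring]
  linear_combination Real.exp (-((β+ρ)*t)) * hcomb +
    (ρ*(μI+μS)/(β+ρ) - μ*ρ/β*(1 - θ t)) * hE1
end

section
/- Define h̃_R(t) = μ_R θ_t + μ_I θ_t (ρ/(β+ρ))(1 − e^{−(β+ρ)t}) + α_S Σ_{k≥1} k p_k θ_t (−∫_0^t (d/ds θ_s^{k−1}) (ρ/(β+ρ))(1 − e^{−(β+ρ)(t−s)}) ds). Then for every t ≥ 0 the series defining h̃_R(t) converges and h̃_R(t) = h_R(θ_t), i.e. h̃_R(t) = μ_R θ_t + (μρ/β) θ_t (1 − θ_t). -/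
open scoped BigOperators
open Real

set_option maxHeartbeats 1000000 in
theorem stmt8
    (β ρ μ μS μI μR αS : ℝ) (p : ℕ → ℝ) (θ : ℝ → ℝ)
    (hβ : 0 < β) (hρ : 0 ≤ ρ) (hμ : 0 < μ)
    (hμS : 0 ≤ μS) (hμI : 0 ≤ μI) (hμR : 0 ≤ μR)
    (hμsum : μS + μI + μR = μ)
    (hαS : αS ∈ Set.Ioc (0 : ℝ) 1)
    (hp : ∀ k, 0 ≤ p k)
    (hpsummable : Summable p)
    (hpsum : ∑' k : ℕ, p k = 1)
    (hmeanSummable : Summable (fun k : ℕ => (k : ℝ) * p k))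
    (hmeanPos : 0 < ∑' k : ℕ, (k : ℝ) * p k)
    (hμSdef : μS = αS * ∑' k : ℕ, (k : ℝ) * p k)
    (hθ0 : θ 0 = 1)
    (hθmem : ∀ t, 0 ≤ t → θ t ∈ Set.Ioc (0 : ℝ) 1)
    (hθderiv : ∀ t, 0 ≤ t →
      HasDerivAt θ (-β * θ t * hI αS μ μR β ρ p (θ t) / hX μ (θ t)) t)
    (t : ℝ) (ht : 0 ≤ t) :
    Summable (fun k : ℕ => (k : ℝ) * p k * θ t *
      -∫ s in (0 : ℝ)..t,
          deriv (fun u => θ u ^ (k - 1)) s *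
            (ρ / (β + ρ) * (1 - Real.exp (-(β + ρ) * (t - s))))) ∧
    μR * θ t + μI * θ t * (ρ / (β + ρ)) * (1 - Real.exp (-(β + ρ) * t)) +
        αS * ∑' k : ℕ, (k : ℝ) * p k * θ t *
          -∫ s in (0 : ℝ)..t,
              deriv (fun u => θ u ^ (k - 1)) s *
                (ρ / (β + ρ) * (1 - Real.exp (-(β + ρ) * (t - s)))) =
      μR * θ t + μ * ρ / β * θ t * (1 - θ t) := by
  have hc : 0 < β + ρ := by linarith
  have hc0 : β + ρ ≠ 0 := ne_of_gt hc
  have hβ0 : β ≠ 0 := ne_of_gt hβ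
  -- basic continuity / differentiability facts
  have hθc : ContinuousOn θ (Set.Icc 0 t) := fun s hs =>
    ((hθderiv s hs.1).continuousAt).continuousWithinAt
  have hθhas : ∀ s ∈ Set.Icc (0:ℝ) t, HasDerivAt θ (deriv θ s) s := fun s hs =>
    (hθderiv s hs.1).differentiableAt.hasDerivAt
  have hgc : ContinuousOn (fun x : ℝ => ∑' k : ℕ, (k:ℝ) * p k * x ^ k) (Set.Icc (-1:ℝ) 1) := by
    apply continuousOn_tsum (u := fun k : ℕ => (k:ℝ) * p k)
      (fun k => (continuous_const.mul (continuous_pow k)).continuousOn) hmeanSummable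
    intro n x hx
    have hx1 : |x| ≤ 1 := abs_le.2 ⟨hx.1, hx.2⟩
    rw [Real.norm_eq_abs]
    show |(n:ℝ) * p n * x ^ n| ≤ (n:ℝ) * p n
    rw [abs_mul, abs_mul, abs_pow]
    have h1 : |x| ^ n ≤ 1 := pow_le_one₀ (abs_nonneg x) hx1
    have hn : |(n:ℝ)| = (n:ℝ) := abs_of_nonneg (Nat.cast_nonneg n)
    have hpn : |p n| = p n := abs_of_nonneg (hp n)
    rw [hn, hpn]
    nlinarith [mul_nonneg (Nat.cast_nonneg (α := ℝ) n) (hp n)]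
  have hmaps : Set.MapsTo θ (Set.Icc 0 t) (Set.Icc (-1:ℝ) 1) := by
    intro s hs
    have := hθmem s hs.1
    exact ⟨by linarith [this.1], this.2⟩
  have hhSc : ContinuousOn (fun s => hS αS p (θ s)) (Set.Icc 0 t) := by
    unfold hS
    exact continuousOn_const.mul (hgc.comp hθc hmaps)
  have hθne : ∀ s ∈ Set.Icc (0:ℝ) t, θ s ≠ 0 := fun s hs => ne_of_gt (hθmem s hs.1).1
  have hθdc : ContinuousOn (deriv θ) (Set.Icc 0 t) := by
    have heq : ∀ s ∈ Set.Icc (0:ℝ) t,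
        deriv θ s = -β * θ s * hI αS μ μR β ρ p (θ s) / hX μ (θ s) := fun s hs =>
      (hθderiv s hs.1).deriv
    apply ContinuousOn.congr _ heq
    apply ContinuousOn.div
    · apply ContinuousOn.mul (continuousOn_const.mul hθc)
      unfold hI hX hR
      exact ((continuousOn_const.mul (hθc.pow 2)).sub hhSc).sub
        ((continuousOn_const.mul hθc).add
          (continuousOn_const.mul (hθc.mul (continuousOn_const.sub hθc))))
    · exact continuousOn_const.mul (hθc.pow 2)
    · intro s hs
      have := hθne s hs
      unfold hX
      positivity
  have hicc : Set.uIcc (0:ℝ) t = Set.Icc 0 t := Set.uIcc_of_le ht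
  have hEhas : ∀ s : ℝ, HasDerivAt (fun u => Real.exp (-(β+ρ)*(t-u)))
      ((β+ρ) * Real.exp (-(β+ρ)*(t-s))) s := by
    intro s
    have h1 : HasDerivAt (fun u : ℝ => -(β+ρ)*(t-u)) (β+ρ) s := by
      have := ((hasDerivAt_id s).const_sub t).const_mul (-(β+ρ))
      exact this.congr_deriv (by ring)
    have := h1.exp
    convert this using 1; ring
  have hEc : Continuous (fun s => Real.exp (-(β+ρ)*(t-s))) :=
    Real.continuous_exp.comp (by continuity)
  have hEle : ∀ s ∈ Set.Icc (0:ℝ) t, Real.exp (-(β+ρ)*(t-s)) ≤ 1 := by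
    intro s hs
    rw [← Real.exp_zero]
    apply Real.exp_le_exp.2
    nlinarith [hs.2]
  have hEpos : ∀ s : ℝ, 0 < Real.exp (-(β+ρ)*(t-s)) := fun s => Real.exp_pos _
  -- integration by parts identity, for every exponent n
  have hIBP : ∀ n : ℕ, (∫ s in (0:ℝ)..t, deriv (fun u => θ u ^ n) s *
        (ρ / (β + ρ) * (1 - Real.exp (-(β + ρ) * (t - s)))))
      = -(ρ / (β + ρ) * (1 - Real.exp (-(β + ρ) * t)))
        + ρ * ∫ s in (0:ℝ)..t, θ s ^ n * Real.exp (-(β + ρ) * (t - s)) := by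
    intro n
    have hGhas : ∀ s : ℝ, HasDerivAt (fun u => ρ/(β+ρ) * (1 - Real.exp (-(β+ρ)*(t-u))))
        (-(ρ * Real.exp (-(β+ρ)*(t-s)))) s := by
      intro s
      have := ((hEhas s).const_sub 1).const_mul (ρ/(β+ρ))
      refine this.congr_deriv ?_
      field_simp
    have hpowderiv : ∀ s ∈ Set.Icc (0:ℝ) t,
        deriv (fun u => θ u ^ n) s = (n:ℝ) * θ s ^ (n-1) * deriv θ s :=
      fun s hs => ((hθhas s hs).pow n).deriv
    have hpowhas : ∀ s ∈ Set.Icc (0:ℝ) t,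
        HasDerivAt (fun u => θ u ^ n) (deriv (fun u => θ u ^ n) s) s := by
      intro s hs
      rw [hpowderiv s hs]
      exact (hθhas s hs).pow n
    have hpowdc : ContinuousOn (fun s => deriv (fun u => θ u ^ n) s) (Set.Icc 0 t) := by
      apply ContinuousOn.congr _ hpowderiv
      exact (continuousOn_const.mul (hθc.pow _)).mul hθdc
    have hint1 : IntervalIntegrable (fun s => deriv (fun u => θ u ^ n) s *
        (ρ/(β+ρ) * (1 - Real.exp (-(β+ρ)*(t-s))))) MeasureTheory.volume 0 t := by
      apply ContinuousOn.intervalIntegrable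
      rw [hicc]
      exact hpowdc.mul (continuousOn_const.mul (continuousOn_const.sub hEc.continuousOn))
    have hint2 : IntervalIntegrable (fun s => θ s ^ n * (ρ * Real.exp (-(β+ρ)*(t-s))))
        MeasureTheory.volume 0 t := by
      apply ContinuousOn.intervalIntegrable
      rw [hicc]
      exact (hθc.pow n).mul (continuousOn_const.mul hEc.continuousOn)
    have hftc := intervalIntegral.integral_eq_sub_of_hasDerivAt (a := (0:ℝ)) (b := t)
      (f := fun s => θ s ^ n * (ρ/(β+ρ) * (1 - Real.exp (-(β+ρ)*(t-s)))))
      (f' := fun s => deriv (fun u => θ u ^ n) s * (ρ/(β+ρ) * (1 - Real.exp (-(β+ρ)*(t-s))))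
        - θ s ^ n * (ρ * Real.exp (-(β+ρ)*(t-s))))
      (by
        intro s hs
        rw [hicc] at hs
        have := (hpowhas s hs).mul (hGhas s)
        refine this.congr_deriv ?_
        ring)
      (hint1.sub hint2)
    rw [intervalIntegral.integral_sub hint1 hint2] at hftc
    have h2 : (∫ s in (0:ℝ)..t, θ s ^ n * (ρ * Real.exp (-(β+ρ)*(t-s))))
        = ρ * ∫ s in (0:ℝ)..t, θ s ^ n * Real.exp (-(β+ρ)*(t-s)) := by
      rw [← intervalIntegral.integral_const_mul]
      congr 1; funext s; ring
    simp only [sub_self, mul_zero, Real.exp_zero, sub_zero, hθ0, one_pow, mul_one] at hftc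
    rw [h2] at hftc
    linarith [hftc]
  -- bounds on the auxiliary integrals J n
  have hJle : ∀ n : ℕ, (∫ s in (0:ℝ)..t, θ s ^ n * Real.exp (-(β+ρ)*(t-s))) ≤ t := by
    intro n
    have h1 : IntervalIntegrable (fun s => θ s ^ n * Real.exp (-(β+ρ)*(t-s)))
        MeasureTheory.volume 0 t := by
      apply ContinuousOn.intervalIntegrable
      rw [hicc]
      exact (hθc.pow n).mul hEc.continuousOn
    have h2 := intervalIntegral.integral_mono_on ht h1 intervalIntegrable_const
      (g := fun _ => (1:ℝ)) (by
        intro s hs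
        have hθs := hθmem s hs.1
        have ha : (0:ℝ) < θ s ^ n := pow_pos hθs.1 _
        have hb : θ s ^ n ≤ 1 := pow_le_one₀ (le_of_lt hθs.1) hθs.2
        have hc1 := hEle s hs
        have hc2 := hEpos s
        show θ s ^ n * Real.exp (-(β+ρ)*(t-s)) ≤ 1
        nlinarith)
    simpa using h2
  have hJnonneg : ∀ n : ℕ, 0 ≤ (∫ s in (0:ℝ)..t, θ s ^ n * Real.exp (-(β+ρ)*(t-s))) := by
    intro n
    apply intervalIntegral.integral_nonneg ht
    intro s hs
    have hθs : 0 < θ s := (hθmem s hs.1).1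
    positivity
  set J : ℕ → ℝ := fun n => ∫ s in (0:ℝ)..t, θ s ^ n * Real.exp (-(β+ρ)*(t-s)) with hJdef
  set e : ℝ := Real.exp (-(β+ρ)*t) with hedef
  have hepos : 0 < e := Real.exp_pos _
  set G0 : ℝ := ρ/(β+ρ) * (1 - e) with hG0def
  have hθt := hθmem t ht
  -- rewrite each term of the series
  have heq : ∀ k : ℕ, (k : ℝ) * p k * θ t *
      -∫ s in (0 : ℝ)..t,
          deriv (fun u => θ u ^ (k - 1)) s *
            (ρ / (β + ρ) * (1 - Real.exp (-(β + ρ) * (t - s))))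
      = (k:ℝ) * p k * (θ t * G0) - (k:ℝ) * p k * (θ t * (ρ * J (k-1))) := by
    intro k
    rw [hIBP (k-1)]
    ring
  have hkp : ∀ k : ℕ, (0:ℝ) ≤ (k:ℝ) * p k := fun k => mul_nonneg (Nat.cast_nonneg _) (hp k)
  have hSummA : Summable (fun k : ℕ => (k:ℝ) * p k * (θ t * G0)) :=
    hmeanSummable.mul_right _
  have hJle' : ∀ n : ℕ, J n ≤ t := hJle
  have hJnn' : ∀ n : ℕ, 0 ≤ J n := hJnonneg
  have hSummB : Summable (fun k : ℕ => (k:ℝ) * p k * (θ t * (ρ * J (k-1)))) := by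
    refine Summable.of_nonneg_of_le
      (fun k => mul_nonneg (hkp k) (mul_nonneg (le_of_lt hθt.1)
        (mul_nonneg hρ (hJnn' (k-1))))) ?_
      (hmeanSummable.mul_right (θ t * (ρ * t)))
    intro k
    apply mul_le_mul_of_nonneg_left _ (hkp k)
    apply mul_le_mul_of_nonneg_left _ (le_of_lt hθt.1)
    exact mul_le_mul_of_nonneg_left (hJle' (k-1)) hρ
  have hSummGoal : Summable (fun k : ℕ => (k : ℝ) * p k * θ t *
      -∫ s in (0 : ℝ)..t,
          deriv (fun u => θ u ^ (k - 1)) s *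
            (ρ / (β + ρ) * (1 - Real.exp (-(β + ρ) * (t - s))))) :=
    (hSummA.sub hSummB).congr (fun k => (heq k).symm)
  refine ⟨hSummGoal, ?_⟩
  -- compute the tsum
  have htsum1 : (∑' k : ℕ, (k : ℝ) * p k * θ t *
      -∫ s in (0 : ℝ)..t,
          deriv (fun u => θ u ^ (k - 1)) s *
            (ρ / (β + ρ) * (1 - Real.exp (-(β + ρ) * (t - s)))))
      = (∑' k : ℕ, (k:ℝ) * p k * (θ t * G0))
        - ∑' k : ℕ, (k:ℝ) * p k * (θ t * (ρ * J (k-1))) := by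
    rw [← hSummA.tsum_sub hSummB]
    exact tsum_congr heq
  have htsumA : (∑' k : ℕ, (k:ℝ) * p k * (θ t * G0))
      = (∑' k : ℕ, (k:ℝ) * p k) * (θ t * G0) := tsum_mul_right
  have htsumB : (∑' k : ℕ, (k:ℝ) * p k * (θ t * (ρ * J (k-1))))
      = (θ t * ρ) * ∑' k : ℕ, (k:ℝ) * p k * J (k-1) := by
    rw [← tsum_mul_left]
    exact tsum_congr (fun k => by ring)
  -- swap sum and integral
  have hswap : (∑' k : ℕ, (k:ℝ) * p k * J (k-1))
      = ∫ s in (0:ℝ)..t, (∑' k : ℕ, (k:ℝ) * p k * θ s ^ (k - 1))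
          * Real.exp (-(β+ρ)*(t-s)) := by
    have hFint : ∀ k : ℕ, MeasureTheory.IntegrableOn
        (fun s => (k:ℝ) * p k * (θ s ^ (k-1) * Real.exp (-(β+ρ)*(t-s))))
        (Set.Ioc 0 t) MeasureTheory.volume := by
      intro k
      apply MeasureTheory.IntegrableOn.mono_set _ Set.Ioc_subset_Icc_self
      apply ContinuousOn.integrableOn_Icc
      exact continuousOn_const.mul ((hθc.pow _).mul hEc.continuousOn)
    have hbound : ∀ k : ℕ, ∀ s ∈ Set.Ioc (0:ℝ) t,
        ‖(k:ℝ) * p k * (θ s ^ (k-1) * Real.exp (-(β+ρ)*(t-s)))‖ ≤ (k:ℝ) * p k := by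
      intro k s hs
      have hsIcc : s ∈ Set.Icc (0:ℝ) t := ⟨le_of_lt hs.1, hs.2⟩
      have hθs := hθmem s hsIcc.1
      have h1 : (0:ℝ) ≤ θ s ^ (k-1) := le_of_lt (pow_pos hθs.1 _)
      have h2 : θ s ^ (k-1) ≤ 1 := pow_le_one₀ (le_of_lt hθs.1) hθs.2
      have h3 := hEle s hsIcc
      have h4 := le_of_lt (hEpos s)
      rw [Real.norm_eq_abs, abs_of_nonneg (mul_nonneg (hkp k) (mul_nonneg h1 h4))]
      have h5 : θ s ^ (k-1) * Real.exp (-(β+ρ)*(t-s)) ≤ 1 := by nlinarith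
      nlinarith [mul_le_mul_of_nonneg_left h5 (hkp k)]
    have hnormint : ∀ k : ℕ,
        (∫ s in Set.Ioc (0:ℝ) t, ‖(k:ℝ) * p k * (θ s ^ (k-1) * Real.exp (-(β+ρ)*(t-s)))‖)
          ≤ (k:ℝ) * p k * t := by
      intro k
      have := MeasureTheory.setIntegral_mono_on (hFint k).norm
        (MeasureTheory.integrableOn_const measure_Ioc_lt_top.ne)
        measurableSet_Ioc (hbound k)
      calc (∫ s in Set.Ioc (0:ℝ) t, ‖(k:ℝ) * p k * (θ s ^ (k-1) * Real.exp (-(β+ρ)*(t-s)))‖)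
          ≤ ∫ _ in Set.Ioc (0:ℝ) t, (k:ℝ) * p k := this
        _ = (k:ℝ) * p k * t := by
            rw [MeasureTheory.setIntegral_const]
            simp [Real.volume_Ioc, ENNReal.toReal_ofReal ht]
            rw [max_eq_left ht]
            ring
    have hsummable_norm : Summable (fun k : ℕ =>
        ∫ s in Set.Ioc (0:ℝ) t, ‖(k:ℝ) * p k * (θ s ^ (k-1) * Real.exp (-(β+ρ)*(t-s)))‖) := by
      apply Summable.of_nonneg_of_le
        (fun k => MeasureTheory.integral_nonneg (fun s => norm_nonneg _)) hnormint
      exact hmeanSummable.mul_right t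
    have hswap0 := MeasureTheory.integral_tsum_of_summable_integral_norm
      (F := fun (k:ℕ) (s:ℝ) => (k:ℝ) * p k * (θ s ^ (k-1) * Real.exp (-(β+ρ)*(t-s))))
      (μ := MeasureTheory.volume.restrict (Set.Ioc 0 t)) (fun k => hFint k) hsummable_norm
    calc (∑' k : ℕ, (k:ℝ) * p k * J (k-1))
        = ∑' k : ℕ, ∫ s in Set.Ioc (0:ℝ) t,
            (k:ℝ) * p k * (θ s ^ (k-1) * Real.exp (-(β+ρ)*(t-s))) := by
          congr 1; funext k
          simp only [hJdef]
          rw [intervalIntegral.integral_of_le ht, ← MeasureTheory.integral_const_mul]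
      _ = ∫ s in Set.Ioc (0:ℝ) t, ∑' k : ℕ,
            (k:ℝ) * p k * (θ s ^ (k-1) * Real.exp (-(β+ρ)*(t-s))) := hswap0
      _ = ∫ s in (0:ℝ)..t, (∑' k : ℕ, (k:ℝ) * p k * θ s ^ (k - 1))
            * Real.exp (-(β+ρ)*(t-s)) := by
          rw [intervalIntegral.integral_of_le ht]
          congr 1; funext s
          rw [← tsum_mul_right]
          congr 1; funext k; ring
  -- pointwise value of the inner sum
  have hptwise : ∀ s ∈ Set.Icc (0:ℝ) t,
      αS * ∑' k : ℕ, (k:ℝ) * p k * θ s ^ (k - 1)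
        = μ / β * (deriv θ s + (β + ρ) * θ s) - (μR + μ * ρ / β) := by
    intro s hs
    set x := θ s with hx
    have hx0 : 0 < x := (hθmem s hs.1).1
    have hd : deriv θ s = -β * x * hI αS μ μR β ρ p x / hX μ x := (hθderiv s hs.1).deriv
    clear_value x
    have hxne : x ≠ 0 := ne_of_gt hx0
    have htsum : (∑' k : ℕ, (k:ℝ) * p k * x ^ k)
        = (∑' k : ℕ, (k:ℝ) * p k * x ^ (k - 1)) * x := by
      rw [← tsum_mul_right]
      congr 1
      funext k
      cases k with
      | zero => simp
      | succ m => simp [pow_succ]; ring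
    set A := ∑' k : ℕ, (k:ℝ) * p k * x ^ (k - 1) with hA
    clear_value A
    have hHS : hS αS p x = αS * (A * x) := by rw [hS, htsum]
    rw [hI, hHS, hX, hR] at hd
    have hden : μ * x ^ 2 ≠ 0 := by positivity
    rw [eq_div_iff hden] at hd
    have hbx : β * x ^ 2 ≠ 0 := by positivity
    have key : αS * A * (β * x ^ 2)
        = (μ / β * (deriv θ s + (β + ρ) * x) - (μR + μ * ρ / β)) * (β * x ^ 2) := by
      field_simp at hd ⊢
      linear_combination -hd
    exact mul_right_cancel₀ hbx key
  -- FTC computations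
  have hg1int : IntervalIntegrable (fun s => (deriv θ s + (β+ρ)*θ s)
      * Real.exp (-(β+ρ)*(t-s))) MeasureTheory.volume 0 t := by
    apply ContinuousOn.intervalIntegrable
    rw [hicc]
    exact (hθdc.add (continuousOn_const.mul hθc)).mul hEc.continuousOn
  have hg2int : IntervalIntegrable (fun s => Real.exp (-(β+ρ)*(t-s)))
      MeasureTheory.volume 0 t := hEc.intervalIntegrable 0 t
  have hftc1 : (∫ s in (0:ℝ)..t, (deriv θ s + (β+ρ)*θ s) * Real.exp (-(β+ρ)*(t-s)))
      = θ t - e := by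
    have := intervalIntegral.integral_eq_sub_of_hasDerivAt (a := (0:ℝ)) (b := t)
      (f := fun s => θ s * Real.exp (-(β+ρ)*(t-s)))
      (f' := fun s => (deriv θ s + (β+ρ)*θ s) * Real.exp (-(β+ρ)*(t-s)))
      (by
        intro s hs
        rw [hicc] at hs
        have := (hθhas s hs).mul (hEhas s)
        refine this.congr_deriv ?_
        ring)
      hg1int
    rw [this]
    simp [hθ0, hedef]
  have hftc2 : (∫ s in (0:ℝ)..t, Real.exp (-(β+ρ)*(t-s))) = (1 - e) / (β+ρ) := by
    have := intervalIntegral.integral_eq_sub_of_hasDerivAt (a := (0:ℝ)) (b := t)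
      (f := fun s => Real.exp (-(β+ρ)*(t-s)) / (β+ρ))
      (f' := fun s => Real.exp (-(β+ρ)*(t-s)))
      (by
        intro s _
        have := (hEhas s).div_const (β+ρ)
        refine this.congr_deriv ?_
        field_simp)
      hg2int
    rw [this]
    simp [hedef]
    ring
  -- evaluate αS times the integral of the inner sum
  have hIV : αS * (∫ s in (0:ℝ)..t, (∑' k : ℕ, (k:ℝ) * p k * θ s ^ (k - 1))
        * Real.exp (-(β+ρ)*(t-s)))
      = μ / β * (θ t - e) - (μR + μ * ρ / β) * ((1 - e) / (β+ρ)) := by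
    rw [← intervalIntegral.integral_const_mul]
    have hcongr : (∫ s in (0:ℝ)..t, αS * ((∑' k : ℕ, (k:ℝ) * p k * θ s ^ (k - 1))
          * Real.exp (-(β+ρ)*(t-s))))
        = ∫ s in (0:ℝ)..t, (μ / β * (deriv θ s + (β + ρ) * θ s) - (μR + μ * ρ / β))
          * Real.exp (-(β+ρ)*(t-s)) := by
      apply intervalIntegral.integral_congr
      intro s hs
      rw [hicc] at hs
      dsimp only
      rw [← mul_assoc, hptwise s hs]
    rw [hcongr]
    have hsplit : (∫ s in (0:ℝ)..t, (μ / β * (deriv θ s + (β + ρ) * θ s) - (μR + μ * ρ / β))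
          * Real.exp (-(β+ρ)*(t-s)))
        = μ / β * (∫ s in (0:ℝ)..t, (deriv θ s + (β+ρ)*θ s) * Real.exp (-(β+ρ)*(t-s)))
          - (μR + μ * ρ / β) * ∫ s in (0:ℝ)..t, Real.exp (-(β+ρ)*(t-s)) := by
      rw [← intervalIntegral.integral_const_mul, ← intervalIntegral.integral_const_mul,
        ← intervalIntegral.integral_sub ((hg1int.const_mul _)) ((hg2int.const_mul _))]
      congr 1; funext s; ring
    rw [hsplit, hftc1, hftc2]
  -- final assembly
  rw [htsum1, htsumA, htsumB, hswap]
  have hL : αS * ((∑' k : ℕ, (k:ℝ) * p k) * (θ t * G0) - (θ t * ρ)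
        * ∫ s in (0:ℝ)..t, (∑' k : ℕ, (k:ℝ) * p k * θ s ^ (k - 1))
          * Real.exp (-(β+ρ)*(t-s)))
      = μS * (θ t * G0) - (θ t * ρ) * (μ / β * (θ t - e) - (μR + μ * ρ / β) * ((1 - e) / (β+ρ))) := by
    rw [mul_sub, hμSdef]
    have : αS * ((θ t * ρ) * ∫ s in (0:ℝ)..t, (∑' k : ℕ, (k:ℝ) * p k * θ s ^ (k - 1))
          * Real.exp (-(β+ρ)*(t-s)))
        = (θ t * ρ) * (αS * ∫ s in (0:ℝ)..t, (∑' k : ℕ, (k:ℝ) * p k * θ s ^ (k - 1))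
          * Real.exp (-(β+ρ)*(t-s))) := by ring
    rw [this, hIV]
    ring
  rw [hL]
  have hμI' : μI = μ - μS - μR := by linarith
  rw [hμI', hG0def]
  field_simp
  ring
end

section
/- Define h̃_I(t) = μ_I θ_t e^{−(β+ρ)t} + α_S θ_t Σ_{k≥1} k p_k (−∫_0^t (d/ds θ_s^{k−1}) e^{−(β+ρ)(t−s)} ds). Then for every t ≥ 0 the series defining h̃_I(t) converges and h̃_I(t) = h_I(θ_t). -/
open scoped BigOperators
open Real

theorem stmt9
    (β ρ μ μS μI μR αS : ℝ) (p : ℕ → ℝ) (θ : ℝ → ℝ)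
    (hβ : 0 < β) (hρ : 0 ≤ ρ) (hμ : 0 < μ)
    (hμS : 0 ≤ μS) (hμI : 0 ≤ μI) (hμR : 0 ≤ μR)
    (hμsum : μS + μI + μR = μ)
    (hαS : αS ∈ Set.Ioc (0 : ℝ) 1)
    (hp : ∀ k, 0 ≤ p k)
    (hpsummable : Summable p)
    (hpsum : ∑' k : ℕ, p k = 1)
    (hmeanSummable : Summable (fun k : ℕ => (k : ℝ) * p k))
    (hmeanPos : 0 < ∑' k : ℕ, (k : ℝ) * p k)
    (hμSdef : μS = αS * ∑' k : ℕ, (k : ℝ) * p k)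
    (hθ0 : θ 0 = 1)
    (hθmem : ∀ t, 0 ≤ t → θ t ∈ Set.Ioc (0 : ℝ) 1)
    (hθderiv : ∀ t, 0 ≤ t →
      HasDerivAt θ (-β * θ t * hI αS μ μR β ρ p (θ t) / hX μ (θ t)) t)
    (t : ℝ) (ht : 0 ≤ t) :
    Summable (fun k : ℕ => (k : ℝ) * p k *
      -∫ s in (0 : ℝ)..t,
          deriv (fun u => θ u ^ (k - 1)) s * Real.exp (-(β + ρ) * (t - s))) ∧
    μI * θ t * Real.exp (-(β + ρ) * t) +
        αS * θ t * ∑' k : ℕ, (k : ℝ) * p k *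
          -∫ s in (0 : ℝ)..t,
              deriv (fun u => θ u ^ (k - 1)) s * Real.exp (-(β + ρ) * (t - s)) =
      hI αS μ μR β ρ p (θ t) := by
  obtain ⟨hαS0, hαS1⟩ := hαS
  set L := ∑' k : ℕ, (k : ℝ) * p k with hL_def
  set c := β + ρ with hc_def
  have hc : 0 < c := by rw [hc_def]; linarith
  have hθpos : ∀ s, 0 ≤ s → 0 < θ s := fun s hs => (hθmem s hs).1
  have hθle : ∀ s, 0 ≤ s → θ s ≤ 1 := fun s hs => (hθmem s hs).2
  have hθabs : ∀ s, 0 ≤ s → ∀ n : ℕ, |θ s ^ n| ≤ 1 := by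
    intro s hs n
    rw [abs_pow]
    exact pow_le_one₀ (abs_nonneg _) (abs_le.2 ⟨by linarith [hθpos s hs], hθle s hs⟩)
  have hθcont : ContinuousOn θ (Set.Ici 0) := fun s hs =>
    ((hθderiv s hs).continuousAt).continuousWithinAt
  set T : ℝ → ℝ := fun s => ∑' k : ℕ, (k : ℝ) * p k * θ s ^ (k - 1) with hT_def
  have hbound : ∀ (k : ℕ) (s : ℝ), s ∈ Set.Ici (0 : ℝ) →
      ‖(k : ℝ) * p k * θ s ^ (k - 1)‖ ≤ (k : ℝ) * p k := by
    intro k s hs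
    have h1 := hθabs s hs (k - 1)
    have hk : (0 : ℝ) ≤ (k : ℝ) * p k := mul_nonneg (Nat.cast_nonneg k) (hp k)
    rw [Real.norm_eq_abs, abs_mul, abs_of_nonneg hk]
    exact mul_le_of_le_one_right hk h1
  have hTsummable : ∀ s, 0 ≤ s → Summable (fun k : ℕ => (k : ℝ) * p k * θ s ^ (k - 1)) :=
    fun s hs => Summable.of_norm_bounded hmeanSummable (fun k => hbound k s hs)
  have hTcont : ContinuousOn T (Set.Ici 0) := by
    apply TendstoUniformlyOn.continuousOn
      (tendstoUniformlyOn_tsum hmeanSummable (fun k s hs => hbound k s hs))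
    refine Filter.Frequently.of_forall fun N => ?_
    exact continuousOn_finset_sum _ fun k _ => continuousOn_const.mul (hθcont.pow _)
  have hS_eq : ∀ s, 0 ≤ s → hS αS p (θ s) = αS * (θ s * T s) := by
    intro s hs
    rw [hS, hT_def]
    congr 1
    rw [← tsum_mul_left]
    apply tsum_congr
    intro k
    cases k with
    | zero => simp
    | succ n =>
        simp only [Nat.succ_sub_one]
        rw [pow_succ]
        ring
  set θd : ℝ → ℝ := fun s => -β * θ s * hI αS μ μR β ρ p (θ s) / hX μ (θ s) with hθd_def
  have hθd : ∀ s, 0 ≤ s → HasDerivAt θ (θd s) s := fun s hs => by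
    simpa [hθd_def] using hθderiv s hs
  have hIθ : ∀ s, 0 ≤ s → hI αS μ μR β ρ p (θ s)
      = μ * θ s ^ 2 - αS * (θ s * T s) - (μR * θ s + μ * ρ / β * (θ s * (1 - θ s))) := by
    intro s hs
    rw [hI, hX, hR, hS_eq s hs]
  have hθd_eq : ∀ s, 0 ≤ s → θd s
      = -β * θ s * (μ * θ s ^ 2 - αS * (θ s * T s)
          - (μR * θ s + μ * ρ / β * (θ s * (1 - θ s)))) / (μ * θ s ^ 2) := by
    intro s hs
    rw [hθd_def]
    simp only
    rw [hIθ s hs, hX]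
  have hθdcont : ContinuousOn θd (Set.Ici 0) := by
    have hcont1 : ContinuousOn (fun s => μ * θ s ^ 2 - αS * (θ s * T s)
        - (μR * θ s + μ * ρ / β * (θ s * (1 - θ s)))) (Set.Ici 0) :=
      ((continuousOn_const.mul (hθcont.pow 2)).sub
        (continuousOn_const.mul (hθcont.mul hTcont))).sub
        ((continuousOn_const.mul hθcont).add
          (continuousOn_const.mul (hθcont.mul (continuousOn_const.sub hθcont))))
    have hcont2 : ContinuousOn (fun s => -β * θ s * (μ * θ s ^ 2 - αS * (θ s * T s)
        - (μR * θ s + μ * ρ / β * (θ s * (1 - θ s)))) / (μ * θ s ^ 2)) (Set.Ici 0) := by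
      apply ContinuousOn.div (((continuousOn_const.mul hθcont).mul hcont1))
        (continuousOn_const.mul (hθcont.pow 2))
      intro s hs
      have := hθpos s hs
      exact mul_ne_zero hμ.ne' (pow_ne_zero _ this.ne')
    exact hcont2.congr hθd_eq
  have hpowd : ∀ (n : ℕ) (s : ℝ), 0 ≤ s →
      HasDerivAt (fun u => θ u ^ n) ((n : ℝ) * θ s ^ (n - 1) * θd s) s :=
    fun n s hs => (hθd s hs).pow n
  have hderiv_eq : ∀ (n : ℕ) (s : ℝ), 0 ≤ s →
      deriv (fun u => θ u ^ n) s = (n : ℝ) * θ s ^ (n - 1) * θd s :=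
    fun n s hs => (hpowd n s hs).deriv
  have hexpd : ∀ s : ℝ,
      HasDerivAt (fun u => Real.exp (-c * (t - u))) (Real.exp (-c * (t - s)) * c) s := by
    intro s
    have h1 : HasDerivAt (fun u : ℝ => -c * (t - u)) c s := by
      have := ((hasDerivAt_id s).const_sub t).const_mul (-c)
      simpa using this
    exact h1.exp
  have huIcc : Set.uIcc (0 : ℝ) t = Set.Icc 0 t := Set.uIcc_of_le ht
  have hIccIci : Set.Icc (0 : ℝ) t ⊆ Set.Ici 0 := fun s hs => hs.1
  have hEcont : Continuous fun s : ℝ => Real.exp (-c * (t - s)) :=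
    Real.continuous_exp.comp (continuous_const.mul (continuous_const.sub continuous_id))
  -- integration by parts
  have hparts : ∀ n : ℕ,
      (∫ s in (0 : ℝ)..t, deriv (fun u => θ u ^ n) s * Real.exp (-c * (t - s)))
        = θ t ^ n - Real.exp (-c * t)
          - c * ∫ s in (0 : ℝ)..t, θ s ^ n * Real.exp (-c * (t - s)) := by
    intro n
    have hdc : ContinuousOn (fun s => deriv (fun u => θ u ^ n) s * Real.exp (-c * (t - s)))
        (Set.Icc 0 t) := by
      apply ContinuousOn.mul _ hEcont.continuousOn
      apply ContinuousOn.congr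
        (((continuousOn_const.mul (((hθcont.mono hIccIci)).pow (n - 1)))).mul
          (hθdcont.mono hIccIci))
      intro s hs
      exact hderiv_eq n s hs.1
    have hgc : ContinuousOn (fun s => θ s ^ n * Real.exp (-c * (t - s))) (Set.Icc 0 t) :=
      ((hθcont.mono hIccIci).pow n).mul hEcont.continuousOn
    have hint1 : IntervalIntegrable
        (fun s => deriv (fun u => θ u ^ n) s * Real.exp (-c * (t - s)))
        MeasureTheory.volume 0 t :=
      ContinuousOn.intervalIntegrable (by rw [huIcc]; exact hdc)
    have hint2 : IntervalIntegrable (fun s => c * (θ s ^ n * Real.exp (-c * (t - s))))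
        MeasureTheory.volume 0 t :=
      ContinuousOn.intervalIntegrable (by rw [huIcc]; exact continuousOn_const.mul hgc)
    have key : (∫ s in (0 : ℝ)..t, (deriv (fun u => θ u ^ n) s * Real.exp (-c * (t - s))
          + c * (θ s ^ n * Real.exp (-c * (t - s)))))
        = θ t ^ n - Real.exp (-c * t) := by
      have hft := intervalIntegral.integral_eq_sub_of_hasDerivAt (a := 0) (b := t)
        (f := fun s => θ s ^ n * Real.exp (-c * (t - s)))
        (f' := fun s => deriv (fun u => θ u ^ n) s * Real.exp (-c * (t - s))
          + c * (θ s ^ n * Real.exp (-c * (t - s))))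
        (fun s hs => by
          rw [huIcc] at hs
          have h := (hpowd n s hs.1).fun_mul (hexpd s)
          show HasDerivAt (fun z => θ z ^ n * Real.exp (-c * (t - z)))
            (deriv (fun u => θ u ^ n) s * Real.exp (-c * (t - s))
              + c * (θ s ^ n * Real.exp (-c * (t - s)))) s
          rw [hderiv_eq n s hs.1]
          refine h.congr_deriv ?_
          ring)
        (hint1.add hint2)
      rw [hft]
      simp [hθ0, Real.exp_zero]
    rw [intervalIntegral.integral_add hint1 hint2, intervalIntegral.integral_const_mul] at key
    linarith [key]
  -- the J integrals and their bound
  set Jn : ℕ → ℝ := fun n => ∫ s in (0 : ℝ)..t, θ s ^ n * Real.exp (-c * (t - s)) with hJn_def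
  have hJb : ∀ n : ℕ, |Jn n| ≤ t := by
    intro n
    have hb : ∀ x ∈ Set.uIoc (0 : ℝ) t, ‖θ x ^ n * Real.exp (-c * (t - x))‖ ≤ 1 := by
      intro x hx
      rw [Set.uIoc_of_le ht] at hx
      have hx0 : (0 : ℝ) ≤ x := le_of_lt hx.1
      have h1 := hθabs x hx0 n
      have h2 : Real.exp (-c * (t - x)) ≤ 1 :=
        Real.exp_le_one_iff.mpr (by nlinarith [hx.2])
      rw [Real.norm_eq_abs, abs_mul, abs_of_pos (Real.exp_pos _)]
      calc |θ x ^ n| * Real.exp (-c * (t - x)) ≤ 1 * 1 :=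
            mul_le_mul h1 h2 (Real.exp_pos _).le zero_le_one
        _ = 1 := mul_one 1
    have := intervalIntegral.norm_integral_le_of_norm_le_const (C := 1) hb
    rw [hJn_def]
    simpa [abs_of_nonneg ht] using this
  have hterm : ∀ k : ℕ,
      (-∫ s in (0 : ℝ)..t, deriv (fun u => θ u ^ (k - 1)) s * Real.exp (-c * (t - s)))
      = Real.exp (-c * t) - θ t ^ (k - 1) + c * Jn (k - 1) := by
    intro k
    rw [hparts (k - 1), hJn_def]
    ring
  have hfun : (fun k : ℕ => (k : ℝ) * p k *
      -∫ s in (0 : ℝ)..t, deriv (fun u => θ u ^ (k - 1)) s * Real.exp (-c * (t - s)))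
      = fun k : ℕ => (k : ℝ) * p k * (Real.exp (-c * t) - θ t ^ (k - 1) + c * Jn (k - 1)) :=
    funext fun k => by rw [hterm k]
  have hexpl1 : Real.exp (-c * t) ≤ 1 := Real.exp_le_one_iff.mpr (by nlinarith)
  have hsummable : Summable (fun k : ℕ =>
      (k : ℝ) * p k * (Real.exp (-c * t) - θ t ^ (k - 1) + c * Jn (k - 1))) := by
    refine Summable.of_norm_bounded (g := fun k : ℕ => (2 + c * t) * ((k : ℝ) * p k))
      (hmeanSummable.mul_left _) ?_
    intro k
    have hk : (0 : ℝ) ≤ (k : ℝ) * p k := mul_nonneg (Nat.cast_nonneg k) (hp k)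
    rw [Real.norm_eq_abs, abs_mul, abs_of_nonneg hk]
    have h2 : |Real.exp (-c * t) - θ t ^ (k - 1) + c * Jn (k - 1)| ≤ 2 + c * t := by
      have e1 : |Real.exp (-c * t)| ≤ 1 := by
        rw [abs_of_pos (Real.exp_pos _)]; exact hexpl1
      have e2 := hθabs t ht (k - 1)
      have e3 := hJb (k - 1)
      calc |Real.exp (-c * t) - θ t ^ (k - 1) + c * Jn (k - 1)|
          ≤ |Real.exp (-c * t) - θ t ^ (k - 1)| + |c * Jn (k - 1)| := abs_add_le _ _
        _ ≤ (|Real.exp (-c * t)| + |θ t ^ (k - 1)|) + c * |Jn (k - 1)| := by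
            rw [abs_mul, abs_of_pos hc]
            exact add_le_add (abs_sub _ _) le_rfl
        _ ≤ (1 + 1) + c * t := by
            have := mul_le_mul_of_nonneg_left e3 hc.le
            gcongr
        _ = 2 + c * t := by ring
    calc (k : ℝ) * p k * |Real.exp (-c * t) - θ t ^ (k - 1) + c * Jn (k - 1)|
        ≤ (k : ℝ) * p k * (2 + c * t) := mul_le_mul_of_nonneg_left h2 hk
      _ = (2 + c * t) * ((k : ℝ) * p k) := by ring
  refine ⟨by rw [hfun]; exact hsummable, ?_⟩
  -- summabilities of the pieces
  have hsumθ : Summable (fun k : ℕ => (k : ℝ) * p k * θ t ^ (k - 1)) := hTsummable t ht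
  have hsumJ : Summable (fun k : ℕ => (k : ℝ) * p k * Jn (k - 1)) := by
    refine Summable.of_norm_bounded (g := fun k : ℕ => ((k : ℝ) * p k) * t) (hmeanSummable.mul_right t) ?_
    intro k
    have hk : (0 : ℝ) ≤ (k : ℝ) * p k := mul_nonneg (Nat.cast_nonneg k) (hp k)
    rw [Real.norm_eq_abs, abs_mul, abs_of_nonneg hk]
    exact mul_le_mul_of_nonneg_left (hJb (k - 1)) hk
  have htsum :
      (∑' k : ℕ, (k : ℝ) * p k * (Real.exp (-c * t) - θ t ^ (k - 1) + c * Jn (k - 1)))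
        = Real.exp (-c * t) * L - T t + c * ∑' k : ℕ, (k : ℝ) * p k * Jn (k - 1) := by
    have h1 : (fun k : ℕ => (k : ℝ) * p k * (Real.exp (-c * t) - θ t ^ (k - 1) + c * Jn (k - 1)))
        = fun k : ℕ => ((k : ℝ) * p k * Real.exp (-c * t) - (k : ℝ) * p k * θ t ^ (k - 1))
            + c * ((k : ℝ) * p k * Jn (k - 1)) := by
      funext k; ring
    rw [h1, Summable.tsum_add ((hmeanSummable.mul_right _).sub hsumθ) (hsumJ.mul_left c),
      Summable.tsum_sub (hmeanSummable.mul_right _) hsumθ, tsum_mul_right, tsum_mul_left]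
    rw [hT_def, hL_def]
    ring
  -- interchange of sum and integral
  have hIoc : ∀ k : ℕ, MeasureTheory.IntegrableOn
      (fun s => (k : ℝ) * p k * (θ s ^ (k - 1) * Real.exp (-c * (t - s))))
      (Set.Ioc 0 t) MeasureTheory.volume := by
    intro k
    have : ContinuousOn (fun s => (k : ℝ) * p k * (θ s ^ (k - 1) * Real.exp (-c * (t - s))))
        (Set.Icc 0 t) :=
      continuousOn_const.mul (((hθcont.mono hIccIci).pow _).mul hEcont.continuousOn)
    exact (this.integrableOn_Icc).mono_set Set.Ioc_subset_Icc_self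
  have hinter : (∑' k : ℕ, (k : ℝ) * p k * Jn (k - 1))
      = ∫ s in (0 : ℝ)..t, T s * Real.exp (-c * (t - s)) := by
    have h0 : ∀ k : ℕ, (k : ℝ) * p k * Jn (k - 1)
        = ∫ s in Set.Ioc (0 : ℝ) t, (k : ℝ) * p k * (θ s ^ (k - 1) * Real.exp (-c * (t - s))) := by
      intro k
      rw [hJn_def]
      simp only
      rw [intervalIntegral.integral_of_le ht, MeasureTheory.integral_const_mul]
    have hSum : Summable (fun k : ℕ =>
        ∫ s in Set.Ioc (0 : ℝ) t, ‖(k : ℝ) * p k * (θ s ^ (k - 1) * Real.exp (-c * (t - s)))‖) := by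
      apply Summable.of_nonneg_of_le
        (fun k => MeasureTheory.integral_nonneg (fun s => norm_nonneg _))
        (fun k => ?_) (hmeanSummable.mul_right t)
      have hle : ∀ s ∈ Set.Ioc (0 : ℝ) t,
          ‖(k : ℝ) * p k * (θ s ^ (k - 1) * Real.exp (-c * (t - s)))‖ ≤ (k : ℝ) * p k := by
        intro s hs
        have hs0 : (0 : ℝ) ≤ s := hs.1.le
        have hk : (0 : ℝ) ≤ (k : ℝ) * p k := mul_nonneg (Nat.cast_nonneg k) (hp k)
        have h1 := hθabs s hs0 (k - 1)
        have h2 : Real.exp (-c * (t - s)) ≤ 1 :=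
          Real.exp_le_one_iff.mpr (by nlinarith [hs.2])
        rw [Real.norm_eq_abs, abs_mul, abs_of_nonneg hk, abs_mul,
          abs_of_pos (Real.exp_pos _)]
        apply mul_le_of_le_one_right hk
        calc |θ s ^ (k - 1)| * Real.exp (-c * (t - s)) ≤ 1 * 1 :=
              mul_le_mul h1 h2 (Real.exp_pos _).le zero_le_one
          _ = 1 := mul_one 1
      calc (∫ s in Set.Ioc (0 : ℝ) t, ‖(k : ℝ) * p k * (θ s ^ (k - 1) * Real.exp (-c * (t - s)))‖)
          ≤ ∫ _ in Set.Ioc (0 : ℝ) t, (k : ℝ) * p k :=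
            MeasureTheory.setIntegral_mono_on ((hIoc k).norm) (MeasureTheory.integrable_const _)
              measurableSet_Ioc hle
        _ = (k : ℝ) * p k * t := by
            rw [MeasureTheory.setIntegral_const, Real.volume_real_Ioc, smul_eq_mul,
              max_eq_left (by linarith)]
            ring
    calc (∑' k : ℕ, (k : ℝ) * p k * Jn (k - 1))
        = ∑' k : ℕ, ∫ s in Set.Ioc (0 : ℝ) t,
            (k : ℝ) * p k * (θ s ^ (k - 1) * Real.exp (-c * (t - s))) := tsum_congr h0
      _ = ∫ s in Set.Ioc (0 : ℝ) t,
            ∑' k : ℕ, (k : ℝ) * p k * (θ s ^ (k - 1) * Real.exp (-c * (t - s))) :=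
          MeasureTheory.integral_tsum_of_summable_integral_norm hIoc hSum
      _ = ∫ s in Set.Ioc (0 : ℝ) t, T s * Real.exp (-c * (t - s)) := by
          apply MeasureTheory.setIntegral_congr_fun measurableSet_Ioc
          intro s hs
          have hs0 : (0 : ℝ) ≤ s := hs.1.le
          have h1 : (fun k : ℕ => (k : ℝ) * p k * (θ s ^ (k - 1) * Real.exp (-c * (t - s))))
              = fun k : ℕ => ((k : ℝ) * p k * θ s ^ (k - 1)) * Real.exp (-c * (t - s)) := by
            funext k; ring
          simp only [h1]
          rw [tsum_mul_right, hT_def]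
      _ = ∫ s in (0 : ℝ)..t, T s * Real.exp (-c * (t - s)) :=
          (intervalIntegral.integral_of_le ht).symm
  -- main FTC
  set f : ℝ → ℝ := fun s => Real.exp (c * s) * (μ * θ s - μR - μ * ρ / β * (1 - θ s))
    with hf_def
  have hfd : ∀ s, 0 ≤ s → HasDerivAt f (c * (αS * T s) * Real.exp (c * s)) s := by
    intro s hs
    have h1 : HasDerivAt (fun u : ℝ => Real.exp (c * u)) (Real.exp (c * s) * c) s := by
      simpa using (((hasDerivAt_id s).const_mul c)).exp
    have h2 : HasDerivAt (fun u => μ * θ u - μR - μ * ρ / β * (1 - θ u))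
        (μ * θd s - μ * ρ / β * (-θd s)) s :=
      ((((hθd s hs).const_mul μ).sub_const μR)).sub (((hθd s hs).const_sub 1).const_mul (μ * ρ / β))
    have h := h1.fun_mul h2
    rw [hf_def]
    refine h.congr_deriv ?_
    rw [hθd_eq s hs]
    have hθs := hθpos s hs
    have h3 : θ s ≠ 0 := ne_of_gt hθs
    have h4 : μ ≠ 0 := ne_of_gt hμ
    have h5 : β ≠ 0 := ne_of_gt hβ
    rw [hc_def]
    field_simp
    ring
  have hfc : ContinuousOn (fun s => c * (αS * T s) * Real.exp (c * s)) (Set.Icc 0 t) := by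
    apply ContinuousOn.mul
      (continuousOn_const.mul (continuousOn_const.mul (hTcont.mono hIccIci)))
    exact (Real.continuous_exp.comp (continuous_const.mul continuous_id)).continuousOn
  have hFTC : (∫ s in (0 : ℝ)..t, c * (αS * T s) * Real.exp (c * s)) = f t - (μ - μR) := by
    have hft := intervalIntegral.integral_eq_sub_of_hasDerivAt (a := 0) (b := t)
      (f := f) (f' := fun s => c * (αS * T s) * Real.exp (c * s))
      (fun s hs => hfd s (by rw [huIcc] at hs; exact hs.1))
      (ContinuousOn.intervalIntegrable (by rw [huIcc]; exact hfc))
    rw [hft, hf_def]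
    simp [hθ0]
  have hkey : c * αS * (∫ s in (0 : ℝ)..t, T s * Real.exp (-c * (t - s)))
      = Real.exp (-c * t) * (f t - (μ - μR)) := by
    rw [← hFTC, ← intervalIntegral.integral_const_mul, ← intervalIntegral.integral_const_mul]
    apply intervalIntegral.integral_congr
    intro s _
    simp only
    rw [show -c * (t - s) = -c * t + c * s by ring, Real.exp_add]
    ring
  have hexp1 : Real.exp (-c * t) * Real.exp (c * t) = 1 := by
    rw [← Real.exp_add]; simp
  have hfinal : αS * θ t * (c * ∫ s in (0 : ℝ)..t, T s * Real.exp (-c * (t - s)))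
      = θ t * (μ * θ t - μR - μ * ρ / β * (1 - θ t))
        - θ t * Real.exp (-c * t) * (μ - μR) := by
    have h := hkey
    rw [hf_def] at h
    simp only at h
    calc αS * θ t * (c * ∫ s in (0 : ℝ)..t, T s * Real.exp (-c * (t - s)))
        = θ t * (c * αS * ∫ s in (0 : ℝ)..t, T s * Real.exp (-c * (t - s))) := by ring
      _ = θ t * (Real.exp (-c * t)
          * (Real.exp (c * t) * (μ * θ t - μR - μ * ρ / β * (1 - θ t)) - (μ - μR))) := by
          rw [h]
      _ = θ t * (μ * θ t - μR - μ * ρ / β * (1 - θ t)) * (Real.exp (-c * t) * Real.exp (c * t))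
          - θ t * Real.exp (-c * t) * (μ - μR) := by ring
      _ = _ := by rw [hexp1]; ring
  have hts : (∑' k : ℕ, (k : ℝ) * p k *
      -∫ s in (0 : ℝ)..t, deriv (fun u => θ u ^ (k - 1)) s * Real.exp (-c * (t - s)))
      = Real.exp (-c * t) * L - T t + c * ∑' k : ℕ, (k : ℝ) * p k * Jn (k - 1) := by
    rw [hfun]; exact htsum
  rw [hts, hinter, hIθ t ht]
  linear_combination hfinal + (θ t * Real.exp (-c * t)) * hμsum
    - (θ t * Real.exp (-c * t)) * hμSdef
end

section
/- Let α_I ≥ 0 and let v_I : [0,∞) → ℝ be differentiable with v_I(0) = α_I and dv_I/dt = β h_I(θ_t) h_S(θ_t)/h_X(θ_t) − ρ v_I(t) for all t ≥ 0. Then for every t ≥ 0, v_I(t) = α_I e^{−ρt} − ∫_0^t (d/ds v_S(θ_s)) e^{−ρ(t−s)} ds, where d/ds v_S(θ_s) denotes the derivative of the composite function s ↦ v_S(θ_s). -/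
open Real

lemma aux_summable {q : ℕ → ℝ} (hq : Summable q) {x : ℝ} (hx : |x| ≤ 1) :
    Summable (fun k : ℕ => q k * x ^ k) := by
  apply Summable.of_norm_bounded hq.abs
  intro k
  rw [norm_mul, norm_pow, Real.norm_eq_abs, Real.norm_eq_abs]
  calc |q k| * |x| ^ k ≤ |q k| * 1 := by
        gcongr
        exact pow_le_one₀ (abs_nonneg x) hx
    _ = |q k| := mul_one _

lemma aux_summable' {q : ℕ → ℝ} (hq : Summable q) {x : ℝ} (hx : |x| ≤ 1) :
    Summable (fun k : ℕ => q k * x ^ (k - 1)) := by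
  apply Summable.of_norm_bounded hq.abs
  intro k
  rw [norm_mul, norm_pow, Real.norm_eq_abs, Real.norm_eq_abs]
  calc |q k| * |x| ^ (k - 1) ≤ |q k| * 1 := by
        gcongr
        exact pow_le_one₀ (abs_nonneg x) hx
    _ = |q k| := mul_one _

lemma aux_hasDerivAt {p : ℕ → ℝ} (hp0 : ∀ k, 0 ≤ p k) (hp1 : Summable p) (hp2 : Summable fun k : ℕ => (k : ℝ) * p k)
    {x : ℝ} (hx : x ∈ Set.Ioo (-1 : ℝ) 1) :
    HasDerivAt (fun y : ℝ => ∑' k : ℕ, p k * y ^ k) (∑' k : ℕ, (k : ℝ) * p k * x ^ (k - 1)) x := by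
  have h := hasDerivAt_tsum_of_isPreconnected (u := fun k : ℕ => (k : ℝ) * p k)
      (g := fun (k : ℕ) (y : ℝ) => p k * y ^ k)
      (g' := fun (k : ℕ) (y : ℝ) => p k * ((k : ℝ) * y ^ (k - 1)))
      (t := Set.Ioo (-1 : ℝ) 1) (y₀ := 0) hp2 isOpen_Ioo (convex_Ioo _ _).isPreconnected
      (fun k y _ => (hasDerivAt_pow k y).const_mul (p k))
      ?_ (by norm_num) ?_ hx
  · have e : ∀ k : ℕ, p k * ((k : ℝ) * x ^ (k - 1)) = (k : ℝ) * p k * x ^ (k - 1) :=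
      fun k => by ring
    exact tsum_congr e ▸ h
  · intro k y hy
    have hy1 : |y| ≤ 1 := by
      rw [abs_le]; exact ⟨hy.1.le, hy.2.le⟩
    rw [norm_mul, norm_mul, norm_pow, Real.norm_eq_abs, Real.norm_eq_abs, Real.norm_eq_abs]
    rw [abs_of_nonneg (hp0 k), abs_of_nonneg (Nat.cast_nonneg k)]
    have h1 : |y| ^ (k - 1) ≤ 1 := pow_le_one₀ (abs_nonneg y) hy1
    have h2 := hp0 k
    have h3 : (0 : ℝ) ≤ (k : ℝ) := Nat.cast_nonneg k
    show p k * ((k : ℝ) * |y| ^ (k - 1)) ≤ (k : ℝ) * p k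
    nlinarith [mul_nonneg (mul_nonneg h2 h3) (sub_nonneg.mpr h1)]
  · exact aux_summable hp1 (by norm_num)

lemma aux_id {p : ℕ → ℝ} (x : ℝ) :
    ∑' k : ℕ, (k : ℝ) * p k * x ^ k = x * ∑' k : ℕ, (k : ℝ) * p k * x ^ (k - 1) := by
  rw [← tsum_mul_left]
  apply tsum_congr
  intro k
  cases k with
  | zero => simp
  | succ n =>
    rw [Nat.succ_sub_one, pow_succ]
    ring

lemma aux_pow_lip {x y : ℝ} (hx : x ∈ Set.Icc (0 : ℝ) 1) (hy : y ∈ Set.Icc (0 : ℝ) 1) (k : ℕ) :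
    |x ^ k - y ^ k| ≤ (k : ℝ) * |x - y| := by
  rw [← geom_sum₂_mul, abs_mul]
  have hb : |∑ i ∈ Finset.range k, x ^ i * y ^ (k - 1 - i)| ≤ (k : ℝ) := by
    calc |∑ i ∈ Finset.range k, x ^ i * y ^ (k - 1 - i)|
        ≤ ∑ i ∈ Finset.range k, |x ^ i * y ^ (k - 1 - i)| := Finset.abs_sum_le_sum_abs _ _
      _ ≤ ∑ _i ∈ Finset.range k, (1 : ℝ) := by
          apply Finset.sum_le_sum
          intro i _
          rw [abs_mul, abs_pow, abs_pow, abs_of_nonneg hx.1, abs_of_nonneg hy.1]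
          exact mul_le_one₀ (pow_le_one₀ hx.1 hx.2) (pow_nonneg hy.1 _) (pow_le_one₀ hy.1 hy.2)
      _ = (k : ℝ) := by simp
  exact mul_le_mul_of_nonneg_right hb (abs_nonneg _)

lemma aux_lip {p : ℕ → ℝ} (hp0 : ∀ k, 0 ≤ p k) (hp1 : Summable p)
    (hp2 : Summable fun k : ℕ => (k : ℝ) * p k)
    {x y : ℝ} (hx : x ∈ Set.Icc (0 : ℝ) 1) (hy : y ∈ Set.Icc (0 : ℝ) 1) :
    |(∑' k : ℕ, p k * x ^ k) - ∑' k : ℕ, p k * y ^ k| ≤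
      (∑' k : ℕ, (k : ℝ) * p k) * |x - y| := by
  have hax : |x| ≤ 1 := by rw [abs_le]; constructor <;> [linarith [hx.1]; exact hx.2]
  have hay : |y| ≤ 1 := by rw [abs_le]; constructor <;> [linarith [hy.1]; exact hy.2]
  rw [← Summable.tsum_sub (aux_summable hp1 hax) (aux_summable hp1 hay)]
  have hbound : ∀ k : ℕ, ‖p k * x ^ k - p k * y ^ k‖ ≤ (k : ℝ) * p k * |x - y| := by
    intro k
    rw [← mul_sub, Real.norm_eq_abs, abs_mul, abs_of_nonneg (hp0 k)]
    calc p k * |x ^ k - y ^ k| ≤ p k * ((k : ℝ) * |x - y|) :=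
          mul_le_mul_of_nonneg_left (aux_pow_lip hx hy k) (hp0 k)
      _ = (k : ℝ) * p k * |x - y| := by ring
  have hsum2 : Summable fun k : ℕ => (k : ℝ) * p k * |x - y| := hp2.mul_right _
  have hsumn : Summable fun k : ℕ => ‖p k * x ^ k - p k * y ^ k‖ :=
    Summable.of_nonneg_of_le (fun k => norm_nonneg _) hbound hsum2
  calc |∑' k : ℕ, (p k * x ^ k - p k * y ^ k)|
      ≤ ∑' k : ℕ, ‖p k * x ^ k - p k * y ^ k‖ := norm_tsum_le_tsum_norm hsumn
    _ ≤ ∑' k : ℕ, (k : ℝ) * p k * |x - y| := Summable.tsum_le_tsum hbound hsumn hsum2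
    _ = (∑' k : ℕ, (k : ℝ) * p k) * |x - y| := tsum_mul_right

lemma aux_cont {p : ℕ → ℝ} (hp0 : ∀ k, 0 ≤ p k)
    (hp2 : Summable fun k : ℕ => (k : ℝ) * p k) :
    ContinuousOn (fun x : ℝ => ∑' k : ℕ, (k : ℝ) * p k * x ^ k) (Set.Icc (-1 : ℝ) 1) := by
  apply continuousOn_tsum (u := fun k : ℕ => (k : ℝ) * p k)
  · intro k
    exact (continuous_const.mul (continuous_pow k)).continuousOn
  · exact hp2
  · intro k x hx
    have hax : |x| ≤ 1 := by rw [abs_le]; exact ⟨hx.1, hx.2⟩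
    rw [norm_mul, norm_pow, Real.norm_eq_abs, Real.norm_eq_abs,
      abs_of_nonneg (mul_nonneg (Nat.cast_nonneg k) (hp0 k))]
    calc (k : ℝ) * p k * |x| ^ k ≤ (k : ℝ) * p k * 1 := by
          apply mul_le_mul_of_nonneg_left (pow_le_one₀ (abs_nonneg x) hax)
          exact mul_nonneg (Nat.cast_nonneg k) (hp0 k)
      _ = (k : ℝ) * p k := mul_one _

open scoped BigOperators
open Real

theorem stmt13
    (β ρ μ μS μI μR αS : ℝ) (p : ℕ → ℝ) (θ : ℝ → ℝ)
    (hβ : 0 < β) (hρ : 0 ≤ ρ) (hμ : 0 < μ)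
    (hμS : 0 ≤ μS) (hμI : 0 ≤ μI) (hμR : 0 ≤ μR)
    (hμsum : μS + μI + μR = μ)
    (hαS : αS ∈ Set.Ioc (0 : ℝ) 1)
    (hp : ∀ k, 0 ≤ p k)
    (hpsummable : Summable p)
    (hpsum : ∑' k : ℕ, p k = 1)
    (hmeanSummable : Summable (fun k : ℕ => (k : ℝ) * p k))
    (hmeanPos : 0 < ∑' k : ℕ, (k : ℝ) * p k)
    (hμSdef : μS = αS * ∑' k : ℕ, (k : ℝ) * p k)
    (hθ0 : θ 0 = 1)
    (hθmem : ∀ t, 0 ≤ t → θ t ∈ Set.Ioc (0 : ℝ) 1)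
    (hθderiv : ∀ t, 0 ≤ t →
      HasDerivAt θ (-β * θ t * hI αS μ μR β ρ p (θ t) / hX μ (θ t)) t)
    (αI : ℝ) (hαI : 0 ≤ αI) (vI : ℝ → ℝ)
    (hvI0 : vI 0 = αI)
    (hvIderiv : ∀ t, 0 ≤ t →
      HasDerivAt vI
        (β * hI αS μ μR β ρ p (θ t) * hS αS p (θ t) / hX μ (θ t) - ρ * vI t) t)
    (t : ℝ) (ht : 0 ≤ t) :
    vI t = αI * Real.exp (-ρ * t) -
      ∫ s in (0 : ℝ)..t,
        deriv (fun u => vS αS p (θ u)) s * Real.exp (-ρ * (t - s)) := by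
  -- notation
  set G : ℝ → ℝ := fun s => β * hI αS μ μR β ρ p (θ s) * hS αS p (θ s) / hX μ (θ s) with hGdef
  -- positivity of hX along θ
  have hXpos : ∀ s : ℝ, 0 ≤ s → 0 < hX μ (θ s) := by
    intro s hs
    have h0 := (hθmem s hs).1
    exact mul_pos hμ (pow_pos h0 2)
  -- Step 1 : derivative of s ↦ vS (θ s) for s > 0
  have key : ∀ s : ℝ, 0 < s → HasDerivAt (fun u => vS αS p (θ u)) (-(G s)) s := by
    intro s hs
    have hmem := hθmem s hs.le
    have hd := hθderiv s hs.le
    rcases eq_or_lt_of_le hmem.2 with hx1 | hx1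
    · -- θ s = 1 : local max, derivative zero
      have hmax : IsLocalMax θ s := by
        filter_upwards [Ioi_mem_nhds hs] with u hu
        rw [hx1]
        exact (hθmem u hu.le).2
      have hd0 : -β * θ s * hI αS μ μR β ρ p (θ s) / hX μ (θ s) = 0 :=
        hmax.hasDerivAt_eq_zero hd
      have hnum : -β * θ s * hI αS μ μR β ρ p (θ s) = 0 := by
        rcases div_eq_zero_iff.mp hd0 with h | h
        · exact h
        · exact absurd h (hXpos s hs.le).ne'
      have hIzero : hI αS μ μR β ρ p (θ s) = 0 := by
        have hne : -β * θ s ≠ 0 :=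
          mul_ne_zero (neg_ne_zero.mpr hβ.ne') (hθmem s hs.le).1.ne'
        rcases mul_eq_zero.mp hnum with h | h
        · exact absurd h hne
        · exact h
      have hθzero : HasDerivAt θ 0 s := by
        rw [hd0] at hd; exact hd
      have hzero : HasDerivAt (fun u => vS αS p (θ u)) 0 s := by
        rw [hasDerivAt_iff_tendsto]
        simp only [smul_zero, sub_zero]
        have hθt : Filter.Tendsto (fun u => ‖u - s‖⁻¹ * ‖θ u - θ s‖) (nhds s) (nhds 0) := by
          have := hasDerivAt_iff_tendsto.mp hθzero
          simpa using this
        set L : ℝ := αS * ∑' k : ℕ, (k : ℝ) * p k with hL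
        apply squeeze_zero' (g := fun u => L * (‖u - s‖⁻¹ * ‖θ u - θ s‖))
        · exact Filter.Eventually.of_forall fun u => by positivity
        · filter_upwards [Ioi_mem_nhds hs] with u hu
          have hmu : θ u ∈ Set.Icc (0 : ℝ) 1 :=
            ⟨(hθmem u hu.le).1.le, (hθmem u hu.le).2⟩
          have hms : θ s ∈ Set.Icc (0 : ℝ) 1 := ⟨hmem.1.le, hmem.2⟩
          have hlip := aux_lip hp hpsummable hmeanSummable hmu hms
          simp only [vS, Real.norm_eq_abs]
          rw [← mul_sub, abs_mul, abs_of_pos hαS.1]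
          calc |u - s|⁻¹ * (αS * |(∑' k : ℕ, p k * θ u ^ k) - ∑' k : ℕ, p k * θ s ^ k|)
              ≤ |u - s|⁻¹ * (αS * ((∑' k : ℕ, (k : ℝ) * p k) * |θ u - θ s|)) := by
                gcongr
                exact hαS.1.le
              _ = L * (|u - s|⁻¹ * |θ u - θ s|) := by rw [hL]; ring
        · have := hθt.const_mul L
          simpa using this
      have : -(G s) = 0 := by
        rw [hGdef]
        simp only [hIzero]
        simp
      rw [this]
      exact hzero
    · -- θ s < 1 : chain rule
      have hxIoo : θ s ∈ Set.Ioo (-1 : ℝ) 1 := ⟨by linarith [hmem.1], hx1⟩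
      have hfd := aux_hasDerivAt hp hpsummable hmeanSummable hxIoo
      have hcomp := hfd.comp s hd
      have hfin := hcomp.const_mul αS
      have heq : αS * ((∑' k : ℕ, (k : ℝ) * p k * θ s ^ (k - 1)) *
          (-β * θ s * hI αS μ μR β ρ p (θ s) / hX μ (θ s))) = -(G s) := by
        rw [hGdef]
        simp only [hS]
        rw [aux_id (θ s)]
        ring
      rw [← heq]
      exact hfin
  -- Step 2 : FTC for vI s * exp (ρ s)
  have hIcc : Set.uIcc (0 : ℝ) t = Set.Icc 0 t := Set.uIcc_of_le ht
  have hderivAll : ∀ x ∈ Set.uIcc (0 : ℝ) t,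
      HasDerivAt (fun s => vI s * Real.exp (ρ * s)) (G x * Real.exp (ρ * x)) x := by
    intro x hx
    rw [hIcc] at hx
    have h1 := hvIderiv x hx.1
    have h2 : HasDerivAt (fun u : ℝ => Real.exp (ρ * u)) (Real.exp (ρ * x) * ρ) x := by
      have hm : HasDerivAt (fun u : ℝ => ρ * u) ρ x := by
        simpa using (hasDerivAt_id x).const_mul ρ
      exact hm.exp
    have := h1.mul h2
    refine this.congr_deriv ?_
    rw [hGdef]
    ring
  have hcontθ : ContinuousOn θ (Set.Icc 0 t) := fun s hs =>
    ((hθderiv s hs.1).continuousAt).continuousWithinAt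
  have hmaps : Set.MapsTo θ (Set.Icc 0 t) (Set.Icc (-1 : ℝ) 1) := by
    intro s hs
    have := hθmem s hs.1
    exact ⟨by linarith [this.1], this.2⟩
  have hcontSθ : ContinuousOn (fun s => hS αS p (θ s)) (Set.Icc 0 t) := by
    simp only [hS]
    exact continuousOn_const.mul ((aux_cont hp hmeanSummable).comp hcontθ hmaps)
  have hcontXθ : ContinuousOn (fun s => hX μ (θ s)) (Set.Icc 0 t) := by
    simp only [hX]
    exact continuousOn_const.mul (hcontθ.pow 2)
  have hcontRθ : ContinuousOn (fun s => hR μ μR β ρ (θ s)) (Set.Icc 0 t) := by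
    simp only [hR]
    exact (continuousOn_const.mul hcontθ).add
      (continuousOn_const.mul (hcontθ.mul (continuousOn_const.sub hcontθ)))
  have hcontIθ : ContinuousOn (fun s => hI αS μ μR β ρ p (θ s)) (Set.Icc 0 t) := by
    simp only [hI]
    exact (hcontXθ.sub hcontSθ).sub hcontRθ
  have hcontG : ContinuousOn (fun s => G s * Real.exp (ρ * s)) (Set.Icc 0 t) := by
    apply ContinuousOn.mul
    · rw [hGdef]
      exact ((continuousOn_const.mul hcontIθ).mul hcontSθ).div hcontXθ
        (fun s hs => (hXpos s hs.1).ne')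
    · exact (Real.continuous_exp.comp (continuous_const.mul continuous_id)).continuousOn
  have hint : IntervalIntegrable (fun s => G s * Real.exp (ρ * s)) MeasureTheory.volume 0 t := by
    apply ContinuousOn.intervalIntegrable
    rw [hIcc]
    exact hcontG
  have hFTC := intervalIntegral.integral_eq_sub_of_hasDerivAt hderivAll hint
  rw [hvI0, mul_zero, Real.exp_zero, mul_one] at hFTC
  -- Step 3 : rewrite the goal integral
  have hcong : (∫ s in (0 : ℝ)..t,
        deriv (fun u => vS αS p (θ u)) s * Real.exp (-ρ * (t - s)))
      = ∫ s in (0 : ℝ)..t, (-Real.exp (-ρ * t)) * (G s * Real.exp (ρ * s)) := by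
    apply intervalIntegral.integral_congr_ae
    apply Filter.Eventually.of_forall
    intro s hs
    rw [Set.uIoc_of_le ht] at hs
    rw [(key s hs.1).deriv]
    rw [show -ρ * (t - s) = -ρ * t + ρ * s by ring, Real.exp_add]
    ring
  rw [hcong, intervalIntegral.integral_const_mul, hFTC]
  have hprod : Real.exp (-ρ * t) * Real.exp (ρ * t) = 1 := by
    rw [← Real.exp_add, show -ρ * t + ρ * t = 0 by ring, Real.exp_zero]
  linear_combination (-(vI t)) * hprod
end

section
/- Let α_I, α_R ≥ 0 with α_S + α_I + α_R = 1, and let v_I : [0,∞) → ℝ be differentiable with v_I(0) = α_I and dv_I/dt = β h_I(θ_t) h_S(θ_t)/h_X(θ_t) − ρ v_I(t) for all t ≥ 0. Define v_R(t) = 1 − v_S(θ_t) − v_I(t). Then for every t ≥ 0, v_R(t) = α_R + α_I (1 − e^{−ρt}) + β ∫_0^t h_I(θ_s) h_S(θ_s)/h_X(θ_s) (1 − e^{−ρ(t−s)}) ds. -/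
open scoped BigOperators
open Real

/-! ### Auxiliary power-series material -/

noncomputable def gser (p : ℕ → ℝ) (x : ℝ) : ℝ := ∑' k : ℕ, p k * x ^ k

noncomputable def Dser (p : ℕ → ℝ) (x : ℝ) : ℝ := ∑' k : ℕ, (k : ℝ) * p k * x ^ (k - 1)

lemma cast_mul_pow_pred (a : ℝ) (k : ℕ) : (k : ℝ) * (a * a ^ (k - 1)) = (k : ℝ) * a ^ k := by
  cases k with
  | zero => simp
  | succ n => simp [pow_succ']

lemma pow_low {a b : ℝ} (ha : 0 ≤ a) (hab : a ≤ b) :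
    ∀ k : ℕ, (k : ℝ) * a ^ (k - 1) * (b - a) ≤ b ^ k - a ^ k := by
  intro k
  induction k with
  | zero => simp
  | succ n ih =>
    have hb : 0 ≤ b := ha.trans hab
    have h1 : b * ((n : ℝ) * a ^ (n - 1) * (b - a)) ≤ b * (b ^ n - a ^ n) :=
      mul_le_mul_of_nonneg_left ih hb
    have h2 : a * ((n : ℝ) * a ^ (n - 1) * (b - a)) ≤ b * ((n : ℝ) * a ^ (n - 1) * (b - a)) := by
      apply mul_le_mul_of_nonneg_right hab
      exact mul_nonneg (mul_nonneg (Nat.cast_nonneg n) (pow_nonneg ha _)) (by linarith)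
    have h3 : a * ((n : ℝ) * a ^ (n - 1) * (b - a)) = (n : ℝ) * a ^ n * (b - a) := by
      have := cast_mul_pow_pred a n
      nlinarith [cast_mul_pow_pred a n]
    have hpow : b ^ (n + 1) = b * b ^ n := pow_succ' b n
    have hpa : a ^ (n + 1) = a * a ^ n := pow_succ' a n
    have han : 0 ≤ a ^ n := pow_nonneg ha n
    simp only [Nat.add_sub_cancel]
    push_cast
    nlinarith [h1, h2, h3]

lemma pow_high {a b : ℝ} (ha : 0 ≤ a) (hab : a ≤ b) :
    ∀ k : ℕ, b ^ k - a ^ k ≤ (k : ℝ) * b ^ (k - 1) * (b - a) := by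
  intro k
  induction k with
  | zero => simp
  | succ n ih =>
    have hb : 0 ≤ b := ha.trans hab
    have h1 : b * (b ^ n - a ^ n) ≤ b * ((n : ℝ) * b ^ (n - 1) * (b - a)) :=
      mul_le_mul_of_nonneg_left ih hb
    have h3 : b * ((n : ℝ) * b ^ (n - 1) * (b - a)) = (n : ℝ) * b ^ n * (b - a) := by
      nlinarith [cast_mul_pow_pred b n]
    have h4 : a ^ n ≤ b ^ n := pow_le_pow_left₀ ha hab n
    have hpow : b ^ (n + 1) = b * b ^ n := pow_succ' b n
    have hpa : a ^ (n + 1) = a * a ^ n := pow_succ' a n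
    simp only [Nat.add_sub_cancel]
    push_cast
    nlinarith [h1, h3, h4]

lemma term_bounds {x y : ℝ} (hx : 0 ≤ x) (hy : 0 ≤ y) (k : ℕ) :
    0 ≤ y ^ k - x ^ k - (k : ℝ) * x ^ (k - 1) * (y - x) ∧
      y ^ k - x ^ k - (k : ℝ) * x ^ (k - 1) * (y - x) ≤
        ((k : ℝ) * y ^ (k - 1) - (k : ℝ) * x ^ (k - 1)) * (y - x) := by
  rcases le_total x y with h | h
  · have l := pow_low hx h k
    have hgh := pow_high hx h k
    constructor <;> nlinarith [l, hgh]
  · have l := pow_low hy h k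
    have hgh := pow_high hy h k
    constructor <;> nlinarith [l, hgh]

section series
variable {p : ℕ → ℝ} (hp : ∀ k, 0 ≤ p k) (hps : Summable p)
  (hms : Summable (fun k : ℕ => (k : ℝ) * p k))

include hp hps in
lemma sum_g {x : ℝ} (hx : x ∈ Set.Icc (0:ℝ) 1) : Summable (fun k : ℕ => p k * x ^ k) := by
  refine Summable.of_nonneg_of_le (fun k => mul_nonneg (hp k) (pow_nonneg hx.1 k))
    (fun k => ?_) hps
  exact mul_le_of_le_one_right (hp k) (pow_le_one₀ hx.1 hx.2)

include hp hms in
lemma sum_D {x : ℝ} (hx : x ∈ Set.Icc (0:ℝ) 1) :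
    Summable (fun k : ℕ => (k : ℝ) * p k * x ^ (k - 1)) := by
  refine Summable.of_nonneg_of_le
    (fun k => mul_nonneg (mul_nonneg (Nat.cast_nonneg k) (hp k)) (pow_nonneg hx.1 _))
    (fun k => ?_) hms
  exact mul_le_of_le_one_right (mul_nonneg (Nat.cast_nonneg k) (hp k)) (pow_le_one₀ hx.1 hx.2)

include hp hps in
lemma gser_contOn : ContinuousOn (gser p) (Set.Icc (0:ℝ) 1) := by
  refine continuousOn_tsum (u := p) (fun k => (continuous_const.mul (continuous_pow k)).continuousOn)
    hps (fun k x hx => ?_)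
  rw [Real.norm_eq_abs, abs_of_nonneg (mul_nonneg (hp k) (pow_nonneg hx.1 k))]
  exact mul_le_of_le_one_right (hp k) (pow_le_one₀ hx.1 hx.2)

include hp hms in
lemma Dser_contOn : ContinuousOn (Dser p) (Set.Icc (0:ℝ) 1) := by
  refine continuousOn_tsum (u := fun k : ℕ => (k : ℝ) * p k)
    (fun k => (continuous_const.mul (continuous_pow (k-1))).continuousOn)
    hms (fun k x hx => ?_)
  rw [Real.norm_eq_abs,
    abs_of_nonneg (mul_nonneg (mul_nonneg (Nat.cast_nonneg k) (hp k)) (pow_nonneg hx.1 _))]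
  exact mul_le_of_le_one_right (mul_nonneg (Nat.cast_nonneg k) (hp k)) (pow_le_one₀ hx.1 hx.2)

include hp hps hms in
lemma gser_key {x y : ℝ} (hx : x ∈ Set.Icc (0:ℝ) 1) (hy : y ∈ Set.Icc (0:ℝ) 1) :
    |gser p y - gser p x - Dser p x * (y - x)| ≤ |Dser p y - Dser p x| * |y - x| := by
  have sx := sum_g hp hps hx
  have sy := sum_g hp hps hy
  have dx := sum_D hp hms hx
  have dy := sum_D hp hms hy
  have sLHS : Summable (fun k : ℕ =>
      p k * (y ^ k - x ^ k - (k : ℝ) * x ^ (k - 1) * (y - x))) :=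
    ((sy.sub sx).sub (dx.mul_right (y - x))).congr (fun k => by ring)
  have sRHS : Summable (fun k : ℕ =>
      p k * (((k : ℝ) * y ^ (k - 1) - (k : ℝ) * x ^ (k - 1)) * (y - x))) :=
    (((dy.mul_right (y - x))).sub (dx.mul_right (y - x))).congr (fun k => by ring)
  have e1 : gser p y - gser p x - Dser p x * (y - x)
      = ∑' k : ℕ, p k * (y ^ k - x ^ k - (k : ℝ) * x ^ (k - 1) * (y - x)) := by
    rw [show Dser p x * (y - x) = ∑' k : ℕ, ((k : ℝ) * p k * x ^ (k - 1)) * (y - x) from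
      (tsum_mul_right).symm]
    unfold gser
    rw [← Summable.tsum_sub sy sx, ← Summable.tsum_sub (sy.sub sx) (dx.mul_right (y - x))]
    exact tsum_congr (fun k => by ring)
  have e2 : ∑' k : ℕ, p k * (((k : ℝ) * y ^ (k - 1) - (k : ℝ) * x ^ (k - 1)) * (y - x))
      = (Dser p y - Dser p x) * (y - x) := by
    unfold Dser
    rw [← Summable.tsum_sub dy dx, ← tsum_mul_right]
    exact tsum_congr (fun k => by ring)
  have h0 : 0 ≤ gser p y - gser p x - Dser p x * (y - x) := by
    rw [e1]
    exact tsum_nonneg (fun k => mul_nonneg (hp k) (term_bounds hx.1 hy.1 k).1)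
  have h1 : gser p y - gser p x - Dser p x * (y - x) ≤ (Dser p y - Dser p x) * (y - x) := by
    rw [e1, ← e2]
    exact Summable.tsum_le_tsum
      (fun k => mul_le_mul_of_nonneg_left (term_bounds hx.1 hy.1 k).2 (hp k)) sLHS sRHS
  calc |gser p y - gser p x - Dser p x * (y - x)|
      = gser p y - gser p x - Dser p x * (y - x) := abs_of_nonneg h0
    _ ≤ (Dser p y - Dser p x) * (y - x) := h1
    _ ≤ |(Dser p y - Dser p x) * (y - x)| := le_abs_self _
    _ = |Dser p y - Dser p x| * |y - x| := abs_mul _ _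

include hp hps hms in
lemma gser_hasDerivWithinAt {x : ℝ} (hx : x ∈ Set.Icc (0:ℝ) 1) :
    HasDerivWithinAt (gser p) (Dser p x) (Set.Icc (0:ℝ) 1) x := by
  rw [hasDerivWithinAt_iff_isLittleO]
  have hDc : ContinuousWithinAt (Dser p) (Set.Icc (0:ℝ) 1) x := Dser_contOn hp hms x hx
  rw [Asymptotics.isLittleO_iff]
  intro c hc
  have hev : ∀ᶠ y in nhdsWithin x (Set.Icc (0:ℝ) 1), |Dser p y - Dser p x| ≤ c := by
    have ht : Filter.Tendsto (fun y => Dser p y - Dser p x) (nhdsWithin x (Set.Icc (0:ℝ) 1))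
        (nhds 0) := by
      simpa using hDc.sub_const (Dser p x)
    have : ∀ᶠ z in nhds (0:ℝ), |z| ≤ c := by
      filter_upwards [Metric.ball_mem_nhds (0:ℝ) hc] with z hz
      rw [Metric.mem_ball, Real.dist_eq, sub_zero] at hz
      exact hz.le
    exact ht.eventually this
  filter_upwards [hev, self_mem_nhdsWithin] with y hy hymem
  have := gser_key hp hps hms hx hymem
  rw [Real.norm_eq_abs, Real.norm_eq_abs]
  calc |gser p y - gser p x - (y - x) • Dser p x|
      = |gser p y - gser p x - Dser p x * (y - x)| := by rw [smul_eq_mul]; ring_nf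
    _ ≤ |Dser p y - Dser p x| * |y - x| := this
    _ ≤ c * |y - x| := mul_le_mul_of_nonneg_right hy (abs_nonneg _)

end series

lemma hS_eq (αS : ℝ) (p : ℕ → ℝ) (x : ℝ) : hS αS p x = αS * (x * Dser p x) := by
  unfold hS Dser
  rw [← tsum_mul_left (a := x)]
  congr 1
  exact tsum_congr (fun k => by
    cases k with
    | zero => simp
    | succ n => simp only [Nat.add_sub_cancel]; rw [pow_succ]; ring)

theorem stmt14
    (β ρ μ μS μI μR αS : ℝ) (p : ℕ → ℝ) (θ : ℝ → ℝ)
    (hβ : 0 < β) (hρ : 0 ≤ ρ) (hμ : 0 < μ)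
    (hμS : 0 ≤ μS) (hμI : 0 ≤ μI) (hμR : 0 ≤ μR)
    (hμsum : μS + μI + μR = μ)
    (hαS : αS ∈ Set.Ioc (0 : ℝ) 1)
    (hp : ∀ k, 0 ≤ p k)
    (hpsummable : Summable p)
    (hpsum : ∑' k : ℕ, p k = 1)
    (hmeanSummable : Summable (fun k : ℕ => (k : ℝ) * p k))
    (hmeanPos : 0 < ∑' k : ℕ, (k : ℝ) * p k)
    (hμSdef : μS = αS * ∑' k : ℕ, (k : ℝ) * p k)
    (hθ0 : θ 0 = 1)
    (hθmem : ∀ t, 0 ≤ t → θ t ∈ Set.Ioc (0 : ℝ) 1)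
    (hθderiv : ∀ t, 0 ≤ t →
      HasDerivAt θ (-β * θ t * hI αS μ μR β ρ p (θ t) / hX μ (θ t)) t)
    (αI αR : ℝ) (hαI : 0 ≤ αI) (hαR : 0 ≤ αR)
    (hαsum : αS + αI + αR = 1)
    (vI : ℝ → ℝ)
    (hvI0 : vI 0 = αI)
    (hvIderiv : ∀ t, 0 ≤ t →
      HasDerivAt vI
        (β * hI αS μ μR β ρ p (θ t) * hS αS p (θ t) / hX μ (θ t) - ρ * vI t) t)
    (vR : ℝ → ℝ)
    (hvR : ∀ t, vR t = 1 - vS αS p (θ t) - vI t)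
    (t : ℝ) (ht : 0 ≤ t) :
    vR t = αR + αI * (1 - Real.exp (-ρ * t)) +
      β * ∫ s in (0 : ℝ)..t,
        hI αS μ μR β ρ p (θ s) * hS αS p (θ s) / hX μ (θ s) *
          (1 - Real.exp (-ρ * (t - s))) := by
  set f : ℝ → ℝ := fun s => hI αS μ μR β ρ p (θ s) * hS αS p (θ s) / hX μ (θ s) with hf
  -- basic facts
  have hθmem' : ∀ s ∈ Set.Icc (0:ℝ) t, θ s ∈ Set.Icc (0:ℝ) 1 := fun s hs =>
    ⟨(hθmem s hs.1).1.le, (hθmem s hs.1).2⟩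
  have hθcont : ContinuousOn θ (Set.Icc (0:ℝ) t) := fun s hs =>
    ((hθderiv s hs.1).continuousAt).continuousWithinAt
  -- continuity of the integrand
  have hDcomp : ContinuousOn (fun s => Dser p (θ s)) (Set.Icc (0:ℝ) t) :=
    (Dser_contOn hp hmeanSummable).comp hθcont hθmem'
  have hScont : ContinuousOn (fun s => hS αS p (θ s)) (Set.Icc (0:ℝ) t) := by
    have : ContinuousOn (fun s => αS * (θ s * Dser p (θ s))) (Set.Icc (0:ℝ) t) :=
      continuousOn_const.mul (hθcont.mul hDcomp)
    exact this.congr (fun s _ => hS_eq αS p (θ s))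
  have hXcont : ContinuousOn (fun s => hX μ (θ s)) (Set.Icc (0:ℝ) t) := by
    unfold hX; exact continuousOn_const.mul (hθcont.pow 2)
  have hRcont : ContinuousOn (fun s => hR μ μR β ρ (θ s)) (Set.Icc (0:ℝ) t) := by
    unfold hR
    exact (continuousOn_const.mul hθcont).add
      (continuousOn_const.mul (hθcont.mul (continuousOn_const.sub hθcont)))
  have hIcont : ContinuousOn (fun s => hI αS μ μR β ρ p (θ s)) (Set.Icc (0:ℝ) t) := by
    unfold hI; exact (hXcont.sub hScont).sub hRcont
  have hXne : ∀ s ∈ Set.Icc (0:ℝ) t, hX μ (θ s) ≠ 0 := by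
    intro s hs
    have := (hθmem s hs.1).1
    unfold hX
    positivity
  have hfcont : ContinuousOn f (Set.Icc (0:ℝ) t) := (hIcont.mul hScont).div hXcont hXne
  have huIcc : Set.uIcc (0:ℝ) t = Set.Icc 0 t := Set.uIcc_of_le ht
  have hfint : IntervalIntegrable f MeasureTheory.volume 0 t := by
    apply ContinuousOn.intervalIntegrable
    rw [huIcc]
    exact hfcont
  -- Part 1 : vS (θ t) = αS - β * ∫ f
  have hG : ∫ s in (0:ℝ)..t, (-β * f s) = vS αS p (θ t) - vS αS p (θ 0) := by
    apply intervalIntegral.integral_eq_sub_of_hasDeriv_right_of_le ht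
    · exact (continuousOn_const.mul
        ((gser_contOn hp hpsummable).comp hθcont hθmem')).congr (fun s _ => rfl)
    · intro s hs
      have hs0 : (0:ℝ) ≤ s := hs.1.le
      have hθs := hθderiv s hs0
      have houter : HasDerivWithinAt (fun x => αS * gser p x)
          (αS * Dser p (θ s)) (Set.Icc (0:ℝ) 1) (θ s) :=
        (gser_hasDerivWithinAt hp hpsummable hmeanSummable
          (hθmem' s ⟨hs0, hs.2.le⟩)).const_mul αS
      have hmaps : Set.MapsTo θ (Set.Ioi s) (Set.Icc (0:ℝ) 1) := by
        intro u hu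
        have : (0:ℝ) ≤ u := le_of_lt (lt_of_lt_of_le hs.1 (le_of_lt hu))
        exact ⟨(hθmem u this).1.le, (hθmem u this).2⟩
      have hcomp := HasDerivWithinAt.comp s houter
        (hθs.hasDerivWithinAt (s := Set.Ioi s)) hmaps
      have heq : (αS * Dser p (θ s)) * (-β * θ s * hI αS μ μR β ρ p (θ s) / hX μ (θ s))
          = -β * f s := by
        simp only [hf]
        rw [hS_eq]
        ring
      rw [heq] at hcomp
      exact hcomp.congr (fun u _ => rfl) rfl
    · apply ContinuousOn.intervalIntegrable
      rw [huIcc]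
      exact continuousOn_const.mul hfcont
  have hvS_t : vS αS p (θ t) = αS - β * ∫ s in (0:ℝ)..t, f s := by
    have h0 : vS αS p (θ 0) = αS := by
      rw [hθ0]; unfold vS; simp [hpsum]
    rw [intervalIntegral.integral_const_mul] at hG
    rw [h0] at hG
    linarith [hG]
  -- Part 2 : exp (ρ t) * vI t = αI + β * ∫ exp (ρ s) * f s
  have hw : ∫ s in (0:ℝ)..t, (β * (Real.exp (ρ * s) * f s))
      = Real.exp (ρ * t) * vI t - Real.exp (ρ * 0) * vI 0 := by
    apply intervalIntegral.integral_eq_sub_of_hasDerivAt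
    · intro s hs
      rw [huIcc] at hs
      have h1 : HasDerivAt (fun u => Real.exp (ρ * u)) (Real.exp (ρ * s) * ρ) s := by
        have : HasDerivAt (fun u : ℝ => ρ * u) ρ s := by
          simpa using (hasDerivAt_id s).const_mul ρ
        exact this.exp
      have h2 := hvIderiv s hs.1
      have := h1.mul h2
      refine this.congr_deriv ?_
      rw [hf]
      ring
    · apply ContinuousOn.intervalIntegrable
      rw [huIcc]
      exact continuousOn_const.mul
        (((Real.continuous_exp.comp (continuous_const.mul continuous_id)).continuousOn).mul
          hfcont)
  have hI2 : Real.exp (ρ * t) * vI t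
      = αI + β * ∫ s in (0:ℝ)..t, Real.exp (ρ * s) * f s := by
    rw [intervalIntegral.integral_const_mul] at hw
    rw [mul_zero, Real.exp_zero, one_mul, hvI0] at hw
    linarith [hw]
  have hvIt : vI t = Real.exp (-ρ * t) *
      (αI + β * ∫ s in (0:ℝ)..t, Real.exp (ρ * s) * f s) := by
    rw [← hI2, neg_mul, Real.exp_neg, ← mul_assoc, inv_mul_cancel₀ (Real.exp_ne_zero _), one_mul]
  -- Part 3 : split the target integral
  have hfint2 : IntervalIntegrable (fun s => f s * Real.exp (-ρ * (t - s)))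
      MeasureTheory.volume 0 t := by
    apply ContinuousOn.intervalIntegrable
    rw [huIcc]
    exact hfcont.mul (Real.continuous_exp.comp_continuousOn
      ((continuous_const.mul (continuous_const.sub continuous_id)).continuousOn))
  have hsplit : (∫ s in (0:ℝ)..t, f s * (1 - Real.exp (-ρ * (t - s))))
      = (∫ s in (0:ℝ)..t, f s)
        - Real.exp (-ρ * t) * ∫ s in (0:ℝ)..t, Real.exp (ρ * s) * f s := by
    have e1 : (∫ s in (0:ℝ)..t, f s * (1 - Real.exp (-ρ * (t - s))))
        = (∫ s in (0:ℝ)..t, (f s - f s * Real.exp (-ρ * (t - s)))) := by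
      apply intervalIntegral.integral_congr
      intro s _
      ring
    have e2 : (∫ s in (0:ℝ)..t, (f s - f s * Real.exp (-ρ * (t - s))))
        = (∫ s in (0:ℝ)..t, f s) - ∫ s in (0:ℝ)..t, f s * Real.exp (-ρ * (t - s)) :=
      intervalIntegral.integral_sub hfint hfint2
    have e3 : (∫ s in (0:ℝ)..t, f s * Real.exp (-ρ * (t - s)))
        = ∫ s in (0:ℝ)..t, Real.exp (-ρ * t) * (Real.exp (ρ * s) * f s) := by
      apply intervalIntegral.integral_congr
      intro s _
      show f s * Real.exp (-ρ * (t - s)) = Real.exp (-ρ * t) * (Real.exp (ρ * s) * f s)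
      rw [show -ρ * (t - s) = -ρ * t + ρ * s by ring, Real.exp_add]
      ring
    rw [e1, e2, e3, intervalIntegral.integral_const_mul]
  -- conclude
  rw [hvR t, hvS_t, hvIt, hsplit]
  have h1αS : 1 - αS = αI + αR := by linarith
  ring_nf
  nlinarith [h1αS, Real.exp_pos (-ρ * t)]
end
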